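/- arXiv:2509.21915 — 7 statements merged into one kernel-verified Lean document; each statement's English description precedes it below -/
import Mathlib

section
/- Every point u in the interior of the Tits cone intersection Cone(J)° is contained in an open ball (in Θ_J) that intersects only finitely many of the hyperplanes H_α with α a positive J-root. In particular, the hyperplane arrangement (Cone(J)°, 𝓗_J) is locally finite. -/
open CoxeterSystem

/-- `v` is a nonnegative linear combination of the vectors `α b`. -/
def InNonnegSpan {B V : Type*} [AddCommGroup V] [Module ℝ V] (α : B → V) (v : V) : Prop :=
  ∃ c : B →₀ ℝ, (∀ b, 0 ≤ c b) ∧ v = c.sum fun b r => r • α b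

/-- The reflection representation of a Coxeter system, axiomatised: a representation `ρ` of `W`
on a real vector space `V` with linearly independent simple roots `α i` spanning `V`, such that
each simple reflection negates its simple root, every root `w · α i` is positive or negative,
and positivity of `w · α i` is detected by the length function. -/
structure ReflRep {B W : Type*} [Group W] {M : CoxeterMatrix B} (cs : CoxeterSystem M W)
    (V : Type*) [AddCommGroup V] [Module ℝ V] where
  ρ : Representation ℝ W V
  α : B → V
  indep : LinearIndependent ℝ α
  spans : Submodule.span ℝ (Set.range α) = ⊤
  refl_simple : ∀ i : B, ρ (cs.simple i) (α i) = -α i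
  root_pos_or_neg : ∀ (w : W) (i : B),
    InNonnegSpan α (ρ w (α i)) ∨ InNonnegSpan α (-(ρ w (α i)))
  pos_iff_length : ∀ (w : W) (i : B),
    InNonnegSpan α (ρ w (α i)) ↔ cs.length (w * cs.simple i) = cs.length w + 1

/-- The standard parabolic subgroup `W_J`. -/
def parabolic {B W : Type*} [Group W] {M : CoxeterMatrix B} (cs : CoxeterSystem M W)
    (J : Set B) : Subgroup W :=
  Subgroup.closure (cs.simple '' J)


open RealInnerProductSpace

variable {B W : Type*} [Group W] [Fintype B] {M : CoxeterMatrix B} {cs : CoxeterSystem M W}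

/-- We realise the contragredient representation `Θ = V*` as the Euclidean space `V` itself via the
inner product pairing `φ(α) := ⟪φ, α⟫`; the contragredient action is then `g • φ = (ρ g⁻¹)* φ`. -/
noncomputable def contra (r : ReflRep cs (EuclideanSpace ℝ B)) (g : W) :
    EuclideanSpace ℝ B →ₗ[ℝ] EuclideanSpace ℝ B :=
  LinearMap.adjoint (r.ρ g⁻¹)

/-- `Θ_J = {φ : φ(α_j) = 0 ∀ j ∈ J}`. -/
def ThetaJ (r : ReflRep cs (EuclideanSpace ℝ B)) (J : Set B) : Set (EuclideanSpace ℝ B) :=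
  {φ | ∀ j ∈ J, ⟪φ, r.α j⟫ = 0}

/-- The closed fundamental chamber. -/
def closedChamber (r : ReflRep cs (EuclideanSpace ℝ B)) : Set (EuclideanSpace ℝ B) :=
  {φ | ∀ i : B, 0 ≤ ⟪φ, r.α i⟫}

/-- The Tits cone. -/
noncomputable def titsCone (r : ReflRep cs (EuclideanSpace ℝ B)) : Set (EuclideanSpace ℝ B) :=
  ⋃ w : W, contra r w '' closedChamber r

/-- The Tits cone intersection `Cone(J) = Cone ∩ Θ_J`. -/
noncomputable def coneJ (r : ReflRep cs (EuclideanSpace ℝ B)) (J : Set B) :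
    Set (EuclideanSpace ℝ B) :=
  titsCone r ∩ ThetaJ r J

/-- The reflection hyperplane `H_α`. -/
def hyperplaneOf (u : EuclideanSpace ℝ B) : Set (EuclideanSpace ℝ B) := {φ | ⟪φ, u⟫ = 0}

/-- A positive root. -/
def IsPosRoot (r : ReflRep cs (EuclideanSpace ℝ B)) (u : EuclideanSpace ℝ B) : Prop :=
  (∃ (w : W) (i : B), u = r.ρ w (r.α i)) ∧ InNonnegSpan r.α u

/-- The hyperplane arrangement `𝓗_J = {H_α ∩ Θ_J : α ∈ Φ_J⁺}`, where `Φ_J⁺` consists of positive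
roots `α` with `Θ_J ⊄ H_α`. -/
def arrangementJ (r : ReflRep cs (EuclideanSpace ℝ B)) (J : Set B) :
    Set (Set (EuclideanSpace ℝ B)) :=
  {S | ∃ u, IsPosRoot r u ∧ ¬ ThetaJ r J ⊆ hyperplaneOf u ∧ S = hyperplaneOf u ∩ ThetaJ r J}

section Geom

set_option linter.unusedSectionVars false

variable {B : Type*} [Fintype B] [DecidableEq B]

/-- Entries of the standard bilinear form of a Coxeter matrix. -/
noncomputable def gk (M : CoxeterMatrix B) (a b : B) : ℝ := - Real.cos (Real.pi / (M a b))

lemma gk_self (M : CoxeterMatrix B) (a : B) : gk M a a = 1 := by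
  simp [gk, M.diagonal a]

lemma gk_symm (M : CoxeterMatrix B) (a b : B) : gk M a b = gk M b a := by
  simp [gk, M.symmetric a b]

/-- Pairing of `x` with the basis vector `e_a` under the standard form. -/
noncomputable def gform (M : CoxeterMatrix B) (a : B) (x : B → ℝ) : ℝ := ∑ b, gk M a b * x b

lemma gform_add (M : CoxeterMatrix B) (a : B) (x y : B → ℝ) :
    gform M a (x + y) = gform M a x + gform M a y := by
  simp [gform, mul_add, Finset.sum_add_distrib]

lemma gform_smul (M : CoxeterMatrix B) (a : B) (c : ℝ) (x : B → ℝ) :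
    gform M a (c • x) = c * gform M a x := by
  rw [gform, gform, Finset.mul_sum]
  exact Finset.sum_congr rfl fun b _ => by simp; ring

lemma gform_single (M : CoxeterMatrix B) (a b : B) :
    gform M a ((Pi.single b 1 : B → ℝ)) = gk M a b := by
  rw [gform, Finset.sum_eq_single b]
  · simp
  · intro b' _ hb'
    simp [Pi.single_apply, hb']
  · simp

/-- The geometric reflection attached to the index `a`. -/
noncomputable def grefl (M : CoxeterMatrix B) (a : B) : Module.End ℝ (B → ℝ) where
  toFun x := x - (2 * gform M a x) • (Pi.single a 1 : B → ℝ)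
  map_add' x y := by
    show (x + y) - (2 * gform M a (x + y)) • (Pi.single a 1 : B → ℝ) = _
    rw [gform_add]; module
  map_smul' c x := by
    show (c • x) - (2 * gform M a (c • x)) • (Pi.single a 1 : B → ℝ)
        = (RingHom.id ℝ) c • (x - (2 * gform M a x) • (Pi.single a 1 : B → ℝ))
    rw [gform_smul]; simp only [RingHom.id_apply]; module

lemma grefl_apply (M : CoxeterMatrix B) (a : B) (x : B → ℝ) :
    grefl M a x = x - (2 * gform M a x) • (Pi.single a 1 : B → ℝ) := rfl

lemma gform_grefl (M : CoxeterMatrix B) (a b : B) (x : B → ℝ) :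
    gform M a (grefl M b x) = gform M a x - 2 * gform M b x * gk M a b := by
  rw [grefl_apply, sub_eq_add_neg, ← neg_smul, gform_add, gform_smul, gform_single]
  ring

lemma grefl_fixed (M : CoxeterMatrix B) (a : B) (x : B → ℝ) (h : gform M a x = 0) :
    grefl M a x = x := by
  rw [grefl_apply, h]; simp

end Geom

section Geom2

set_option linter.unusedSectionVars false

variable {B : Type*} [Fintype B] [DecidableEq B]

lemma gform_sub (M : CoxeterMatrix B) (a : B) (x y : B → ℝ) :
    gform M a (x - y) = gform M a x - gform M a y := by
  rw [sub_eq_add_neg, gform_add, ← neg_one_smul ℝ y, gform_smul]; ring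

lemma grefl_mul_self (M : CoxeterMatrix B) (a : B) : grefl M a * grefl M a = 1 := by
  apply LinearMap.ext; intro x
  have h := gform_grefl M a a x
  rw [gk_self] at h
  rw [Module.End.mul_apply, grefl_apply M a ((grefl M a) x), h, grefl_apply]
  rw [Module.End.one_apply]
  module

lemma grefl_braid (M : CoxeterMatrix B) (a b : B) :
    ((grefl M a * grefl M b) : Module.End ℝ (B → ℝ)) ^ (M a b) = 1 := by
  rcases eq_or_ne a b with rfl | hab
  · rw [M.diagonal a, pow_one, grefl_mul_self]
  rcases Nat.eq_zero_or_pos (M a b) with h0 | hpos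
  · rw [h0, pow_zero]
  have hm2 : 2 ≤ M a b := by
    have := M.off_diagonal a b hab
    omega
  set m : ℕ := M a b with hm
  set θ : ℝ := Real.pi / (m : ℝ) with hθ
  have hmR : (1:ℝ) < (m:ℝ) := by exact_mod_cast hm2
  have hθpos : 0 < θ := div_pos Real.pi_pos (by linarith)
  have hθlt : θ < Real.pi := by
    rw [hθ]; exact div_lt_self Real.pi_pos hmR
  have hs : 0 < Real.sin θ := Real.sin_pos_of_pos_of_lt_pi hθpos hθlt
  have hs2 : Real.sin θ ^ 2 = 1 - Real.cos θ ^ 2 := by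
    have := Real.sin_sq_add_cos_sq θ; linarith
  have hkab : gk M a b = - Real.cos θ := by rw [gk, ← hm, hθ]
  have hkba : gk M b a = - Real.cos θ := by rw [gk_symm, hkab]
  set e₁ : B → ℝ := Pi.single a 1 with he₁
  set e₂ : B → ℝ := Pi.single b 1 with he₂
  -- pairing with combinations
  have hga : ∀ p q : ℝ, gform M a (p • e₁ + q • e₂) = p - q * Real.cos θ := by
    intro p q
    rw [gform_add, gform_smul, gform_smul, he₁, he₂, gform_single, gform_single, gk_self, hkab]
    ring
  have hgb : ∀ p q : ℝ, gform M b (p • e₁ + q • e₂) = q - p * Real.cos θ := by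
    intro p q
    rw [gform_add, gform_smul, gform_smul, he₁, he₂, gform_single, gform_single, gk_self, hkba]
    ring
  have hra : ∀ p q : ℝ, grefl M a (p • e₁ + q • e₂)
      = (q * (2 * Real.cos θ) - p) • e₁ + q • e₂ := by
    intro p q
    rw [grefl_apply, hga, ← he₁]
    module
  have hrb : ∀ p q : ℝ, grefl M b (p • e₁ + q • e₂)
      = p • e₁ + (p * (2 * Real.cos θ) - q) • e₂ := by
    intro p q
    rw [grefl_apply, hgb, ← he₂]
    module
  have hH : ∀ p q : ℝ, (grefl M a * grefl M b) (p • e₁ + q • e₂)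
      = ((4 * Real.cos θ ^ 2 - 1) * p - 2 * Real.cos θ * q) • e₁
        + (2 * Real.cos θ * p - q) • e₂ := by
    intro p q
    rw [Module.End.mul_apply, hrb, hra]
    congr 1
    · congr 1; ring
    · congr 1; ring
  -- the trigonometric sequences
  set X : ℕ → ℝ := fun k => Real.sin ((2 * (k:ℝ) + 1) * θ) / Real.sin θ with hX
  set Y : ℕ → ℝ := fun k => Real.sin ((2 * (k:ℝ)) * θ) / Real.sin θ with hY
  set X' : ℕ → ℝ := fun k => -(Real.sin ((2 * (k:ℝ)) * θ) / Real.sin θ) with hX'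
  set Y' : ℕ → ℝ := fun k => -(Real.sin ((2 * (k:ℝ) - 1) * θ) / Real.sin θ) with hY'
  have key1 : ∀ v : ℝ, (4 * Real.cos θ ^ 2 - 1) * Real.sin v - 2 * Real.cos θ * Real.sin (v - θ)
      = Real.sin (v + 2 * θ) := by
    intro v
    rw [Real.sin_add, Real.sin_sub, Real.cos_two_mul, Real.sin_two_mul]
    ring
  have key2 : ∀ v : ℝ, 2 * Real.cos θ * Real.sin v - Real.sin (v - θ) = Real.sin (v + θ) := by
    intro v
    rw [Real.sin_add, Real.sin_sub]
    ring
  have hrecX : ∀ k : ℕ, (4 * Real.cos θ ^ 2 - 1) * X k - 2 * Real.cos θ * Y k = X (k + 1) := by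
    intro k
    rw [hX, hY]
    have h1 : (2 * ((k:ℝ)) ) * θ = (2 * (k:ℝ) + 1) * θ - θ := by ring
    have h2 : (2 * ((k+1:ℕ):ℝ) + 1) * θ = (2 * (k:ℝ) + 1) * θ + 2 * θ := by push_cast; ring
    simp only [h2, h1]
    rw [← key1 ((2 * (k:ℝ) + 1) * θ)]
    field_simp
  have hrecY : ∀ k : ℕ, 2 * Real.cos θ * X k - Y k = Y (k + 1) := by
    intro k
    rw [hX, hY]
    have h1 : (2 * ((k:ℝ)) ) * θ = (2 * (k:ℝ) + 1) * θ - θ := by ring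
    have h2 : (2 * ((k+1:ℕ):ℝ)) * θ = (2 * (k:ℝ) + 1) * θ + θ := by push_cast; ring
    simp only [h2, h1]
    rw [← key2 ((2 * (k:ℝ) + 1) * θ)]
    field_simp
  have hrecX' : ∀ k : ℕ, (4 * Real.cos θ ^ 2 - 1) * X' k - 2 * Real.cos θ * Y' k = X' (k + 1) := by
    intro k
    rw [hX', hY']
    have h1 : (2 * ((k:ℝ)) - 1) * θ = (2 * (k:ℝ)) * θ - θ := by ring
    have h2 : (2 * ((k+1:ℕ):ℝ)) * θ = (2 * (k:ℝ)) * θ + 2 * θ := by push_cast; ring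
    simp only [h2, h1]
    rw [← key1 ((2 * (k:ℝ)) * θ)]
    field_simp
    ring
  have hrecY' : ∀ k : ℕ, 2 * Real.cos θ * X' k - Y' k = Y' (k + 1) := by
    intro k
    rw [hX', hY']
    have h1 : (2 * ((k:ℝ)) - 1) * θ = (2 * (k:ℝ)) * θ - θ := by ring
    have h2 : (2 * ((k+1:ℕ):ℝ) - 1) * θ = (2 * (k:ℝ)) * θ + θ := by push_cast; ring
    simp only [h2, h1]
    rw [← key2 ((2 * (k:ℝ)) * θ)]
    field_simp
    ring
  -- main induction
  have main : ∀ (k : ℕ) (p q : ℝ), ((grefl M a * grefl M b) ^ k) (p • e₁ + q • e₂)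
      = (p * X k + q * X' k) • e₁ + (p * Y k + q * Y' k) • e₂ := by
    intro k
    induction k with
    | zero =>
      intro p q
      have hX0 : X 0 = 1 := by
        show Real.sin ((2 * ((0:ℕ):ℝ) + 1) * θ) / Real.sin θ = 1
        rw [show (2 * ((0:ℕ):ℝ) + 1) * θ = θ by push_cast; ring]
        exact div_self hs.ne'
      have hY0 : Y 0 = 0 := by
        show Real.sin ((2 * ((0:ℕ):ℝ)) * θ) / Real.sin θ = 0
        rw [show (2 * ((0:ℕ):ℝ)) * θ = 0 by push_cast; ring]
        simp
      have hX'0 : X' 0 = 0 := by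
        show -(Real.sin ((2 * ((0:ℕ):ℝ)) * θ) / Real.sin θ) = 0
        rw [show (2 * ((0:ℕ):ℝ)) * θ = 0 by push_cast; ring]
        simp
      have hY'0 : Y' 0 = 1 := by
        show -(Real.sin ((2 * ((0:ℕ):ℝ) - 1) * θ) / Real.sin θ) = 1
        rw [show (2 * ((0:ℕ):ℝ) - 1) * θ = -θ by push_cast; ring]
        rw [Real.sin_neg, neg_div, neg_neg]
        exact div_self hs.ne'
      rw [hX0, hY0, hX'0, hY'0, pow_zero, Module.End.one_apply]
      congr 1 <;> congr 1 <;> ring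
    | succ n ih =>
      intro p q
      rw [pow_succ', Module.End.mul_apply, ih, hH]
      rw [← hrecX n, ← hrecY n, ← hrecX' n, ← hrecY' n]
      congr 1 <;> congr 1 <;> ring
  -- end values
  have hXm : X m = 1 := by
    show Real.sin ((2 * (m:ℝ) + 1) * θ) / Real.sin θ = 1
    have : (2 * (m:ℝ) + 1) * θ = θ + 2 * Real.pi := by
      rw [hθ]; field_simp; ring
    rw [this, Real.sin_add_two_pi]
    exact div_self hs.ne'
  have hYm : Y m = 0 := by
    show Real.sin ((2 * (m:ℝ)) * θ) / Real.sin θ = 0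
    have : (2 * (m:ℝ)) * θ = 0 + 2 * Real.pi := by
      rw [hθ]; field_simp; ring
    rw [this, Real.sin_add_two_pi, Real.sin_zero, zero_div]
  have hX'm : X' m = 0 := by
    show -(Real.sin ((2 * (m:ℝ)) * θ) / Real.sin θ) = 0
    have : (2 * (m:ℝ)) * θ = 0 + 2 * Real.pi := by
      rw [hθ]; field_simp; ring
    rw [this, Real.sin_add_two_pi, Real.sin_zero, zero_div, neg_zero]
  have hY'm : Y' m = 1 := by
    show -(Real.sin ((2 * (m:ℝ) - 1) * θ) / Real.sin θ) = 1
    have : (2 * (m:ℝ) - 1) * θ = -θ + 2 * Real.pi := by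
      rw [hθ]; field_simp; ring
    rw [this, Real.sin_add_two_pi, Real.sin_neg, neg_div, neg_neg]
    exact div_self hs.ne'
  -- arbitrary vector
  apply LinearMap.ext; intro x
  set p : ℝ := (gform M a x + Real.cos θ * gform M b x) / Real.sin θ ^ 2 with hp
  set q : ℝ := (gform M b x + Real.cos θ * gform M a x) / Real.sin θ ^ 2 with hq
  set z : B → ℝ := x - (p • e₁ + q • e₂) with hz
  have hza : gform M a z = 0 := by
    rw [hz, gform_sub, hga, hp, hq]
    field_simp
    linear_combination gform M a x * hs2
  have hzb : gform M b z = 0 := by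
    rw [hz, gform_sub, hgb, hp, hq]
    field_simp
    linear_combination gform M b x * hs2
  have hHz : ∀ k : ℕ, ((grefl M a * grefl M b) ^ k) z = z := by
    intro k
    induction k with
    | zero => rw [pow_zero, Module.End.one_apply]
    | succ n ih =>
      rw [pow_succ, Module.End.mul_apply, Module.End.mul_apply,
        grefl_fixed M b z hzb, grefl_fixed M a z hza]
      exact ih
  have hxdec : x = (p • e₁ + q • e₂) + z := by rw [hz]; abel
  rw [Module.End.one_apply]
  conv_lhs => rw [hxdec]
  rw [map_add, hHz, main m p q, hXm, hYm, hX'm, hY'm]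
  rw [hxdec]
  congr 1
  congr 1 <;> congr 1 <;> ring

end Geom2

/-- The simple reflections of a Coxeter system are pairwise distinct. -/
lemma simple_ne_simple {B W : Type*} [Group W] [Fintype B] {M : CoxeterMatrix B}
    (cs : CoxeterSystem M W) {i j : B} (hij : i ≠ j) : cs.simple i ≠ cs.simple j := by
  classical
  intro h
  have hf : M.IsLiftable (fun a => grefl M a) := fun a b => grefl_braid M a b
  have h2 := congrArg (cs.lift ⟨fun a => grefl M a, hf⟩) h
  rw [cs.lift_apply_simple hf i, cs.lift_apply_simple hf j] at h2
  have h3 := congrArg (fun f : Module.End ℝ (B → ℝ) => f (Pi.single i 1) i) h2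
  simp only [grefl_apply, gform_single, gk_self, Pi.sub_apply, Pi.smul_apply, smul_eq_mul,
    Pi.single_eq_same, Pi.single_eq_of_ne hij] at h3
  linarith [h3]

section Roots

set_option linter.unusedSectionVars false

variable {B W : Type*} [Group W] [Fintype B] {M : CoxeterMatrix B} {cs : CoxeterSystem M W}

/-- The simple roots as a basis of the reflection representation. -/
noncomputable def rbasis (r : ReflRep cs (EuclideanSpace ℝ B)) : Module.Basis B ℝ (EuclideanSpace ℝ B) :=
  Module.Basis.mk r.indep (le_of_eq r.spans.symm)

lemma rbasis_coe (r : ReflRep cs (EuclideanSpace ℝ B)) : ⇑(rbasis r) = r.α :=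
  Module.Basis.coe_mk _ _

lemma innonneg_iff (r : ReflRep cs (EuclideanSpace ℝ B)) (v : EuclideanSpace ℝ B) :
    InNonnegSpan r.α v ↔ ∀ b, 0 ≤ (rbasis r).repr v b := by
  constructor
  · rintro ⟨c, hc, rfl⟩ b
    have h1 : (c.sum fun b t => t • r.α b) = Finsupp.linearCombination ℝ ⇑(rbasis r) c := by
      rw [rbasis_coe, Finsupp.linearCombination_apply]
    rw [h1, (rbasis r).repr_linearCombination]
    exact hc b
  · intro h
    refine ⟨(rbasis r).repr v, h, ?_⟩
    have h1 : (((rbasis r).repr v).sum fun b t => t • r.α b)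
        = Finsupp.linearCombination ℝ ⇑(rbasis r) ((rbasis r).repr v) := by
      rw [rbasis_coe, Finsupp.linearCombination_apply]
    rw [h1, (rbasis r).linearCombination_repr]

lemma innonneg_neg_of_not (r : ReflRep cs (EuclideanSpace ℝ B)) (w : W) (j : B)
    (h : ¬ InNonnegSpan r.α (r.ρ w (r.α j))) : InNonnegSpan r.α (-(r.ρ w (r.α j))) :=
  (r.root_pos_or_neg w j).resolve_left h

lemma root_ne_zero (r : ReflRep cs (EuclideanSpace ℝ B)) (w : W) (j : B) :
    r.ρ w (r.α j) ≠ 0 := by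
  intro h0
  have h1 : r.ρ w⁻¹ (r.ρ w (r.α j)) = r.α j := by
    rw [← Module.End.mul_apply, ← map_mul, inv_mul_cancel, map_one, Module.End.one_apply]
  rw [h0, map_zero] at h1
  exact r.indep.ne_zero j h1.symm

/-- Key lemma: a positive root sent to a negative root by a simple reflection is a
positive multiple of the corresponding simple root. -/
lemma lemK (r : ReflRep cs (EuclideanSpace ℝ B)) (v : W) (j i : B)
    (hpos : InNonnegSpan r.α (r.ρ v (r.α j)))
    (hneg : ¬ InNonnegSpan r.α (r.ρ (cs.simple i * v) (r.α j))) :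
    ∃ c : ℝ, 0 < c ∧ r.ρ v (r.α j) = c • r.α i := by
  classical
  set γ : EuclideanSpace ℝ B := r.ρ v (r.α j) with hγ
  set δ : EuclideanSpace ℝ B := r.ρ (cs.simple i * v) (r.α j) with hδ
  have hδγ : δ = r.ρ (cs.simple i) γ := by
    rw [hδ, hγ, map_mul, Module.End.mul_apply]
  have hδneg : InNonnegSpan r.α (-δ) := innonneg_neg_of_not r _ j hneg
  have hγc : ∀ b, 0 ≤ (rbasis r).repr γ b := (innonneg_iff r γ).mp hpos
  have hδc : ∀ b, (rbasis r).repr δ b ≤ 0 := by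
    intro b
    have := (innonneg_iff r (-δ)).mp hδneg b
    rw [map_neg, Finsupp.neg_apply] at this
    linarith
  -- positivity of the images of the other simple roots
  have hsimple_pos : ∀ b : B, b ≠ i → ∀ b', b' ≠ i →
      0 ≤ (rbasis r).repr (r.ρ (cs.simple i) (r.α b')) b := by
    intro b _ b' hb'
    have hne : cs.simple i ≠ cs.simple b' := simple_ne_simple cs (Ne.symm hb')
    have hlen : cs.length (cs.simple i * cs.simple b') = cs.length (cs.simple i) + 1 := by
      rcases cs.length_simple_mul (cs.simple b') i with h | h
      · rw [h, cs.length_simple, cs.length_simple]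
      · exfalso
        rw [cs.length_simple] at h
        have h0 : cs.length (cs.simple i * cs.simple b') = 0 := by omega
        rw [cs.length_eq_zero_iff] at h0
        apply hne
        calc cs.simple i = (cs.simple b')⁻¹ := eq_inv_of_mul_eq_one_left h0
        _ = cs.simple b' := cs.inv_simple b'
    have hp : InNonnegSpan r.α (r.ρ (cs.simple i) (r.α b')) :=
      (r.pos_iff_length (cs.simple i) b').mpr hlen
    exact (innonneg_iff r _).mp hp b
  -- coordinates of δ away from i vanish
  have hzero : ∀ b, b ≠ i → (rbasis r).repr δ b = 0 := by
    intro b hb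
    refine le_antisymm (hδc b) ?_
    have hexp : γ = ∑ b', (rbasis r).repr γ b' • r.α b' := by
      conv_lhs => rw [← (rbasis r).sum_repr γ]
      simp [rbasis_coe]
    have hδexp : (rbasis r).repr δ b
        = ∑ b', (rbasis r).repr γ b' * (rbasis r).repr (r.ρ (cs.simple i) (r.α b')) b := by
      rw [hδγ]
      conv_lhs => rw [hexp]
      rw [map_sum, map_sum, Finsupp.finset_sum_apply]
      refine Finset.sum_congr rfl fun b' _ => ?_
      rw [map_smul, map_smul, Finsupp.smul_apply, smul_eq_mul]
    rw [hδexp]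
    apply Finset.sum_nonneg
    intro b' _
    rcases eq_or_ne b' i with rfl | hb'
    · -- ρ s_i α_i = -α_i has zero b-coordinate
      rw [r.refl_simple b', map_neg, Finsupp.neg_apply]
      have h0 : (rbasis r).repr (r.α b') b = 0 := by
        rw [← rbasis_coe r, (rbasis r).repr_self, Finsupp.single_apply]
        simp [hb, Ne.symm hb]
      rw [h0, neg_zero, mul_zero]
    · exact mul_nonneg (hγc b') (hsimple_pos b hb b' hb')
  -- hence δ is a nonpositive multiple of α i
  set ci : ℝ := (rbasis r).repr δ i with hcidef
  have hδi : δ = ci • r.α i := by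
    conv_lhs => rw [← (rbasis r).sum_repr δ]
    rw [Finset.sum_eq_single i]
    · rw [rbasis_coe]
    · intro b _ hb
      rw [hzero b hb, zero_smul]
    · intro h; exact absurd (Finset.mem_univ i) h
  have hδne : δ ≠ 0 := root_ne_zero r _ j
  have hci : ci < 0 := by
    rcases lt_or_eq_of_le (hδc i) with h | h
    · exact h
    · exfalso; apply hδne; rw [hδi, hcidef, h, zero_smul]
  -- apply the reflection again
  refine ⟨-ci, by linarith, ?_⟩
  have hγδ : γ = r.ρ (cs.simple i) δ := by
    rw [hδγ, ← Module.End.mul_apply, ← map_mul, cs.simple_mul_simple_self i, map_one,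
      Module.End.one_apply]
  have hstep : r.ρ (cs.simple i) δ = (-ci) • r.α i := by
    rw [hδi, map_smul, r.refl_simple i, smul_neg, neg_smul]
  rw [hγδ, hstep]

end Roots

section Roots2

set_option linter.unusedSectionVars false

variable {B W : Type*} [Group W] [Fintype B] {M : CoxeterMatrix B} {cs : CoxeterSystem M W}

/-- The inversion roots of `w` lie on finitely many rays. -/
lemma inv_rays (r : ReflRep cs (EuclideanSpace ℝ B)) (w : W) :
    ∃ F : Finset (EuclideanSpace ℝ B), ∀ (v : W) (j : B),
      InNonnegSpan r.α (r.ρ v (r.α j)) → ¬ InNonnegSpan r.α (r.ρ (w * v) (r.α j)) →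
      ∃ β ∈ F, ∃ c : ℝ, 0 < c ∧ r.ρ v (r.α j) = c • β := by
  classical
  suffices h : ∀ (n : ℕ) (w : W), cs.length w ≤ n →
      ∃ F : Finset (EuclideanSpace ℝ B), ∀ (v : W) (j : B),
      InNonnegSpan r.α (r.ρ v (r.α j)) → ¬ InNonnegSpan r.α (r.ρ (w * v) (r.α j)) →
      ∃ β ∈ F, ∃ c : ℝ, 0 < c ∧ r.ρ v (r.α j) = c • β by
    exact h (cs.length w) w le_rfl
  intro n
  induction n with
  | zero =>
    intro w hw
    have hone : w = 1 := cs.length_eq_zero_iff.mp (Nat.le_zero.mp hw)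
    subst hone
    exact ⟨∅, fun v j hp hn => absurd hp (by rwa [one_mul] at hn)⟩
  | succ n ih =>
    intro w hw
    rcases eq_or_ne w 1 with rfl | hne
    · exact ⟨∅, fun v j hp hn => absurd hp (by rwa [one_mul] at hn)⟩
    · obtain ⟨i, hdesc⟩ := cs.exists_leftDescent_of_ne_one hne
      set w' : W := cs.simple i * w with hw'
      have hlt : cs.length (cs.simple i * w) < cs.length w := hdesc
      have hlen : cs.length w' ≤ n := by rw [hw']; omega
      obtain ⟨F, hF⟩ := ih w' hlen
      refine ⟨insert (r.ρ w'⁻¹ (r.α i)) F, ?_⟩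
      intro v j hp hn
      have hwdec : w = cs.simple i * w' := by
        rw [hw', ← mul_assoc, cs.simple_mul_simple_self, one_mul]
      by_cases hp2 : InNonnegSpan r.α (r.ρ (w' * v) (r.α j))
      · have hn2 : ¬ InNonnegSpan r.α (r.ρ (cs.simple i * (w' * v)) (r.α j)) := by
          rw [← mul_assoc, ← hwdec]; exact hn
        obtain ⟨c, hc, hceq⟩ := lemK r (w' * v) j i hp2 hn2
        refine ⟨r.ρ w'⁻¹ (r.α i), Finset.mem_insert_self _ _, c, hc, ?_⟩
        have hback : r.ρ v (r.α j) = r.ρ w'⁻¹ (r.ρ (w' * v) (r.α j)) := by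
          rw [map_mul, Module.End.mul_apply, ← Module.End.mul_apply (r.ρ w'⁻¹), ← map_mul,
            inv_mul_cancel, map_one, Module.End.one_apply]
        rw [hback, hceq, map_smul]
      · obtain ⟨β, hβ, c, hc, hceq⟩ := hF v j hp hp2
        exact ⟨β, Finset.mem_insert_of_mem hβ, c, hc, hceq⟩

lemma chamber_inner_nonneg (r : ReflRep cs (EuclideanSpace ℝ B)) (φ : EuclideanSpace ℝ B)
    (hφ : φ ∈ closedChamber r) {x : EuclideanSpace ℝ B} (hx : InNonnegSpan r.α x) :
    0 ≤ ⟪φ, x⟫ := by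
  obtain ⟨c, hc, rfl⟩ := hx
  have hsum : (c.sum fun b t => t • r.α b) = ∑ b, c b • r.α b :=
    Finsupp.sum_fintype c (fun b t => t • r.α b) (fun b => zero_smul ℝ (r.α b))
  rw [hsum, inner_sum]
  apply Finset.sum_nonneg
  intro b _
  rw [real_inner_smul_right]
  exact mul_nonneg (hc b) (hφ b)

/-- Any point of the Tits cone pairs negatively with only finitely many rays of positive roots. -/
lemma cone_point_rays (r : ReflRep cs (EuclideanSpace ℝ B)) (θp : EuclideanSpace ℝ B)
    (hθ : θp ∈ titsCone r) :
    ∃ F : Finset (EuclideanSpace ℝ B), ∀ αr, IsPosRoot r αr → ⟪θp, αr⟫ < 0 →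
      ∃ β ∈ F, ∃ c : ℝ, 0 < c ∧ αr = c • β := by
  rw [titsCone, Set.mem_iUnion] at hθ
  obtain ⟨x, φ, hφ, hθeq⟩ := hθ
  obtain ⟨F, hF⟩ := inv_rays r x⁻¹
  refine ⟨F, ?_⟩
  rintro αr ⟨⟨v, j, rfl⟩, hposr⟩ hlt
  have hinner : ⟪θp, r.ρ v (r.α j)⟫ = ⟪φ, r.ρ x⁻¹ (r.ρ v (r.α j))⟫ := by
    rw [← hθeq]
    exact LinearMap.adjoint_inner_left (r.ρ x⁻¹) (r.ρ v (r.α j)) φ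
  have hnp : ¬ InNonnegSpan r.α (r.ρ (x⁻¹ * v) (r.α j)) := by
    intro hp
    have h0 : 0 ≤ ⟪φ, r.ρ (x⁻¹ * v) (r.α j)⟫ := chamber_inner_nonneg r φ hφ hp
    rw [map_mul, Module.End.mul_apply] at h0
    rw [hinner] at hlt
    linarith
  exact hF v j hposr hnp

/-- `Θ_J` as a submodule. -/
def thetaSub (r : ReflRep cs (EuclideanSpace ℝ B)) (J : Set B) :
    Submodule ℝ (EuclideanSpace ℝ B) where
  carrier := ThetaJ r J
  add_mem' := by
    intro x y hx hy j hj
    rw [inner_add_left, hx j hj, hy j hj, add_zero]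
  zero_mem' := by
    intro j hj
    exact inner_zero_left _
  smul_mem' := by
    intro c x hx j hj
    rw [real_inner_smul_left, hx j hj, mul_zero]

end Roots2

set_option maxHeartbeats 1000000 in
/-- Every point `u` of the interior `Cone(J)°` of the Tits cone intersection
(taken inside `Θ_J`) has an open ball around it meeting only finitely many hyperplanes of `𝓗_J`;
in particular `(Cone(J)°, 𝓗_J)` is a locally finite arrangement. -/
theorem coneJ_arrangement_locally_finite (r : ReflRep cs (EuclideanSpace ℝ B)) (J : Set B)
    (u : EuclideanSpace ℝ B) (hu : u ∈ coneJ r J)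
    (hu_int : ∃ δ > 0, ∀ ψ ∈ ThetaJ r J, dist ψ u < δ → ψ ∈ coneJ r J) :
    ∃ ε > 0, {S ∈ arrangementJ r J | (S ∩ Metric.ball u ε).Nonempty}.Finite := by
  classical
  obtain ⟨δ, hδpos, hball⟩ := hu_int
  set K : Submodule ℝ (EuclideanSpace ℝ B) := thetaSub r J with hK
  have huK : u ∈ K := hu.2
  set n : ℕ := Module.finrank ℝ K with hn
  set ob : OrthonormalBasis (Fin n) ℝ K := stdOrthonormalBasis ℝ K with hob
  set ε : ℝ := δ / (2 * n + 2) with hε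
  have hεpos : 0 < ε := by positivity
  refine ⟨ε, hεpos, ?_⟩
  set pt : Fin n × Bool → EuclideanSpace ℝ B := fun p =>
    u + (if p.2 then δ/2 else -(δ/2)) • ((ob p.1 : K) : EuclideanSpace ℝ B) with hpt
  have hptK : ∀ p, pt p ∈ K := fun p => K.add_mem huK (K.smul_mem _ (ob p.1).2)
  have hptd : ∀ p, dist (pt p) u < δ := by
    intro p
    rw [hpt, dist_eq_norm]
    have h1 : u + (if p.2 then δ/2 else -(δ/2)) • ((ob p.1 : K) : EuclideanSpace ℝ B) - u
        = (if p.2 then δ/2 else -(δ/2)) • ((ob p.1 : K) : EuclideanSpace ℝ B) := by abel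
    rw [h1, norm_smul]
    have hnorm1 : ‖((ob p.1 : K) : EuclideanSpace ℝ B)‖ = 1 := ob.orthonormal.1 p.1
    rw [hnorm1, mul_one, Real.norm_eq_abs]
    split_ifs
    · rw [abs_of_pos (by linarith)]; linarith
    · rw [abs_neg, abs_of_pos (by linarith)]; linarith
  have hptC : ∀ p, pt p ∈ coneJ r J := fun p => hball _ (hptK p) (hptd p)
  choose F hF using fun p => cone_point_rays r (pt p) (hptC p).1
  apply Set.Finite.subset
    (Set.finite_iUnion fun p : Fin n × Bool =>
      (F p).finite_toSet.image fun β => hyperplaneOf β ∩ ThetaJ r J)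
  rintro S ⟨⟨αr, hroot, hnsub, rfl⟩, ψ, ⟨hψH, hψT⟩, hψb⟩
  obtain ⟨a, haK, hadiff⟩ : ∃ a, a ∈ K ∧ αr - a ∈ Kᗮ :=
    ⟨_, (K.orthogonalProjectionOnto αr).2, K.sub_starProjection_mem_orthogonal αr⟩
  set aK : K := ⟨a, haK⟩ with haKdef
  have hproj : ∀ χ, χ ∈ K → ⟪χ, αr⟫ = ⟪χ, a⟫ := by
    intro χ hχ
    have h0 := Submodule.inner_right_of_mem_orthogonal hχ hadiff
    rw [inner_sub_right] at h0
    linarith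
  have hane : a ≠ 0 := by
    intro h0
    apply hnsub
    intro χ hχ
    show ⟪χ, αr⟫ = 0
    rw [hproj χ hχ, h0, inner_zero_right]
  have hapos : 0 < ‖a‖ := norm_pos_iff.mpr hane
  have hnpos : 0 < n := by
    rcases Nat.eq_zero_or_pos n with h0 | h
    · exfalso
      have hfr : Module.finrank ℝ K = 0 := by rw [← hn]; exact h0
      have hbot : K = ⊥ := Submodule.finrank_eq_zero.mp hfr
      rw [hbot, Submodule.mem_bot] at haK
      exact hane haK
    · exact h
  have hrepr : ∀ d, ⟪((ob d : K) : EuclideanSpace ℝ B), a⟫ = ob.repr aK d := by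
    intro d
    rw [ob.repr_apply_apply aK d, Submodule.coe_inner]
  obtain ⟨d₀, _, hd₀⟩ := Finset.exists_max_image Finset.univ (fun d => |ob.repr aK d|)
    ⟨⟨0, hnpos⟩, Finset.mem_univ _⟩
  simp only [] at hd₀
  have hbound : ‖a‖ ≤ n * |ob.repr aK d₀| := by
    have h1 : aK = ∑ d, ob.repr aK d • ob d := (ob.sum_repr aK).symm
    have h2 : ‖aK‖ ≤ ∑ d, |ob.repr aK d| := by
      conv_lhs => rw [h1]
      refine le_trans (norm_sum_le _ _) ?_
      refine Finset.sum_le_sum fun d _ => ?_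
      rw [norm_smul, ob.orthonormal.1 d, mul_one, Real.norm_eq_abs]
    have h3 : ∑ d, |ob.repr aK d| ≤ n * |ob.repr aK d₀| := by
      refine le_trans (Finset.sum_le_card_nsmul Finset.univ _ (|ob.repr aK d₀|)
        fun x _ => hd₀ x (Finset.mem_univ x)) ?_
      rw [Finset.card_univ, Fintype.card_fin, nsmul_eq_mul]
    have h4 : ‖a‖ = ‖aK‖ := rfl
    linarith
  have hψK : ψ ∈ K := hψT
  have hψa : ⟪ψ, a⟫ = 0 := by
    rw [← hproj ψ hψK]
    exact hψH
  have hua : |⟪u, a⟫| < ε * ‖a‖ := by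
    have h1 : ⟪u, a⟫ = ⟪u - ψ, a⟫ := by rw [inner_sub_left, hψa, sub_zero]
    rw [h1]
    refine lt_of_le_of_lt (abs_real_inner_le_norm _ _) ?_
    refine mul_lt_mul_of_pos_right ?_ hapos
    have h2 : ‖u - ψ‖ = dist ψ u := by rw [dist_eq_norm, ← norm_neg]; congr 1; abel
    rw [h2]
    exact hψb
  set bb : Bool := decide (ob.repr aK d₀ < 0) with hbb
  set p₀ : Fin n × Bool := (d₀, bb) with hp₀
  have htcd : (if bb then δ/2 else -(δ/2)) * ob.repr aK d₀ = -(δ/2 * |ob.repr aK d₀|) := by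
    rcases lt_or_ge (ob.repr aK d₀) 0 with h | h
    · have hb : bb = true := by rw [hbb]; simp [h]
      rw [hb, if_pos rfl, abs_of_neg h]; ring
    · have hb : bb = false := by rw [hbb]; simp [not_lt.mpr h]
      rw [hb, if_neg (by simp), abs_of_nonneg h]; ring
  have hεn : ε * n ≤ δ / 2 := by
    have h2 : (0:ℝ) < 2 * (n:ℝ) + 2 := by positivity
    have h3 : (0:ℝ) ≤ (n:ℝ) := Nat.cast_nonneg n
    rw [hε, div_mul_eq_mul_div, div_le_div_iff₀ h2 two_pos]
    nlinarith
  have hkey : ⟪pt p₀, a⟫ < 0 := by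
    have hexp : ⟪pt p₀, a⟫ = ⟪u, a⟫ + (if bb then δ/2 else -(δ/2)) * ob.repr aK d₀ := by
      rw [hpt]
      rw [inner_add_left, real_inner_smul_left, hrepr d₀]
    rw [hexp, htcd]
    have h5 : ⟪u, a⟫ ≤ |⟪u, a⟫| := le_abs_self _
    have h6 : ε * ‖a‖ ≤ ε * (n * |ob.repr aK d₀|) := mul_le_mul_of_nonneg_left hbound hεpos.le
    have h7 : ε * (↑n * |ob.repr aK d₀|) = (ε * ↑n) * |ob.repr aK d₀| := by ring
    have h8 : (ε * ↑n) * |ob.repr aK d₀| ≤ (δ/2) * |ob.repr aK d₀| :=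
      mul_le_mul_of_nonneg_right hεn (abs_nonneg _)
    linarith
  have hlt : ⟪pt p₀, αr⟫ < 0 := by
    rw [hproj _ (hptK p₀)]
    exact hkey
  obtain ⟨β, hβ, c, hc, hceq⟩ := hF p₀ αr hroot hlt
  refine Set.mem_iUnion.mpr ⟨p₀, ⟨β, hβ, ?_⟩⟩
  show hyperplaneOf β ∩ ThetaJ r J = hyperplaneOf αr ∩ ThetaJ r J
  have hplane : hyperplaneOf β = hyperplaneOf αr := by
    ext χ
    simp only [hyperplaneOf, Set.mem_setOf_eq, hceq, real_inner_smul_right]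
    constructor
    · intro h; rw [h, mul_zero]
    · intro h; exact (mul_eq_zero.mp h).resolve_left hc.ne'
  rw [hplane]
end

section
/- The quotient group N(W,J) = Norm_W(W_J)/W_J acts faithfully on the set Cham(J), where g·(x,I) = (y,I) with y the minimal length representative of the coset g x W_I. Moreover, this action is transitive on chambers with the same second label: for any (x,I),(y,I) ∈ Cham(J), the element yx^{-1} lies in Norm_W(W_J) and maps (x,I) to (y,I). -/
open CoxeterSystem

/-- `(x, I)` is a chamber label in `Cham(J)`. -/
def IsChamberLabel {B W : Type*} [Group W] {M : CoxeterMatrix B} (cs : CoxeterSystem M W)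
    (J : Set B) (x : W) (I : Set B) : Prop :=
  ((· * x) '' (parabolic cs J : Set W) = (x * ·) '' (parabolic cs I : Set W)) ∧
  ∀ v ∈ parabolic cs I, cs.length x ≤ cs.length (x * v)

namespace ChamberAux

open CoxeterSystem List

variable {B W : Type*} [Group W] [DecidableEq W] {M : CoxeterMatrix B} (cs : CoxeterSystem M W)

local prefix:100 "s" => cs.simple
local prefix:100 "π" => cs.wordProd
local prefix:100 "ℓ" => cs.length
local prefix:100 "ris" => cs.rightInvSeq

lemma conj_eq_iff {x t y : W} (hx : x * x = 1) : x * t * x = y ↔ t = x * y * x := by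
  constructor
  · rintro rfl
    have h1 : x * (x * t * x) * x = (x * x) * t * (x * x) := by group
    rw [h1, hx, one_mul, mul_one]
  · rintro rfl
    have h1 : x * (x * y * x) * x = (x * x) * y * (x * x) := by group
    rw [h1, hx, one_mul, mul_one]

lemma conj_eq_iff' (g t y : W) : g * t * g⁻¹ = y ↔ t = g⁻¹ * y * g := by
  constructor
  · rintro rfl; group
  · rintro rfl; group

/-- The function underlying the Tits parity permutation for the letter `i`. -/
def titsFun (i : B) : W × ZMod 2 → W × ZMod 2 :=
  fun q => (s i * q.1 * s i, q.2 + if q.1 = s i then 1 else 0)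

lemma titsFun_involutive (i : B) : Function.Involutive (titsFun cs i) := by
  rintro ⟨t, ε⟩
  simp only [titsFun]
  refine Prod.ext ?_ ?_
  · show s i * (s i * t * s i) * s i = t
    have h1 : s i * (s i * t * s i) * s i = (s i * s i) * t * (s i * s i) := by group
    rw [h1, cs.simple_mul_simple_self, one_mul, mul_one]
  · show ε + _ + _ = ε
    have h2 : (s i * t * s i = s i) ↔ (t = s i) := by
      rw [conj_eq_iff (cs.simple_mul_simple_self i),
        show s i * s i * s i = s i by rw [cs.simple_mul_simple_self, one_mul]]
    simp only [h2]
    rw [add_assoc, CharTwo.add_self_eq_zero, add_zero]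

/-- The Tits parity permutation for the letter `i`. -/
def titsPerm (i : B) : Equiv.Perm (W × ZMod 2) :=
  Function.Involutive.toPerm _ (titsFun_involutive cs i)

lemma titsPerm_apply (i : B) (q : W × ZMod 2) : titsPerm cs i q = titsFun cs i q := rfl

theorem titsLiftable : M.IsLiftable (titsPerm cs) := by
  intro i i'
  by_cases hm : M i i' = 0
  · rw [hm, pow_zero]
  set a := cs.simple i' with ha
  set p := cs.simple i * cs.simple i' with hpdef
  have hp : p ^ M i i' = 1 := cs.simple_mul_simple_pow i i'
  have hap : a * p = p⁻¹ * a := by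
    rw [hpdef, ha, mul_inv_rev, cs.inv_simple, cs.inv_simple]
    group
  have hapk : ∀ k : ℕ, a * p ^ k = (p ^ k)⁻¹ * a := by
    intro k
    induction k with
    | zero => simp
    | succ k ih =>
        calc a * p ^ (k+1) = (a * p ^ k) * p := by rw [pow_succ, mul_assoc]
        _ = (p ^ k)⁻¹ * (a * p) := by rw [ih, mul_assoc]
        _ = (p ^ k)⁻¹ * (p⁻¹ * a) := by rw [hap]
        _ = ((p ^ k)⁻¹ * p⁻¹) * a := by rw [mul_assoc]
        _ = (p ^ (k+1))⁻¹ * a := by rw [← mul_inv_rev, ← pow_succ']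
  have key1 : ∀ k : ℕ, (p ^ k)⁻¹ * a * p ^ k = (p ^ (2*k))⁻¹ * a := by
    intro k
    rw [two_mul, pow_add, mul_inv_rev, mul_assoc, hapk k, ← mul_assoc]
  have key2 : ∀ k : ℕ, (p ^ k)⁻¹ * (a * p) * p ^ k = (p ^ (2*k+1))⁻¹ * a := by
    intro k
    have h2 : a * p * p ^ k = (p ^ (k+1))⁻¹ * a := by
      rw [mul_assoc, ← pow_succ', hapk (k+1)]
    calc (p ^ k)⁻¹ * (a * p) * p ^ k = (p ^ k)⁻¹ * (a * p * p ^ k) := by rw [mul_assoc]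
    _ = (p ^ k)⁻¹ * ((p ^ (k+1))⁻¹ * a) := by rw [h2]
    _ = ((p ^ k)⁻¹ * (p ^ (k+1))⁻¹) * a := by rw [mul_assoc]
    _ = (p ^ (k+1) * p ^ k)⁻¹ * a := by rw [← mul_inv_rev]
    _ = (p ^ (2*k+1))⁻¹ * a := by rw [← pow_add, show k+1+k = 2*k+1 by omega]
  have hstep : ∀ q : W × ZMod 2, (titsPerm cs i * titsPerm cs i') q =
      (p * q.1 * p⁻¹, q.2 + ((if q.1 = a then 1 else 0) + if q.1 = a * p then 1 else 0)) := by
    rintro ⟨t, ε⟩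
    rw [Equiv.Perm.mul_apply, titsPerm_apply, titsPerm_apply]
    simp only [titsFun]
    refine Prod.ext ?_ ?_
    · show s i * (s i' * t * s i') * s i = p * t * p⁻¹
      rw [hpdef, mul_inv_rev, cs.inv_simple, cs.inv_simple]
      group
    · show ε + _ + _ = ε + _
      have h2 : (s i' * t * s i' = s i) ↔ (t = a * p) := by
        rw [conj_eq_iff (cs.simple_mul_simple_self i'),
          show s i' * s i * s i' = a * p by rw [ha, hpdef]; group]
      have h3 : (t = s i') ↔ (t = a) := by rw [ha]
      simp only [h2, h3]
      rw [add_assoc]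
  have hiter : ∀ (k : ℕ) (t : W) (ε : ZMod 2),
      ((titsPerm cs i * titsPerm cs i') ^ k) (t, ε) =
        (p ^ k * t * (p ^ k)⁻¹, ε + ∑ j ∈ Finset.range k,
          ((if t = (p ^ (2*j))⁻¹ * a then 1 else 0) +
            (if t = (p ^ (2*j+1))⁻¹ * a then 1 else 0))) := by
    intro k
    induction k with
    | zero => intro t ε; simp
    | succ k ih =>
        intro t ε
        rw [pow_succ', Equiv.Perm.mul_apply, ih, hstep]
        dsimp only
        have e1 : (p ^ k * t * (p ^ k)⁻¹ = a) ↔ (t = (p ^ (2*k))⁻¹ * a) := by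
          rw [conj_eq_iff' (p ^ k) t a, key1]
        have e2 : (p ^ k * t * (p ^ k)⁻¹ = a * p) ↔ (t = (p ^ (2*k+1))⁻¹ * a) := by
          rw [conj_eq_iff' (p ^ k) t (a * p), key2]
        simp only [e1, e2]
        conv_rhs => rw [Finset.sum_range_succ, ← add_assoc]
        refine Prod.ext ?_ rfl
        show p * (p ^ k * t * (p ^ k)⁻¹) * p⁻¹ = p ^ (k+1) * t * (p ^ (k+1))⁻¹
        rw [pow_succ']
        group
  apply Equiv.ext
  rintro ⟨t, ε⟩
  rw [hiter (M i i') t ε, hp]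
  have hsum : ∀ m : ℕ, ∑ j ∈ Finset.range m,
      ((if t = (p ^ (2*j))⁻¹ * a then (1:ZMod 2) else 0) +
        (if t = (p ^ (2*j+1))⁻¹ * a then 1 else 0)) =
      ∑ j ∈ Finset.range (2*m), (if t = (p ^ j)⁻¹ * a then (1:ZMod 2) else 0) := by
    intro m
    induction m with
    | zero => simp
    | succ m ih =>
        rw [Finset.sum_range_succ, ih, show 2*(m+1) = (2*m+1)+1 by omega,
          Finset.sum_range_succ, Finset.sum_range_succ, add_assoc]
  rw [hsum]
  rw [two_mul, Finset.sum_range_add]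
  have hper : ∀ j : ℕ, (if t = (p ^ (M i i' + j))⁻¹ * a then (1:ZMod 2) else 0) =
      (if t = (p ^ j)⁻¹ * a then (1:ZMod 2) else 0) := by
    intro j
    rw [pow_add, hp, one_mul]
  simp only [hper]
  rw [CharTwo.add_self_eq_zero, add_zero]
  simp


/-- The Tits parity homomorphism. -/
noncomputable def titsHom : W →* Equiv.Perm (W × ZMod 2) :=
  cs.lift ⟨titsPerm cs, titsLiftable cs⟩

lemma titsHom_simple (i : B) : titsHom cs (s i) = titsPerm cs i :=
  cs.lift_apply_simple (titsLiftable cs) i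

lemma rightInvSeq_cons (i : B) (ω : List B) :
    ris (i :: ω) = ((π ω)⁻¹ * s i * π ω) :: ris ω := rfl

theorem titsHom_count (ω : List B) (t : W) :
    titsHom cs (π ω) (t, 0) =
      ((π ω) * t * (π ω)⁻¹, (((ris ω).count t : ℕ) : ZMod 2)) := by
  induction ω with
  | nil => simp
  | cons i ω ih =>
      rw [cs.wordProd_cons, map_mul, Equiv.Perm.mul_apply, ih, titsHom_simple, titsPerm_apply]
      simp only [titsFun]
      refine Prod.ext ?_ ?_
      · show s i * (π ω * t * (π ω)⁻¹) * s i = _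
        rw [mul_inv_rev, cs.inv_simple]
        group
      · show _ + _ = _
        rw [rightInvSeq_cons, List.count_cons]
        have e1 : (π ω * t * (π ω)⁻¹ = s i) ↔ ((π ω)⁻¹ * s i * π ω = t) := by
          rw [conj_eq_iff' (π ω) t (s i)]
          exact eq_comm
        push_cast
        simp only [e1]
        by_cases h : (π ω)⁻¹ * s i * π ω = t <;> simp [h]

theorem count_parity_eq {ω ω' : List B} (h : π ω = π ω') (t : W) :
    (((ris ω).count t : ℕ) : ZMod 2) = (((ris ω').count t : ℕ) : ZMod 2) := by
  have h1 := titsHom_count cs ω t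
  have h2 := titsHom_count cs ω' t
  rw [h] at h1
  rw [h1] at h2
  simpa using congrArg Prod.snd h2

/-- The (simple) exchange property. -/
theorem exchange (ω : List B) (i : B) (hlt : ℓ (π ω * s i) < ℓ (π ω)) :
    ∃ j, ∃ _ : j < ω.length, π ω * s i = π (ω.eraseIdx j) := by
  obtain ⟨σ, hσred, hσ⟩ := cs.exists_reduced_word' (π ω * s i)
  have hσlen : σ.length < ℓ (π ω) := by
    have h1 : ℓ (π σ) = σ.length := hσred
    rw [← hσ] at h1
    omega
  have hnot : s i ∉ ris σ := by
    intro hmem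
    obtain ⟨j, hj, hget⟩ := List.getElem_of_mem hmem
    have hj' : j < σ.length := by rwa [cs.length_rightInvSeq] at hj
    have hmul := cs.wordProd_mul_getD_rightInvSeq σ j
    rw [List.getD_eq_getElem _ _ hj, hget] at hmul
    have hωeq : π ω = π (σ.eraseIdx j) := by
      rw [← hmul, ← hσ, cs.simple_mul_simple_cancel_right]
    have h1 : ℓ (π (σ.eraseIdx j)) ≤ (σ.eraseIdx j).length := cs.length_wordProd_le _
    have h2 : (σ.eraseIdx j).length = σ.length - 1 := by
      rw [List.length_eraseIdx, if_pos hj']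
    rw [← hωeq] at h1
    omega
  have hw : π (σ.concat i) = π ω := by
    rw [cs.wordProd_concat, ← hσ, cs.simple_mul_simple_cancel_right]
  have hpar := count_parity_eq cs hw (s i)
  rw [cs.rightInvSeq_concat] at hpar
  have hzero : (List.map (⇑(MulAut.conj (s i))) (ris σ)).count (s i) = 0 := by
    rw [List.count_eq_zero]
    intro hmem
    obtain ⟨u, hu, huc⟩ := List.mem_map.mp hmem
    rw [MulAut.conj_apply, cs.inv_simple] at huc
    rw [conj_eq_iff (cs.simple_mul_simple_self i)] at huc
    rw [cs.simple_mul_simple_self, one_mul] at huc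
    exact hnot (huc ▸ hu)
  rw [List.concat_eq_append, List.count_append, hzero, List.count_singleton] at hpar
  simp only [beq_self_eq_true, if_true, Nat.zero_add, Nat.cast_one] at hpar
  have hmem : s i ∈ ris ω := by
    by_contra hnm
    rw [List.count_eq_zero.mpr hnm] at hpar
    simp at hpar
  obtain ⟨j, hj, hget⟩ := List.getElem_of_mem hmem
  have hj' : j < ω.length := by rwa [cs.length_rightInvSeq] at hj
  have hmul := cs.wordProd_mul_getD_rightInvSeq ω j
  rw [List.getD_eq_getElem _ _ hj, hget] at hmul
  exact ⟨j, hj', hmul⟩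

/-- The deletion property. -/
theorem delete (ω : List B) (hnr : ¬ cs.IsReduced ω) :
    ∃ ω' : List B, ω'.Sublist ω ∧ ω'.length + 2 = ω.length ∧ π ω' = π ω := by
  classical
  have hle := cs.length_wordProd_le ω
  have hlt : ℓ (π ω) < ω.length := lt_of_le_of_ne hle hnr
  have hpos : 1 ≤ ω.length := by omega
  have hex : ∃ k, ¬ cs.IsReduced (ω.take (k+1)) := by
    refine ⟨ω.length - 1, ?_⟩
    rwa [Nat.sub_add_cancel hpos, List.take_length]
  let k := Nat.find hex
  have hk : ¬ cs.IsReduced (ω.take (k+1)) := Nat.find_spec hex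
  have hkle : k ≤ ω.length - 1 :=
    Nat.find_min' hex (by rwa [Nat.sub_add_cancel hpos, List.take_length])
  have hklt : k < ω.length := by omega
  have hred : cs.IsReduced (ω.take k) := by
    rcases Nat.eq_zero_or_pos k with h0 | h0
    · rw [h0, List.take_zero]
      show ℓ (π []) = _
      simp
    · have hmin := Nat.find_min hex (show k - 1 < k by omega)
      rw [show k - 1 + 1 = k by omega] at hmin
      exact not_not.mp hmin
  have htake : ω.take (k+1) = ω.take k ++ [ω[k]'hklt] := (List.take_concat_get' ω k hklt).symm
  have hlentake : (ω.take k).length = k := by rw [List.length_take]; omega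
  have hredlen : ℓ (π (ω.take k)) = k := by
    have h1 : ℓ (π (ω.take k)) = (ω.take k).length := hred
    omega
  have hdesc : ℓ (π (ω.take k) * s (ω[k]'hklt)) < ℓ (π (ω.take k)) := by
    rcases cs.length_mul_simple (π (ω.take k)) (ω[k]'hklt) with h | h
    · exfalso
      apply hk
      show ℓ (π (ω.take (k+1))) = (ω.take (k+1)).length
      rw [htake, cs.wordProd_append, cs.wordProd_singleton, h, hredlen, List.length_append,
        hlentake, List.length_singleton]
    · omega
  obtain ⟨j, hj, hjeq⟩ := exchange cs (ω.take k) (ω[k]'hklt) hdesc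
  have hjk : j < k := by rwa [hlentake] at hj
  refine ⟨(ω.take k).eraseIdx j ++ ω.drop (k+1), ?_, ?_, ?_⟩
  · have h1 : ((ω.take k).eraseIdx j).Sublist (ω.take (k+1)) := by
      rw [htake]
      exact (List.eraseIdx_sublist _ j).trans (List.sublist_append_left _ _)
    have h2 := List.Sublist.append h1 (List.Sublist.refl (ω.drop (k+1)))
    rwa [List.take_append_drop] at h2
  · rw [List.length_append, List.length_eraseIdx, hlentake, if_pos hjk, List.length_drop]
    omega
  · rw [cs.wordProd_append, ← hjeq]
    conv_rhs => rw [← List.take_append_drop (k+1) ω]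
    rw [cs.wordProd_append, htake, cs.wordProd_append, cs.wordProd_singleton]

lemma word_mem_parabolic (I : Set B) (ω : List B) (h : ∀ l ∈ ω, l ∈ I) :
    π ω ∈ parabolic cs I := by
  induction ω with
  | nil => rw [cs.wordProd_nil]; exact one_mem _
  | cons i ω ih =>
      rw [cs.wordProd_cons]
      exact mul_mem (Subgroup.subset_closure ⟨i, h i List.mem_cons_self, rfl⟩)
        (ih fun l hl => h l (List.mem_cons_of_mem i hl))

lemma exists_word_of_mem (I : Set B) (v : W) (h : v ∈ parabolic cs I) :
    ∃ ω : List B, (∀ l ∈ ω, l ∈ I) ∧ π ω = v := by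
  induction h using Subgroup.closure_induction with
  | mem x hx =>
      obtain ⟨i, hi, rfl⟩ := hx
      exact ⟨[i], by simpa using hi, cs.wordProd_singleton i⟩
  | one => exact ⟨[], by simp, cs.wordProd_nil⟩
  | mul x y hx hy ihx ihy =>
      obtain ⟨ω₁, h₁, rfl⟩ := ihx
      obtain ⟨ω₂, h₂, rfl⟩ := ihy
      exact ⟨ω₁ ++ ω₂, fun l hl => (List.mem_append.mp hl).elim (h₁ l) (h₂ l),
        cs.wordProd_append ω₁ ω₂⟩
  | inv x hx ihx =>
      obtain ⟨ω, h₁, rfl⟩ := ihx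
      exact ⟨ω.reverse, fun l hl => h₁ l (List.mem_reverse.mp hl), cs.wordProd_reverse ω⟩

lemma exists_reduced_word_of_mem (I : Set B) (v : W) (h : v ∈ parabolic cs I) :
    ∃ ω : List B, (∀ l ∈ ω, l ∈ I) ∧ cs.IsReduced ω ∧ π ω = v := by
  obtain ⟨ω, hmem, rfl⟩ := exists_word_of_mem cs I v h
  suffices H : ∀ (n : ℕ) (ω : List B), ω.length = n → (∀ l ∈ ω, l ∈ I) →
      ∃ ω' : List B, (∀ l ∈ ω', l ∈ I) ∧ cs.IsReduced ω' ∧ π ω' = π ω by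
    exact H ω.length ω rfl hmem
  intro n
  induction n using Nat.strong_induction_on with
  | _ n ih =>
      intro ω hn hmem'
      by_cases hred : cs.IsReduced ω
      · exact ⟨ω, hmem', hred, rfl⟩
      · obtain ⟨ω', hsub, hlen, hprod⟩ := delete cs ω hred
        obtain ⟨ω'', h1, h2, h3⟩ := ih ω'.length (by omega) ω' rfl
          (fun l hl => hmem' l (hsub.subset hl))
        exact ⟨ω'', h1, h2, h3.trans hprod⟩

/-- If `u` has minimal length in `u W_I`, then lengths add. -/
theorem length_mul_eq_add (I : Set B) (u : W)
    (hu : ∀ v ∈ parabolic cs I, ℓ u ≤ ℓ (u * v)) (v : W) (hv : v ∈ parabolic cs I) :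
    ℓ (u * v) = ℓ u + ℓ v := by
  by_contra hne
  have hlt : ℓ (u * v) < ℓ u + ℓ v := lt_of_le_of_ne (cs.length_mul_le u v) hne
  obtain ⟨σ, hσred, hσ⟩ := cs.exists_reduced_word' u
  obtain ⟨τ, hτI, hτred, hτ⟩ := exists_reduced_word_of_mem cs I v hv
  have hσlen : σ.length = ℓ u := by
    have h1 : ℓ (π σ) = σ.length := hσred
    rw [← hσ] at h1
    omega
  have hτlen : τ.length = ℓ v := by
    have h1 : ℓ (π τ) = τ.length := hτred
    rw [hτ] at h1
    omega
  have hnred : ¬ cs.IsReduced (σ ++ τ) := by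
    intro hr
    have h1 : ℓ (π (σ ++ τ)) = (σ ++ τ).length := hr
    rw [cs.wordProd_append, ← hσ, hτ, List.length_append] at h1
    omega
  obtain ⟨ω', hsub, hlen, hprod⟩ := delete cs _ hnred
  obtain ⟨σ', τ', rfl, hsσ, hsτ⟩ := List.sublist_append_iff.mp hsub
  have hτ'mem : π τ' ∈ parabolic cs I :=
    word_mem_parabolic cs I τ' (fun l hl => hτI l (hsτ.subset hl))
  have hprod' : π σ' * π τ' = u * v := by
    rw [← cs.wordProd_append, hprod, cs.wordProd_append, ← hσ, hτ]
  rcases eq_or_ne σ' σ with rfl | hneq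
  · have hcv : π τ' = v := by
      rw [← hσ] at hprod'
      exact mul_left_cancel hprod'
    have h1 : ℓ v ≤ τ'.length := hcv ▸ cs.length_wordProd_le τ'
    have h2 : σ'.length + τ'.length + 2 = σ'.length + τ.length := by
      rw [List.length_append, List.length_append] at hlen
      omega
    omega
  · have hlt' : σ'.length < σ.length :=
      lt_of_le_of_ne hsσ.length_le (fun h => hneq (hsσ.eq_of_length h))
    have hv2 : v * (π τ')⁻¹ ∈ parabolic cs I := mul_mem hv (inv_mem hτ'mem)
    have hueq : u * (v * (π τ')⁻¹) = π σ' := by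
      have h3 : π σ' * π τ' * (π τ')⁻¹ = u * v * (π τ')⁻¹ := by rw [hprod']
      rw [mul_inv_cancel_right] at h3
      rw [h3]
      group
    have h1 : ℓ (π σ') ≤ σ'.length := cs.length_wordProd_le σ'
    have h2 := hu _ hv2
    rw [hueq] at h2
    omega


omit [DecidableEq W]

lemma conj_mem_iff {H : Subgroup W} {v : W} (hv : v ∈ H) (w : W) :
    w ∈ H ↔ v⁻¹ * w * v ∈ H := by
  constructor
  · intro hw
    exact mul_mem (mul_mem (inv_mem hv) hw) hv
  · intro hw
    have h1 := mul_mem (mul_mem hv hw) (inv_mem hv)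
    have h2 : v * (v⁻¹ * w * v) * v⁻¹ = w := by group
    rwa [h2] at h1

lemma lcoset_eq {H : Subgroup W} {c c' : W} (h : c' ∈ (c * ·) '' (H : Set W)) :
    (c' * ·) '' (H : Set W) = (c * ·) '' (H : Set W) := by
  obtain ⟨v, hv, rfl⟩ := h
  ext z
  simp only [Set.mem_image, SetLike.mem_coe]
  constructor
  · rintro ⟨w, hw, rfl⟩
    exact ⟨v * w, mul_mem hv hw, (mul_assoc _ _ _).symm⟩
  · rintro ⟨w, hw, rfl⟩
    exact ⟨v⁻¹ * w, mul_mem (inv_mem hv) hw, by group⟩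

lemma chamber_cond_iff {HJ HI : Subgroup W} {x : W} :
    ((· * x) '' (HJ : Set W) = (x * ·) '' (HI : Set W)) ↔
      ∀ u : W, u ∈ HJ ↔ x⁻¹ * u * x ∈ HI := by
  constructor
  · intro h u
    constructor
    · intro hu
      have h1 : u * x ∈ (x * ·) '' (HI : Set W) := by
        rw [← h]; exact ⟨u, hu, rfl⟩
      obtain ⟨v, hv, hvx⟩ := h1
      replace hvx : x * v = u * x := hvx
      have h2 : x⁻¹ * u * x = v := by rw [mul_assoc, ← hvx]; group
      rwa [h2]
    · intro hu
      have h1 : u * x ∈ (x * ·) '' (HI : Set W) := ⟨x⁻¹ * u * x, hu, by group⟩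
      rw [← h] at h1
      obtain ⟨w, hw, hwx⟩ := h1
      replace hwx : w * x = u * x := hwx
      have h2 : w = u := mul_right_cancel hwx
      rwa [← h2]
  · intro h
    ext z
    constructor
    · rintro ⟨u, hu, rfl⟩
      exact ⟨x⁻¹ * u * x, (h u).mp hu, by group⟩
    · rintro ⟨v, hv, rfl⟩
      refine ⟨x * v * x⁻¹, ?_, by group⟩
      rw [SetLike.mem_coe, h (x * v * x⁻¹)]
      have h2 : x⁻¹ * (x * v * x⁻¹) * x = v := by group
      rwa [h2]

end ChamberAux

/-- The quotient `N(W,J) = Norm_W(W_J)/W_J` acts faithfully on `Cham(J)` by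
`g · (x,I) = (y,I)` with `y` the minimal-length representative of `g x W_I`, and the action is
transitive on chambers with the same second label.  Concretely:
(1) minimal-length representatives of `g x W_I` exist and are unique, and yield chambers;
(2) elements of `W_J` act trivially;
(3) faithfulness: if `g` in the normaliser fixes a chamber, i.e. `g x W_I = x W_I`, then `g ∈ W_J`;
(4) transitivity on first labels: for chambers `(x,I)`, `(y,I)`, the element `y x⁻¹` lies in the
normaliser of `W_J` and sends `(x,I)` to `(y,I)` (i.e. `(yx⁻¹) x W_I = y W_I`). -/


theorem normaliser_quotient_action_on_chambers {B W : Type*} [Group W]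
    {M : CoxeterMatrix B} (cs : CoxeterSystem M W) (J : Set B) :
    (∀ g ∈ Subgroup.normalizer (parabolic cs J : Set W), ∀ (x : W) (I : Set B), IsChamberLabel cs J x I →
      (∃! y : W, y ∈ ((g * x) * ·) '' (parabolic cs I : Set W) ∧
        ∀ z ∈ ((g * x) * ·) '' (parabolic cs I : Set W), cs.length y ≤ cs.length z) ∧
      (∀ y : W, (y ∈ ((g * x) * ·) '' (parabolic cs I : Set W) ∧
          ∀ z ∈ ((g * x) * ·) '' (parabolic cs I : Set W), cs.length y ≤ cs.length z) →
        IsChamberLabel cs J y I)) ∧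
    (∀ g ∈ parabolic cs J, ∀ (x : W) (I : Set B), IsChamberLabel cs J x I →
      ((g * x) * ·) '' (parabolic cs I : Set W) = (x * ·) '' (parabolic cs I : Set W)) ∧
    (∀ g ∈ Subgroup.normalizer (parabolic cs J : Set W), ∀ (x : W) (I : Set B), IsChamberLabel cs J x I →
      ((g * x) * ·) '' (parabolic cs I : Set W) = (x * ·) '' (parabolic cs I : Set W) →
      g ∈ parabolic cs J) ∧
    (∀ (x y : W) (I : Set B), IsChamberLabel cs J x I → IsChamberLabel cs J y I →
      y * x⁻¹ ∈ Subgroup.normalizer (parabolic cs J : Set W) ∧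
      (((y * x⁻¹) * x) * ·) '' (parabolic cs I : Set W) = (y * ·) '' (parabolic cs I : Set W)) := by
  classical
  open ChamberAux in
  refine ⟨?_, ?_, ?_, ?_⟩
  · -- existence/uniqueness of minimal representatives, and they are chambers
    intro g hg x I hch
    obtain ⟨hc, hmin⟩ := hch
    have hx := chamber_cond_iff.mp hc
    set C : Set W := ((g * x) * ·) '' (parabolic cs I : Set W) with hC
    have hCne : (g * x) ∈ C := ⟨1, one_mem _, mul_one _⟩
    have hcosetEq : ∀ y' ∈ C, (y' * ·) '' (parabolic cs I : Set W) = C :=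
      fun y' h => lcoset_eq h
    have hminPar : ∀ y' ∈ C, (∀ z ∈ C, cs.length y' ≤ cs.length z) →
        ∀ v ∈ parabolic cs I, cs.length y' ≤ cs.length (y' * v) := by
      intro y' hy' hm v hv
      refine hm _ ?_
      rw [← hcosetEq y' hy']
      exact ⟨v, hv, rfl⟩
    obtain ⟨y, hyC, hymin⟩ : ∃ y ∈ C, ∀ z ∈ C, cs.length y ≤ cs.length z := by
      have hSne : (cs.length '' C).Nonempty := ⟨cs.length (g * x), ⟨g * x, hCne, rfl⟩⟩
      obtain ⟨y, hyC, hyn⟩ := Nat.sInf_mem hSne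
      exact ⟨y, hyC, fun z hz => hyn ▸ Nat.sInf_le ⟨z, hz, rfl⟩⟩
    constructor
    · refine ⟨y, ⟨hyC, hymin⟩, ?_⟩
      rintro y' ⟨hy'C, hy'min⟩
      have h1 : y' ∈ (y * ·) '' (parabolic cs I : Set W) := by
        rw [hcosetEq y hyC]; exact hy'C
      obtain ⟨v, hv, hvy⟩ := h1
      replace hvy : y * v = y' := hvy
      have hadd : cs.length (y * v) = cs.length y + cs.length v :=
        length_mul_eq_add cs I y (hminPar y hyC hymin) v hv
      have h2 : cs.length y' ≤ cs.length y := hy'min y hyC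
      rw [← hvy] at h2
      have h3 : cs.length v = 0 := by omega
      have hv1 : v = 1 := cs.length_eq_zero_iff.mp h3
      rw [← hvy, hv1, mul_one]
    · rintro y' ⟨hy'C, hy'min⟩
      constructor
      · obtain ⟨v₀, hv₀, hveq⟩ := hy'C
        replace hveq : (g * x) * v₀ = y' := hveq
        have h1 : ∀ u : W, u ∈ parabolic cs J ↔ g⁻¹ * u * g ∈ parabolic cs J :=
          Subgroup.mem_normalizer_iff''.mp hg
        refine chamber_cond_iff.mpr (fun u => ?_)
        have e : y'⁻¹ * u * y' = v₀⁻¹ * (x⁻¹ * (g⁻¹ * u * g) * x) * v₀ := by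
          rw [← hveq]; group
        rw [e]
        exact (h1 u).trans ((hx _).trans (conj_mem_iff hv₀ _))
      · intro v hv
        refine hy'min _ ?_
        rw [← hcosetEq y' hy'C]
        exact ⟨v, hv, rfl⟩
  · -- elements of `W_J` act trivially
    intro g hg x I hch
    obtain ⟨hc, -⟩ := hch
    have hx := chamber_cond_iff.mp hc
    apply lcoset_eq
    exact ⟨x⁻¹ * g * x, (hx g).mp hg, by show x * (x⁻¹ * g * x) = g * x; group⟩
  · -- faithfulness
    intro g hg x I hch heq
    obtain ⟨hc, -⟩ := hch
    have hx := chamber_cond_iff.mp hc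
    have h1 : g * x ∈ (x * ·) '' (parabolic cs I : Set W) := by
      rw [← heq]; exact ⟨1, one_mem _, mul_one _⟩
    obtain ⟨v, hv, hvx⟩ := h1
    replace hvx : x * v = g * x := hvx
    have h2 : x⁻¹ * g * x = v := by rw [mul_assoc, ← hvx]; group
    refine (hx g).mpr ?_
    rw [h2]
    exact hv
  · -- transitivity
    intro x y I hchx hchy
    obtain ⟨hcx, -⟩ := hchx
    obtain ⟨hcy, -⟩ := hchy
    have hx := chamber_cond_iff.mp hcx
    have hy := chamber_cond_iff.mp hcy
    refine ⟨?_, ?_⟩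
    · rw [Subgroup.mem_normalizer_iff]
      intro h
      have e : (y * x⁻¹) * h * (y * x⁻¹)⁻¹ = y * (x⁻¹ * h * x) * y⁻¹ := by group
      rw [e, hx h, hy (y * (x⁻¹ * h * x) * y⁻¹)]
      have e2 : y⁻¹ * (y * (x⁻¹ * h * x) * y⁻¹) * y = x⁻¹ * h * x := by group
      rw [e2]
    · have e : y * x⁻¹ * x = y := by group
      rw [e]
end

section
/- Let F: G̃ → G be a normal groupoid covering of connected groupoids. Then for any object x of G and any x̃ ∈ F^{-1}(x), there is a short exact sequence of groups 1 → G̃_{x̃} → G_x → Deck(F) → 1, where G̃_{x̃} and G_x are the vertex groups. -/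
open CategoryTheory

universe v u

/-- The star of an object in a groupoid: all morphisms out of it. -/
def GroupoidStar (C : Type u) [Groupoid.{v} C] (x : C) : Type (max u v) := Σ y : C, x ⟶ y

/-- The map induced by a functor on stars. -/
def starMap {C : Type u} {D : Type u} [Groupoid.{v} C] [Groupoid.{v} D] (F : C ⥤ D) (x : C) :
    GroupoidStar C x → GroupoidStar D (F.obj x) :=
  fun p => ⟨F.obj p.1, F.map p.2⟩

/-- A functor of groupoids is a covering if every morphism downstairs lifts uniquely once a lift
of its source is chosen; equivalently, it induces bijections on stars. -/
def IsGroupoidCovering {C : Type u} {D : Type u} [Groupoid.{v} C] [Groupoid.{v} D]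
    (F : C ⥤ D) : Prop :=
  ∀ x : C, Function.Bijective (starMap F x)

/-- The deck transformation group of a functor `F : C ⥤ D`: automorphisms `φ` of `C` with
`φ ⋙ F = F` (strictly), i.e. automorphisms of the object `(C, F)` of the over-category
`Cat / D`. -/
def Deck {C : Type u} {D : Type u} [Groupoid.{v} C] [Groupoid.{v} D] (F : C ⥤ D) :=
  Aut (Over.mk (show Cat.of C ⟶ Cat.of D from F.toCatHom))

noncomputable instance {C : Type u} {D : Type u} [Groupoid.{v} C] [Groupoid.{v} D]
    (F : C ⥤ D) : Group (Deck F) := by unfold Deck; infer_instance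

/-- The underlying functor `C ⥤ C` of a deck transformation. -/
def Deck.toFunctor {C : Type u} {D : Type u} [Groupoid.{v} C] [Groupoid.{v} D] {F : C ⥤ D}
    (φ : Deck F) : C ⥤ C := φ.hom.left.toFunctor

/-- A covering is normal if the deck group acts transitively on fibres over objects. -/
def IsNormalCovering {C : Type u} {D : Type u} [Groupoid.{v} C] [Groupoid.{v} D]
    (F : C ⥤ D) : Prop :=
  ∀ x y : C, F.obj x = F.obj y → ∃ φ : Deck F, (Deck.toFunctor φ).obj x = y

/-- The homomorphism of vertex groups induced by a functor. -/
def vertexHom {C : Type u} {D : Type u} [Groupoid.{v} C] [Groupoid.{v} D] (F : C ⥤ D)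
    (x : C) : (x ⟶ x) →* (F.obj x ⟶ F.obj x) where
  toFun f := F.map f
  map_one' := F.map_id x
  map_mul' f g := F.map_comp f g

section Aux
variable {C : Type u} {D : Type u} [Groupoid.{v} C] [Groupoid.{v} D] {F : C ⥤ D}

lemma Deck.w (φ : Deck F) : Deck.toFunctor φ ⋙ F = F := congrArg Cat.Hom.toFunctor (Over.w φ.hom)

lemma Deck.objW (φ : Deck F) (y : C) : F.obj ((Deck.toFunctor φ).obj y) = F.obj y :=
  Functor.congr_obj (Deck.w φ) y

lemma Deck.mapW (φ : Deck F) {y z : C} (f : y ⟶ z) :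
    F.map ((Deck.toFunctor φ).map f)
      = eqToHom (Deck.objW φ y) ≫ F.map f ≫ eqToHom (Deck.objW φ z).symm := by
  have h := Functor.congr_hom (Deck.w φ) f
  simpa using h

lemma Deck.mul_toFunctor (φ φ' : Deck F) :
    Deck.toFunctor (φ * φ') = Deck.toFunctor φ' ⋙ Deck.toFunctor φ := rfl

lemma Deck.one_toFunctor : Deck.toFunctor (1 : Deck F) = 𝟭 C := rfl

lemma deck_ext (hcov : IsGroupoidCovering F) (hconnC : ∀ x y : C, Nonempty (x ⟶ y))
    (xt : C) (φ φ' : Deck F)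
    (hxt : (Deck.toFunctor φ).obj xt = (Deck.toFunctor φ').obj xt) : φ = φ' := by
  have key : ∀ {y : C} (f : xt ⟶ y),
      (⟨(Deck.toFunctor φ).obj y, (Deck.toFunctor φ).map f⟩ :
        GroupoidStar C ((Deck.toFunctor φ).obj xt)) =
      ⟨(Deck.toFunctor φ').obj y, eqToHom hxt ≫ (Deck.toFunctor φ').map f⟩ := by
    intro y f
    apply (hcov _).1
    show (⟨_, F.map _⟩ : GroupoidStar D _) = ⟨_, F.map _⟩
    have h1 : F.obj ((Deck.toFunctor φ).obj y) = F.obj ((Deck.toFunctor φ').obj y) :=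
      (Deck.objW φ y).trans (Deck.objW φ' y).symm
    refine Sigma.ext h1 ?_
    rw [F.map_comp, Deck.mapW φ f, Deck.mapW φ' f, eqToHom_map]
    simp
  have hobj : ∀ y : C, (Deck.toFunctor φ).obj y = (Deck.toFunctor φ').obj y := fun y =>
    congrArg Sigma.fst (key (hconnC xt y).some)
  have hmap0 : ∀ {y : C} (f : xt ⟶ y),
      (Deck.toFunctor φ).map f
        = eqToHom hxt ≫ (Deck.toFunctor φ').map f ≫ eqToHom (hobj y).symm := by
    intro y f
    have h2 : HEq ((Deck.toFunctor φ).map f) (eqToHom hxt ≫ (Deck.toFunctor φ').map f) := by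
      have h := key f
      exact (Sigma.mk.inj_iff.mp h).2
    have h3 := (conj_eqToHom_iff_heq ((Deck.toFunctor φ).map f)
      (eqToHom hxt ≫ (Deck.toFunctor φ').map f) rfl (hobj y)).mpr h2
    simpa using h3
  have hfun : Deck.toFunctor φ = Deck.toFunctor φ' := by
    refine CategoryTheory.Functor.ext hobj ?_
    intro y z f
    obtain ⟨a⟩ := hconnC xt y
    rw [← cancel_epi ((Deck.toFunctor φ).map a), ← Functor.map_comp, hmap0 (a ≫ f), hmap0 a]
    simp
  have hhom : φ.hom = φ'.hom := by
    apply CommaMorphism.ext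
    · exact Cat.Hom.ext hfun
    · exact Subsingleton.elim _ _
  exact Iso.ext hhom

end Aux

/-- Let `F : G̃ → G` be a normal covering of connected groupoids.  Then for any
object `xt` of `G̃` over `x = F(xt)` there is a short exact sequence
`1 → G̃_{xt} → G_x → Deck(F) → 1` of vertex groups: the induced map `G̃_{xt} → G_x` is injective,
and there is a surjection `G_x → Deck(F)` whose kernel is exactly the image of `G̃_{xt}`. -/
theorem normal_covering_vertex_group_ses {C : Type u} {D : Type u}
    [Groupoid.{v} C] [Groupoid.{v} D] (F : C ⥤ D)
    (hconnC : ∀ x y : C, Nonempty (x ⟶ y)) (hconnD : ∀ x y : D, Nonempty (x ⟶ y))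
    (hcov : IsGroupoidCovering F) (hnorm : IsNormalCovering F) (xt : C) :
    Function.Injective (vertexHom F xt) ∧
    ∃ ψ : (F.obj xt ⟶ F.obj xt) →* Deck F,
      Function.Surjective ψ ∧ ψ.ker = (vertexHom F xt).range := by
  classical
  -- the lifting equivalence at `xt`
  let E : GroupoidStar C xt ≃ GroupoidStar D (F.obj xt) :=
    Equiv.ofBijective (starMap F xt) (hcov xt)
  let lift : (F.obj xt ⟶ F.obj xt) → GroupoidStar C xt := fun g => E.symm ⟨F.obj xt, g⟩
  have liftSpec : ∀ g, starMap F xt (lift g) = ⟨F.obj xt, g⟩ := fun g =>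
    E.apply_symm_apply ⟨F.obj xt, g⟩
  have liftObj : ∀ g, F.obj (lift g).1 = F.obj xt := fun g =>
    congrArg Sigma.fst (liftSpec g)
  have liftMap : ∀ g, F.map (lift g).2 = g ≫ eqToHom (liftObj g).symm := by
    intro g
    have h2 : HEq (F.map (lift g).2) g := (Sigma.ext_iff.mp (liftSpec g)).2
    simpa using (conj_eqToHom_iff_heq (F.map (lift g).2) g rfl (liftObj g)).mpr h2
  have liftUniq : ∀ (g : F.obj xt ⟶ F.obj xt) (p : GroupoidStar C xt),
      starMap F xt p = ⟨F.obj xt, g⟩ → p = lift g := fun g p h =>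
    E.eq_symm_apply.mpr h
  -- the deck transformation associated to a vertex-group element
  have hψ0 : ∀ g : F.obj xt ⟶ F.obj xt, ∃ φ : Deck F,
      (Deck.toFunctor φ).obj xt = (lift g).1 := fun g =>
    hnorm xt (lift g).1 (liftObj g).symm
  choose ψ0 hψ0spec using hψ0
  have char : ∀ (g : F.obj xt ⟶ F.obj xt) (φ : Deck F),
      (Deck.toFunctor φ).obj xt = (lift g).1 → ψ0 g = φ := fun g φ h =>
    deck_ext hcov hconnC xt _ _ ((hψ0spec g).trans h.symm)
  have keyMul : ∀ (g h : F.obj xt ⟶ F.obj xt) (φ : Deck F)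
      (hφ : (Deck.toFunctor φ).obj xt = (lift g).1),
      (Deck.toFunctor φ).obj (lift h).1 = (lift (g ≫ h)).1 := by
    intro g h φ hφ
    have hk : (⟨(Deck.toFunctor φ).obj (lift h).1,
        (lift g).2 ≫ eqToHom hφ.symm ≫ (Deck.toFunctor φ).map (lift h).2⟩ :
        GroupoidStar C xt) = lift (g ≫ h) := by
      apply liftUniq
      show (⟨F.obj _, F.map _⟩ : GroupoidStar D _) = _
      refine Sigma.ext ((Deck.objW φ _).trans (liftObj h)) ?_
      rw [F.map_comp, F.map_comp, eqToHom_map, Deck.mapW φ, liftMap g, liftMap h]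
      simp [← Category.assoc]
      simp [Category.assoc]
    exact congrArg Sigma.fst hk
  constructor
  · -- injectivity of the vertex homomorphism
    intro f g h
    have h2 : (⟨xt, f⟩ : GroupoidStar C xt) = ⟨xt, g⟩ := by
      apply (hcov xt).1
      show (⟨F.obj xt, F.map f⟩ : GroupoidStar D _) = ⟨F.obj xt, F.map g⟩
      rw [show F.map f = F.map g from h]
    exact eq_of_heq (Sigma.mk.inj_iff.mp h2).2
  · refine ⟨{ toFun := ψ0, map_one' := ?_, map_mul' := ?_ }, ?_, ?_⟩
    · -- ψ0 1 = 1
      have h1 : lift (1 : F.obj xt ⟶ F.obj xt) = ⟨xt, 𝟙 xt⟩ := by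
        symm
        apply liftUniq
        show (⟨F.obj xt, F.map (𝟙 xt)⟩ : GroupoidStar D _) = ⟨F.obj xt, 1⟩
        rw [F.map_id]
        rfl
      apply char
      rw [Deck.one_toFunctor, h1]
      rfl
    · -- multiplicativity
      intro g h
      apply char
      show (Deck.toFunctor (ψ0 g * ψ0 h)).obj xt = (lift (g ≫ h)).1
      rw [Deck.mul_toFunctor]
      show (Deck.toFunctor (ψ0 g)).obj ((Deck.toFunctor (ψ0 h)).obj xt) = _
      rw [hψ0spec h]
      exact keyMul g h (ψ0 g) (hψ0spec g)
    · -- surjectivity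
      intro φ
      obtain ⟨f⟩ := hconnC xt ((Deck.toFunctor φ).obj xt)
      refine ⟨F.map f ≫ eqToHom (Deck.objW φ xt), ?_⟩
      apply char
      have : lift (F.map f ≫ eqToHom (Deck.objW φ xt)) = ⟨(Deck.toFunctor φ).obj xt, f⟩ := by
        symm
        apply liftUniq
        show (⟨F.obj ((Deck.toFunctor φ).obj xt), F.map f⟩ : GroupoidStar D _) = _
        refine Sigma.ext (Deck.objW φ xt) ?_
        simp
      rw [this]
    · -- kernel = image of the vertex group upstairs
      ext g
      simp only [MonoidHom.mem_ker, MonoidHom.mem_range]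
      constructor
      · intro hg
        have hg' : ψ0 g = 1 := hg
        have h1 : (lift g).1 = xt := by
          have := hψ0spec g
          rw [hg', Deck.one_toFunctor] at this
          exact this.symm
        refine ⟨(lift g).2 ≫ eqToHom h1, ?_⟩
        show F.map ((lift g).2 ≫ eqToHom h1) = g
        rw [F.map_comp, eqToHom_map, liftMap g]
        simp
      · rintro ⟨l, hl⟩
        have h1 : lift g = ⟨xt, l⟩ := by
          symm
          apply liftUniq
          show (⟨F.obj xt, F.map l⟩ : GroupoidStar D _) = ⟨F.obj xt, g⟩
          rw [show F.map l = g from hl]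
        show ψ0 g = 1
        apply char
        rw [Deck.one_toFunctor, h1]
        rfl
end

section
/- Every deck transformation φ of the universal covering F: B̃H(J) → BH(J) is given by the action of a unique element gW_J ∈ N(W,J): if φ(e,J) = (g,J) then φ(x,I) = (gx', I) for all chambers, where gx' is the minimal-length representative of gxW_I. Consequently Deck(F) ≅ N(W,J) = Norm_W(W_J)/W_J. -/
open CoxeterSystem

open CategoryTheory

universe v u

variable {B W : Type u} [Group W] {V : Type*} [AddCommGroup V] [Module ℝ V]
  {M : CoxeterMatrix B} {cs : CoxeterSystem M W}

/-- `I` and `J` are associates: `W_I` and `W_J` are conjugate in `W`. -/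
def IsAssociate (cs : CoxeterSystem M W) (J I : Set B) : Prop :=
  ∃ x : W, Subgroup.map (MulAut.conj x).toMonoidHom (parabolic cs I) = parabolic cs J

/-- A chamber `(x, I)` of the Tits cone intersection, labelled as in the Iyama--Wemyss
labelling theorem: `W_J x = x W_I` and `x` has minimal length in `x W_I`. -/
structure Chamber (cs : CoxeterSystem M W) (J : Set B) : Type u where
  x : W
  I : Set B
  coset : ((· * x) '' (parabolic cs J : Set W)) = ((x * ·) '' (parabolic cs I : Set W))
  minl : ∀ v ∈ parabolic cs I, cs.length x ≤ cs.length (x * v)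

/-- Morphisms of the groupoid `B̃H(J)`: the singleton `{x⁻¹ y}`. -/
def ChamberHom (c d : Chamber cs J) : Type u := {w : W // w = c.x⁻¹ * d.x}

/-- The groupoid `B̃H(J)` with objects the chambers and singleton hom-sets `{x⁻¹y}`. -/
instance chamberGroupoid (cs : CoxeterSystem M W) (J : Set B) :
    Groupoid (Chamber cs J) where
  Hom c d := ChamberHom c d
  id c := ⟨c.x⁻¹ * c.x, rfl⟩
  comp {a _ c} _ _ := ⟨a.x⁻¹ * c.x, rfl⟩
  id_comp f := Subtype.ext f.2.symm
  comp_id f := Subtype.ext f.2.symm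
  assoc _ _ _ := rfl
  inv {a b} _ := ⟨b.x⁻¹ * a.x, rfl⟩
  inv_comp _ := rfl
  comp_inv _ := rfl

/-- An object of the Brink--Howlett groupoid: an associate of `J`.  (The reflection
representation `r` is carried as a parameter so that the hom-sets below make sense.) -/
structure BHObj (cs : CoxeterSystem M W) (J : Set B) (r : ReflRep cs V) : Type u where
  I : Set B
  assoc : IsAssociate cs J I

/-- Morphisms of the Brink--Howlett groupoid:
`Hom(I, K) = {w ∈ W : {α_i : i ∈ I} = w · {α_k : k ∈ K}}`. -/
def BHHom {r : ReflRep cs V} (I K : BHObj cs J r) : Type u :=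
  {w : W // r.α '' I.I = r.ρ w '' (r.α '' K.I)}

private lemma rep_id_aux (ρ : Representation ℝ W V) (S : Set V) :
    S = ρ (1 : W) '' S := by
  rw [map_one]; ext v; simp [Module.End.one_apply]

private lemma rep_comp_aux (ρ : Representation ℝ W V) (u v : W) (S T U : Set V)
    (hu : S = ρ u '' T) (hv : T = ρ v '' U) : S = ρ (u * v) '' U := by
  rw [hu, hv, map_mul, Set.image_image]
  ext w; simp [Module.End.mul_apply]

private lemma rep_inv_aux (ρ : Representation ℝ W V) (u : W) (S T : Set V)
    (hu : S = ρ u '' T) : T = ρ u⁻¹ '' S := by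
  rw [hu, Set.image_image]
  have h : ∀ y : V, ρ u⁻¹ (ρ u y) = y := fun y => by
    rw [← Module.End.mul_apply, ← map_mul, inv_mul_cancel, map_one, Module.End.one_apply]
  ext w; simp [h]

/-- The Brink--Howlett groupoid `BH(J)`. -/
instance bhGroupoid (cs : CoxeterSystem M W) (J : Set B) (r : ReflRep cs V) :
    Groupoid (BHObj cs J r) where
  Hom I K := BHHom I K
  id I := ⟨1, rep_id_aux r.ρ _⟩
  comp u v := ⟨u.1 * v.1, rep_comp_aux r.ρ u.1 v.1 _ _ _ u.2 v.2⟩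
  id_comp _ := Subtype.ext (one_mul _)
  comp_id _ := Subtype.ext (mul_one _)
  assoc _ _ _ := Subtype.ext (mul_assoc _ _ _)
  inv u := ⟨u.1⁻¹, rep_inv_aux r.ρ u.1 _ _ u.2⟩
  inv_comp _ := Subtype.ext (inv_mul_cancel _)
  comp_inv _ := Subtype.ext (mul_inv_cancel _)

/-- The underlying element of `W` of a morphism of `B̃H(J)`. -/
def chamberHomVal {c d : Chamber cs J} (f : ChamberHom c d) : W := f.1

/-- The underlying element of `W` of a morphism of `BH(J)`. -/
def bhHomVal {r : ReflRep cs V} {I K : BHObj cs J r} (f : BHHom I K) : W := f.1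

section DeckAux

variable {r : ReflRep cs V} {J : Set B}

instance chamberHomSubsingleton (c d : Chamber cs J) : Subsingleton (c ⟶ d) :=
  ⟨fun f g => Subtype.ext ((f : ChamberHom c d).2.trans (g : ChamberHom c d).2.symm)⟩

theorem Chamber.ext' {c d : Chamber cs J} (hx : c.x = d.x) (hI : c.I = d.I) : c = d := by
  cases c; cases d; dsimp at hx hI; subst hx; subst hI; rfl

theorem BHObj.ext' {c d : BHObj cs J r} (hI : c.I = d.I) : c = d := by
  cases c; cases d; dsimp at hI; subst hI; rfl

theorem chamberHomVal_eq {c d : Chamber cs J} (f : c ⟶ d) :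
    chamberHomVal f = c.x⁻¹ * d.x := (f : ChamberHom c d).2

theorem bhHomVal_comp {I K L : BHObj cs J r} (f : I ⟶ K) (g : K ⟶ L) :
    bhHomVal (f ≫ g) = bhHomVal f * bhHomVal g := rfl

theorem bhHomVal_eqToHom {I K : BHObj cs J r} (h : I = K) :
    bhHomVal (eqToHom h) = 1 := by subst h; rfl

theorem bhHom_ext {I K : BHObj cs J r} {f g : I ⟶ K}
    (h : bhHomVal f = bhHomVal g) : f = g := Subtype.ext h

theorem bhHomVal_heq {E K K' : BHObj cs J r} (h : K = K') {f : E ⟶ K} {g : E ⟶ K'}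
    (hfg : HEq f g) : bhHomVal f = bhHomVal g := by subst h; cases hfg; rfl

/-- The base chamber `(1, J)`. -/
def eCh (cs : CoxeterSystem M W) (J : Set B) : Chamber cs J where
  x := 1
  I := J
  coset := by ext w; simp
  minl := fun v _ => by simp

theorem normalizer_of_coset {g : W}
    (h : ((· * g) '' (parabolic cs J : Set W)) = ((g * ·) '' (parabolic cs J : Set W))) :
    g ∈ Subgroup.normalizer (parabolic cs J : Set W) := by
  rw [Subgroup.mem_normalizer_iff'']
  intro h'
  constructor
  · intro hh
    have hmem : h' * g ∈ ((g * ·) '' (parabolic cs J : Set W)) := h ▸ ⟨h', hh, rfl⟩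
    obtain ⟨v, hv, hveq⟩ := hmem
    have hv2 : g⁻¹ * h' * g = v := by
      have hveq' : g * v = h' * g := hveq
      rw [mul_assoc, ← hveq', ← mul_assoc, inv_mul_cancel, one_mul]
    rwa [hv2]
  · intro hh
    have hmem : g * (g⁻¹ * h' * g) ∈ ((· * g) '' (parabolic cs J : Set W)) :=
      h.symm ▸ ⟨g⁻¹ * h' * g, hh, rfl⟩
    obtain ⟨w, hw, hweq⟩ := hmem
    have : w = h' := by
      have : g * (g⁻¹ * h' * g) = h' * g := by group
      rw [this] at hweq
      exact mul_right_cancel hweq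
    rwa [← this]

theorem coset_of_normalizer {g : W} (hg : g ∈ Subgroup.normalizer (parabolic cs J : Set W)) :
    ((· * g) '' (parabolic cs J : Set W)) = ((g * ·) '' (parabolic cs J : Set W)) := by
  rw [Subgroup.mem_normalizer_iff''] at hg
  ext u
  constructor
  · rintro ⟨w, hw, rfl⟩
    refine ⟨g⁻¹ * w * g, (hg w).1 hw, by group⟩
  · rintro ⟨v, hv, rfl⟩
    refine ⟨g * v * g⁻¹, (hg _).2 ?_, by group⟩
    have : g⁻¹ * (g * v * g⁻¹) * g = v := by group
    rwa [this]

theorem chamber_mem_normalizer (c : Chamber cs J) (hI : c.I = J) :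
    c.x ∈ Subgroup.normalizer (parabolic cs J : Set W) := by
  have h := c.coset
  rw [hI] at h
  exact normalizer_of_coset h

theorem exists_minrep (cs : CoxeterSystem M W) (J : Set B) (g : W) :
    ∃ w ∈ parabolic cs J,
      ∀ v ∈ parabolic cs J, cs.length (g * w) ≤ cs.length (g * w * v) := by
  classical
  set s : Set ℕ := {n | ∃ w ∈ parabolic cs J, cs.length (g * w) = n} with hs
  have hne : s.Nonempty := ⟨cs.length (g * 1), 1, Subgroup.one_mem _, rfl⟩
  obtain ⟨w, hw, hwlen⟩ := Nat.sInf_mem hne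
  refine ⟨w, hw, fun v hv => ?_⟩
  have hmem : cs.length (g * w * v) ∈ s := ⟨w * v, Subgroup.mul_mem _ hw hv, by
    rw [mul_assoc]⟩
  rw [hwlen]
  exact Nat.sInf_le hmem

/-- Any functor over `F` acts on `x`-coordinates by a fixed left multiplication. -/
theorem over_val (F : Chamber cs J ⥤ BHObj cs J r)
    (hmap : ∀ (c d : Chamber cs J) (f : c ⟶ d), bhHomVal (F.map f) = chamberHomVal f)
    (T : Chamber cs J ⥤ Chamber cs J) (hT : T ⋙ F = F) (c d : Chamber cs J) :
    (T.obj c).x⁻¹ * (T.obj d).x = c.x⁻¹ * d.x := by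
  let f : c ⟶ d := ⟨c.x⁻¹ * d.x, rfl⟩
  have h := Functor.congr_hom hT f
  have hv := congrArg bhHomVal h
  rw [bhHomVal_comp, bhHomVal_comp, bhHomVal_eqToHom, bhHomVal_eqToHom, one_mul, mul_one]
    at hv
  have h1 : bhHomVal ((T ⋙ F).map f) = (T.obj c).x⁻¹ * (T.obj d).x := by
    have := hmap _ _ (T.map f)
    rw [chamberHomVal_eq] at this
    exact this
  have h2 : bhHomVal (F.map f) = c.x⁻¹ * d.x := by
    rw [hmap, chamberHomVal_eq]
  rw [h1, h2] at hv
  exact hv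

theorem over_I (F : Chamber cs J ⥤ BHObj cs J r)
    (hobj : ∀ c : Chamber cs J, (F.obj c).I = c.I)
    (T : Chamber cs J ⥤ Chamber cs J) (hT : T ⋙ F = F) (c : Chamber cs J) :
    (T.obj c).I = c.I := by
  have h := Functor.congr_obj hT c
  have h2 : (F.obj (T.obj c)).I = (F.obj c).I := congrArg BHObj.I h
  rw [hobj, hobj] at h2; exact h2

/-- If a functor over `F` translates by an element of `W_J`, it is the identity. -/
theorem functor_eq_id (T : Chamber cs J ⥤ Chamber cs J) (w : W)
    (hw : w ∈ parabolic cs J)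
    (hx : ∀ c, (T.obj c).x = w * c.x) (hI : ∀ c, (T.obj c).I = c.I) :
    T = 𝟭 (Chamber cs J) := by
  have hw1 : w = 1 := by
    have h1 := (T.obj (eCh cs J)).minl w⁻¹ (by rw [hI]; exact Subgroup.inv_mem _ hw)
    rw [hx] at h1
    simp only [eCh, mul_one, mul_inv_cancel, CoxeterSystem.length_one] at h1
    exact cs.length_eq_zero_iff.mp (Nat.le_zero.mp h1)
  have hobj' : ∀ c, T.obj c = (𝟭 (Chamber cs J)).obj c := fun c =>
    Chamber.ext' (by rw [hx, hw1, one_mul]; rfl) (hI c)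
  exact CategoryTheory.Functor.ext hobj' (fun c d f => Subsingleton.elim _ _)

/-- Construct a deck functor translating by `e'.x`, given a chamber `e'` over `J`,
by unique path lifting along the covering. -/
theorem exists_deck_functor (F : Chamber cs J ⥤ BHObj cs J r)
    (hobj : ∀ c : Chamber cs J, (F.obj c).I = c.I)
    (hmap : ∀ (c d : Chamber cs J) (f : c ⟶ d), bhHomVal (F.map f) = chamberHomVal f)
    (hcov : IsGroupoidCovering F) (e' : Chamber cs J) (hIe : e'.I = J) :
    ∃ T : Chamber cs J ⥤ Chamber cs J, T ⋙ F = F ∧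
      (∀ c, (T.obj c).x = e'.x * c.x) ∧ (∀ c, (T.obj c).I = c.I) := by
  classical
  have he : F.obj e' = F.obj (eCh cs J) := BHObj.ext' (by rw [hobj, hobj, hIe]; rfl)
  -- morphism from the base chamber to `c`
  let mc : ∀ c : Chamber cs J, eCh cs J ⟶ c := fun c => ⟨(eCh cs J).x⁻¹ * c.x, rfl⟩
  let target : ∀ c : Chamber cs J, GroupoidStar (BHObj cs J r) (F.obj e') :=
    fun c => ⟨F.obj c, eqToHom he ≫ F.map (mc c)⟩
  let lift : ∀ c : Chamber cs J, GroupoidStar (Chamber cs J) e' :=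
    fun c => Function.surjInv (hcov e').2 (target c)
  have hstar : ∀ c, starMap F e' (lift c) = target c :=
    fun c => Function.surjInv_eq (hcov e').2 (target c)
  have hfst : ∀ c, F.obj (lift c).1 = F.obj c := fun c => congrArg Sigma.fst (hstar c)
  have hval : ∀ c, (lift c).1.x = e'.x * c.x := by
    intro c
    have hsnd : HEq (F.map (lift c).2) (eqToHom he ≫ F.map (mc c)) :=
      (Sigma.ext_iff.mp (hstar c)).2
    have h2 : bhHomVal (F.map (lift c).2) = bhHomVal (eqToHom he ≫ F.map (mc c)) :=
      bhHomVal_heq (hfst c) hsnd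
    rw [hmap, chamberHomVal_eq, bhHomVal_comp, bhHomVal_eqToHom, one_mul, hmap,
      chamberHomVal_eq] at h2
    have : e'.x * (e'.x⁻¹ * (lift c).1.x) = e'.x * ((eCh cs J).x⁻¹ * c.x) := by rw [h2]
    simpa [eCh, mul_assoc] using this
  have hIc : ∀ c, (lift c).1.I = c.I := by
    intro c
    have := congrArg BHObj.I (hfst c)
    rwa [hobj, hobj] at this
  refine ⟨{
      obj := fun c => (lift c).1
      map := fun {c d} f => ⟨(lift c).1.x⁻¹ * (lift d).1.x, rfl⟩
      map_id := fun c => Subsingleton.elim _ _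
      map_comp := fun f g => Subsingleton.elim _ _ }, ?_, hval, hIc⟩
  refine CategoryTheory.Functor.ext (fun c => hfst c) (fun c d f => ?_)
  apply bhHom_ext
  rw [bhHomVal_comp, bhHomVal_comp, bhHomVal_eqToHom, bhHomVal_eqToHom, one_mul, mul_one]
  show bhHomVal (F.map (X := (lift c).1) (Y := (lift d).1) ⟨(lift c).1.x⁻¹ * (lift d).1.x, rfl⟩)
      = bhHomVal (F.map f)
  refine (hmap _ _ _).trans ((chamberHomVal_eq _).trans ?_)
  rw [hmap, chamberHomVal_eq]
  show (lift c).1.x⁻¹ * (lift d).1.x = c.x⁻¹ * d.x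
  rw [hval, hval, mul_inv_rev, mul_assoc, ← mul_assoc (e'.x⁻¹), inv_mul_cancel, one_mul]

end DeckAux

/-- Every deck transformation `φ` of the universal covering
`F : B̃H(J) → BH(J)` is given by the action of a unique element `g W_J ∈ N(W,J)`: there is
`g ∈ Norm_W(W_J)` such that `φ (x,I) = (gx', I)` with `gx'` in the coset `g x W_I` (hence its
minimal-length representative, since `φ (x,I)` is a chamber), and `g` is unique modulo `W_J`.
Consequently `Deck(F) ≅ N(W,J) = Norm_W(W_J)/W_J`. -/
theorem BH_deck_is_normaliser_quotient (cs : CoxeterSystem M W) (J : Set B) (r : ReflRep cs V)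
    (F : Chamber cs J ⥤ BHObj cs J r)
    (hobj : ∀ c : Chamber cs J, (F.obj c).I = c.I)
    (hmap : ∀ (c d : Chamber cs J) (f : c ⟶ d), bhHomVal (F.map f) = chamberHomVal f)
    (hcov : IsGroupoidCovering F) :
    (∀ φ : Deck F, ∃ g ∈ (Subgroup.normalizer (parabolic cs J : Set W)),
      (∀ c : Chamber cs J, ((Deck.toFunctor φ).obj c).I = c.I ∧
        ((Deck.toFunctor φ).obj c).x ∈ ((g * c.x) * ·) '' (parabolic cs c.I : Set W)) ∧
      (∀ g' : W, g' ∈ (Subgroup.normalizer (parabolic cs J : Set W)) →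
        (∀ c : Chamber cs J,
          ((Deck.toFunctor φ).obj c).x ∈ ((g' * c.x) * ·) '' (parabolic cs c.I : Set W)) →
        g⁻¹ * g' ∈ parabolic cs J)) ∧
    Nonempty (Deck F ≃*
      ((Subgroup.normalizer (parabolic cs J : Set W)) ⧸
        (parabolic cs J).subgroupOf (Subgroup.normalizer (parabolic cs J : Set W)))) := by
    classical
  set e := eCh cs J with he
  have hover : ∀ φ : Deck F, Deck.toFunctor φ ⋙ F = F := fun φ => congrArg Cat.Hom.toFunctor φ.hom.w
  have hdx : ∀ (φ : Deck F) (c : Chamber cs J),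
      ((Deck.toFunctor φ).obj c).x = ((Deck.toFunctor φ).obj e).x * c.x := by
    intro φ c
    have h := over_val F hmap _ (hover φ) e c
    have he1 : e.x = 1 := rfl
    rw [he1, inv_one, one_mul] at h
    calc ((Deck.toFunctor φ).obj c).x
        = ((Deck.toFunctor φ).obj e).x *
          (((Deck.toFunctor φ).obj e).x⁻¹ * ((Deck.toFunctor φ).obj c).x) := by group
      _ = ((Deck.toFunctor φ).obj e).x * c.x := by rw [h]
  have hdI : ∀ (φ : Deck F) (c : Chamber cs J), ((Deck.toFunctor φ).obj c).I = c.I :=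
    fun φ => over_I F hobj _ (hover φ)
  have hdmem : ∀ φ : Deck F, ((Deck.toFunctor φ).obj e).x ∈ Subgroup.normalizer (parabolic cs J : Set W) :=
    fun φ => chamber_mem_normalizer _ (by rw [hdI]; rfl)
  constructor
  · intro φ
    refine ⟨((Deck.toFunctor φ).obj e).x, hdmem φ,
      fun c => ⟨hdI φ c, ⟨1, Subgroup.one_mem _, by simpa using (hdx φ c).symm⟩⟩, ?_⟩
    intro g' hg' hall
    obtain ⟨v, hv, hveq⟩ := hall e
    have hgval : ((Deck.toFunctor φ).obj e).x = g' * v := by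
      have hv3 : (g' * e.x) * v = ((Deck.toFunctor φ).obj e).x := hveq
      rw [← hv3, show e.x = 1 from rfl, mul_one]
    rw [hgval]
    have hv2 : (g' * v)⁻¹ * g' = v⁻¹ := by group
    rw [hv2]
    exact Subgroup.inv_mem _ hv
  · -- the group isomorphism
    let gmap : Deck F → Subgroup.normalizer (parabolic cs J : Set W) :=
      fun φ => ⟨((Deck.toFunctor φ).obj e).x, hdmem φ⟩
    have hcomp : ∀ φ ψ : Deck F, (Deck.toFunctor (φ * ψ)).obj e
        = (Deck.toFunctor φ).obj ((Deck.toFunctor ψ).obj e) := fun φ ψ => rfl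
    have hmul : ∀ φ ψ : Deck F, (gmap (φ * ψ) : W) = (gmap φ : W) * (gmap ψ : W) := by
      intro φ ψ
      show ((Deck.toFunctor (φ * ψ)).obj e).x = _
      rw [hcomp, hdx φ]
    have hone : ((gmap 1 : Subgroup.normalizer (parabolic cs J : Set W)) : W) = 1 := rfl
    have ginv : ∀ φ : Deck F, ((gmap φ⁻¹ : Subgroup.normalizer (parabolic cs J : Set W)) : W)
        = ((gmap φ : Subgroup.normalizer (parabolic cs J : Set W)) : W)⁻¹ := by
      intro φ
      have h := hmul φ⁻¹ φ
      rw [inv_mul_cancel, hone] at h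
      exact eq_inv_of_mul_eq_one_left h.symm
    let toQ : Deck F →
        (Subgroup.normalizer (parabolic cs J : Set W) ⧸ (parabolic cs J).subgroupOf (Subgroup.normalizer (parabolic cs J : Set W))) :=
      fun φ => QuotientGroup.mk (gmap φ)
    have toQ_mul : ∀ φ ψ, toQ (φ * ψ) = toQ φ * toQ ψ := by
      intro φ ψ
      show QuotientGroup.mk _ = QuotientGroup.mk _ * QuotientGroup.mk _
      rw [← QuotientGroup.mk_mul]
      congr 1
      exact Subtype.ext (hmul φ ψ)
    have hinj : Function.Injective toQ := by
      intro φ ψ h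
      have hmem : ((gmap φ : Subgroup.normalizer (parabolic cs J : Set W)) : W)⁻¹ *
          ((gmap ψ : Subgroup.normalizer (parabolic cs J : Set W)) : W) ∈ parabolic cs J := by
        have h2 := (QuotientGroup.eq
          (s := (parabolic cs J).subgroupOf (Subgroup.normalizer (parabolic cs J : Set W)))).mp h
        rw [Subgroup.mem_subgroupOf] at h2
        exact h2
      have hxi : (gmap (φ⁻¹ * ψ) : W) ∈ parabolic cs J := by
        rw [hmul, ginv]; exact hmem
      have hUid : Deck.toFunctor (φ⁻¹ * ψ) = 𝟭 (Chamber cs J) :=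
        functor_eq_id _ _ hxi (fun c => hdx (φ⁻¹ * ψ) c) (hdI (φ⁻¹ * ψ))
      have hxi1 : φ⁻¹ * ψ = 1 := by
        apply Iso.ext
        apply Over.OverMorphism.ext
        exact Cat.ext hUid
      exact (inv_mul_eq_one.mp hxi1)
    have hsurj : Function.Surjective toQ := by
      intro q
      obtain ⟨⟨g, hg⟩, rfl⟩ := QuotientGroup.mk_surjective q
      obtain ⟨w, hwJ, hwmin⟩ := exists_minrep cs J g
      have hg₀ : g * w ∈ Subgroup.normalizer (parabolic cs J : Set W) :=
        Subgroup.mul_mem _ hg (Subgroup.le_normalizer hwJ)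
      obtain ⟨w', hw'J, hw'min⟩ := exists_minrep cs J (g * w)⁻¹
      have hb : (g * w)⁻¹ * w' ∈ Subgroup.normalizer (parabolic cs J : Set W) :=
        Subgroup.mul_mem _ (Subgroup.inv_mem _ hg₀) (Subgroup.le_normalizer hw'J)
      let e' : Chamber cs J := ⟨g * w, J, coset_of_normalizer hg₀, hwmin⟩
      let e'' : Chamber cs J := ⟨(g * w)⁻¹ * w', J, coset_of_normalizer hb, hw'min⟩
      obtain ⟨T, hT, hTx, hTI⟩ := exists_deck_functor F hobj hmap hcov e' rfl
      obtain ⟨S, hS, hSx, hSI⟩ := exists_deck_functor F hobj hmap hcov e'' rfl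
      have hbg : ((g * w)⁻¹ * w') * (g * w) ∈ parabolic cs J := by
        have h1 := (Subgroup.mem_normalizer_iff''.mp hg₀ w').1 hw'J
        have h2 : ((g * w)⁻¹ * w') * (g * w) = (g * w)⁻¹ * w' * (g * w) := by group
        rwa [h2]
      have hgb : (g * w) * ((g * w)⁻¹ * w') ∈ parabolic cs J := by
        have h2 : (g * w) * ((g * w)⁻¹ * w') = w' := by group
        rwa [h2]
      have hTS : T ⋙ S = 𝟭 (Chamber cs J) := by
        refine functor_eq_id _ (((g * w)⁻¹ * w') * (g * w)) hbg (fun c => ?_) (fun c => ?_)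
        · show (S.obj (T.obj c)).x = _
          rw [hSx, hTx]
          show ((g * w)⁻¹ * w') * ((g * w) * c.x) = _
          group
        · show (S.obj (T.obj c)).I = _
          rw [hSI, hTI]
      have hST : S ⋙ T = 𝟭 (Chamber cs J) := by
        refine functor_eq_id _ ((g * w) * ((g * w)⁻¹ * w')) hgb (fun c => ?_) (fun c => ?_)
        · show (T.obj (S.obj c)).x = _
          rw [hTx, hSx]
          show (g * w) * (((g * w)⁻¹ * w') * c.x) = _
          group
        · show (T.obj (S.obj c)).I = _
          rw [hTI, hSI]
      let φ : Deck F :=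
        { hom := Over.homMk T.toCatHom (congrArg Functor.toCatHom hT)
          inv := Over.homMk S.toCatHom (congrArg Functor.toCatHom hS)
          hom_inv_id := Over.OverMorphism.ext (Cat.ext hTS)
          inv_hom_id := Over.OverMorphism.ext (Cat.ext hST) }
      refine ⟨φ, ?_⟩
      have hval : ((gmap φ : Subgroup.normalizer (parabolic cs J : Set W)) : W) = g * w := by
        show (T.obj e).x = g * w
        rw [hTx]
        exact mul_one _
      show QuotientGroup.mk (gmap φ) = _
      rw [QuotientGroup.eq, Subgroup.mem_subgroupOf]
      show ((gmap φ : Subgroup.normalizer (parabolic cs J : Set W)) : W)⁻¹ * g ∈ parabolic cs J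
      rw [hval]
      have h3 : (g * w)⁻¹ * g = w⁻¹ := by group
      rw [h3]
      exact Subgroup.inv_mem _ hwJ
    exact ⟨MulEquiv.mk' (Equiv.ofBijective toQ ⟨hinj, hsurj⟩) toQ_mul⟩
end

section
/- Let J ⊆ Γ₀ with W_J finite, and let a ∉ J with W_{J+a} finite. Let w_J and w_{J+a} be the longest elements of W_J and W_{J+a}. Then v := w_J w_{J+a} satisfies ℓ(v) = ℓ(w_{J+a}) − ℓ(w_J), and conjugation by v maps W_K onto W_J where K = (J + a) − ι_{J+a}(a), with ι_{J+a} the diagram automorphism induced by w_{J+a} (w_{J+a}·α_k = −α_{ι_{J+a}(k)}). -/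
open CoxeterSystem

open CoxeterSystem List

namespace CoxWall

open scoped Classical

variable {B : Type*} {W : Type*} [Group W] {M : CoxeterMatrix B} (cs : CoxeterSystem M W)

/-- The function underlying the permutation `eta i` of `W × ZMod 2`. -/
noncomputable def etaFun (i : B) : W × ZMod 2 → W × ZMod 2 :=
  fun p => (cs.simple i * p.1 * cs.simple i, p.2 + if p.1 = cs.simple i then 1 else 0)

lemma etaFun_invol (i : B) (p : W × ZMod 2) : etaFun cs i (etaFun cs i p) = p := by
  obtain ⟨w, ε⟩ := p
  have h1 : cs.simple i * (cs.simple i * w * cs.simple i) * cs.simple i = w := by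
    simp only [mul_assoc, cs.simple_mul_simple_self, mul_one]
    rw [← mul_assoc, cs.simple_mul_simple_self, one_mul]
  have h2 : (cs.simple i * w * cs.simple i = cs.simple i) ↔ (w = cs.simple i) := by
    constructor
    · intro h
      have := congrArg (fun x => cs.simple i * x * cs.simple i) h
      simpa [h1, mul_assoc, cs.simple_mul_simple_self] using this
    · rintro rfl; simp [cs.simple_mul_simple_self]
  simp only [etaFun, h1, h2]
  refine Prod.ext rfl ?_
  by_cases hw : w = cs.simple i
  · simp only [hw, if_pos rfl, add_assoc]
    have : (1 + 1 : ZMod 2) = 0 := by decide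
    simp [this]
  · simp [hw]

/-- The permutation of `W × ZMod 2` associated to the simple reflection `i`. -/
noncomputable def eta (i : B) : Equiv.Perm (W × ZMod 2) :=
  ⟨etaFun cs i, etaFun cs i, fun p => etaFun_invol cs i p, fun p => etaFun_invol cs i p⟩

lemma eta_apply (i : B) (w : W) (ε : ZMod 2) :
    eta cs i (w, ε) = (cs.simple i * w * cs.simple i, ε + if w = cs.simple i then 1 else 0) := rfl

end CoxWall

namespace CoxWall

variable {B : Type*} {W : Type*} [Group W] {M : CoxeterMatrix B} (cs : CoxeterSystem M W)

lemma zmod2_add_self : ∀ x : ZMod 2, x + x = 0 := by decide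

lemma zmod2_eq_zero_of_ne_one : ∀ x : ZMod 2, x ≠ 1 → x = 0 := by decide

lemma sum_range_pair (g : ℕ → ZMod 2) (k : ℕ) :
    ∑ n ∈ Finset.range (2*k), g n = ∑ r ∈ Finset.range k, (g (2*r) + g (2*r+1)) := by
  induction k with
  | zero => simp
  | succ k ih =>
    have h : 2*(k+1) = (2*k+1)+1 := by ring
    rw [h, Finset.sum_range_succ, Finset.sum_range_succ, Finset.sum_range_succ, ih, add_assoc]

lemma sum_range_add_zmod (g : ℕ → ZMod 2) (a b : ℕ) :
    ∑ n ∈ Finset.range (a+b), g n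
      = ∑ n ∈ Finset.range a, g n + ∑ n ∈ Finset.range b, g (a+n) := by
  induction b with
  | zero => simp
  | succ b ih =>
    rw [Nat.add_succ, Finset.sum_range_succ, Finset.sum_range_succ, ih, add_assoc]

section keylemmas

variable (i j : B)

lemma sw (r : ℤ) :
    cs.simple j * (cs.simple i * cs.simple j) ^ (-r) * cs.simple j
      = (cs.simple i * cs.simple j) ^ r := by
  set p := cs.simple i * cs.simple j with hp
  have hconj : cs.simple j * p⁻¹ * (cs.simple j)⁻¹ = p := by
    rw [hp, mul_inv_rev, cs.inv_simple, cs.inv_simple, cs.simple_mul_simple_cancel_left]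
  calc cs.simple j * p ^ (-r) * cs.simple j
      = cs.simple j * (p⁻¹) ^ r * (cs.simple j)⁻¹ := by rw [zpow_neg, inv_zpow, cs.inv_simple]
    _ = (cs.simple j * p⁻¹ * (cs.simple j)⁻¹) ^ r := by rw [conj_zpow]
    _ = p ^ r := by rw [hconj]

lemma key1 (r : ℤ) :
    (cs.simple i * cs.simple j) ^ r * cs.simple j * (cs.simple i * cs.simple j) ^ (-r)
      = (cs.simple i * cs.simple j) ^ (2*r) * cs.simple j := by
  set p := cs.simple i * cs.simple j with hp
  calc p ^ r * cs.simple j * p ^ (-r)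
      = p ^ r * (cs.simple j * p ^ (-r) * cs.simple j) * cs.simple j := by
        simp only [mul_assoc, cs.simple_mul_simple_self, mul_one]
    _ = p ^ r * p ^ r * cs.simple j := by rw [sw]
    _ = p ^ (2*r) * cs.simple j := by rw [← zpow_add, two_mul]

lemma key2 (r : ℤ) :
    (cs.simple i * cs.simple j) ^ r * (cs.simple j * cs.simple i * cs.simple j)
        * (cs.simple i * cs.simple j) ^ (-r)
      = (cs.simple i * cs.simple j) ^ (2*r-1) * cs.simple j := by
  set p := cs.simple i * cs.simple j with hp
  have h1 : cs.simple j * cs.simple i * cs.simple j = p⁻¹ * cs.simple j := by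
    rw [hp, mul_inv_rev, cs.inv_simple, cs.inv_simple]
  rw [h1]
  calc p ^ r * (p⁻¹ * cs.simple j) * p ^ (-r)
      = p ^ (r-1) * (cs.simple j * p ^ (-r) * cs.simple j) * cs.simple j := by
        rw [zpow_sub_one]
        simp only [mul_assoc, cs.simple_mul_simple_self, mul_one]
    _ = p ^ (r-1) * p ^ r * cs.simple j := by rw [sw]
    _ = p ^ (2*r-1) * cs.simple j := by rw [← zpow_add, show r-1+r = 2*r-1 by ring]

end keylemmas

end CoxWall

namespace CoxWall

open scoped Classical

variable {B : Type*} {W : Type*} [Group W] {M : CoxeterMatrix B} (cs : CoxeterSystem M W)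

theorem eta_liftable : M.IsLiftable (fun i => eta cs i) := by
  intro i j
  rcases Nat.eq_zero_or_pos (M i j) with h0 | hpos
  · rw [h0, pow_zero]
  set m := M i j with hm
  set p := cs.simple i * cs.simple j with hp
  have hpm : p ^ (m:ℤ) = 1 := by
    rw [zpow_natCast, hp, hm]; exact cs.simple_mul_simple_pow i j
  have hiff : ∀ (k : ℤ) (w x : W), (p ^ k * w * p ^ (-k) = x) ↔ (w = p ^ (-k) * x * p ^ k) := by
    intro k w x
    constructor
    · intro h; rw [← h]; group
    · intro h; rw [h]; group
  have hsand : ∀ Y Z : W, (cs.simple j * Y * cs.simple j = Z) ↔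
      (Y = cs.simple j * Z * cs.simple j) := by
    intro Y Z
    constructor
    · intro h
      rw [← h]
      simp only [mul_assoc, cs.simple_mul_simple_self, mul_one]
      rw [cs.simple_mul_simple_cancel_left]
    · intro h
      rw [h]
      simp only [mul_assoc, cs.simple_mul_simple_self, mul_one]
      rw [cs.simple_mul_simple_cancel_left]
  have hpow : ∀ (k : ℕ) (w : W) (ε : ZMod 2),
      ((eta cs i * eta cs j) ^ k) (w, ε) =
        (p ^ (k:ℤ) * w * p ^ (-(k:ℤ)),
          ε + ∑ r ∈ Finset.range k,
            ((if w = p ^ (-(2*(r:ℤ))) * cs.simple j then (1:ZMod 2) else 0)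
              + (if w = p ^ (-(2*(r:ℤ))-1) * cs.simple j then (1:ZMod 2) else 0))) := by
    intro k
    induction k with
    | zero =>
      intro w ε
      simp only [pow_zero, Equiv.Perm.one_apply, Nat.cast_zero, neg_zero, zpow_zero,
        one_mul, mul_one, Finset.range_zero, Finset.sum_empty, add_zero]
    | succ k ih =>
      intro w ε
      rw [pow_succ', Equiv.Perm.mul_apply, ih w ε, Equiv.Perm.mul_apply]
      set X := p ^ (k:ℤ) * w * p ^ (-(k:ℤ)) with hX
      rw [eta_apply, eta_apply]
      have hpinv : p⁻¹ = cs.simple j * cs.simple i := by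
        rw [hp, mul_inv_rev, cs.inv_simple, cs.inv_simple]
      have hfirst : cs.simple i * (cs.simple j * X * cs.simple j) * cs.simple i
          = p ^ ((k:ℤ)+1) * w * p ^ (-((k:ℤ)+1)) := by
        calc cs.simple i * (cs.simple j * X * cs.simple j) * cs.simple i
            = p * X * p⁻¹ := by rw [hpinv, hp]; simp only [mul_assoc]
          _ = p ^ ((k:ℤ)+1) * w * p ^ (-((k:ℤ)+1)) := by
              rw [hX, show ((k:ℤ)+1) = 1 + (k:ℤ) by ring, zpow_add, zpow_one,
                show (-(1 + (k:ℤ))) = -(k:ℤ) + -1 by ring, zpow_add, zpow_neg_one]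
              simp only [mul_assoc]
      have hcond1 : (X = cs.simple j) ↔ (w = p ^ (-(2*(k:ℤ))) * cs.simple j) := by
        rw [hX, hiff]
        have h1 := key1 cs i j (-(k:ℤ))
        rw [← hp, neg_neg] at h1
        rw [h1, show (2 * -(k:ℤ)) = -(2*(k:ℤ)) by ring]
      have hcond2 : (cs.simple j * X * cs.simple j = cs.simple i)
          ↔ (w = p ^ (-(2*(k:ℤ))-1) * cs.simple j) := by
        rw [hsand, hX, hiff]
        have h2 := key2 cs i j (-(k:ℤ))
        rw [← hp, neg_neg] at h2
        rw [h2, show (2 * -(k:ℤ) - 1) = -(2*(k:ℤ))-1 by ring]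
      refine Prod.ext ?_ ?_
      · have hcast : ((k+1:ℕ):ℤ) = (k:ℤ)+1 := by push_cast; ring
        show cs.simple i * (cs.simple j * X * cs.simple j) * cs.simple i = _
        rw [hfirst, hcast]
      · show (ε + ∑ r ∈ Finset.range k, _) + _ + _ = _
        rw [if_congr hcond1 rfl rfl, if_congr hcond2 rfl rfl, Finset.sum_range_succ]
        ring
  show ((eta cs i * eta cs j) ^ m) = 1
  apply Equiv.ext
  rintro ⟨w, ε⟩
  have h2 : (1 : Equiv.Perm (W × ZMod 2)) (w, ε) = (w, ε) := rfl
  rw [hpow m w ε, h2]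
  have hδ : ∀ e : ℤ, p ^ (e - (m:ℤ)) = p ^ e := by
    intro e
    rw [zpow_sub, hpm]
    group
  set g : ℕ → ZMod 2 := fun n => if w = p ^ (-(n:ℤ)) * cs.simple j then (1:ZMod 2) else 0 with hg
  have hterm : ∀ r : ℕ,
      ((if w = p ^ (-(2*(r:ℤ))) * cs.simple j then (1:ZMod 2) else 0)
        + (if w = p ^ (-(2*(r:ℤ))-1) * cs.simple j then (1:ZMod 2) else 0))
      = g (2*r) + g (2*r+1) := by
    intro r
    have e1 : (-(2*(r:ℤ))) = (-(((2*r:ℕ)):ℤ)) := by push_cast; ring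
    have e2 : (-(2*(r:ℤ))-1) = (-(((2*r+1:ℕ)):ℤ)) := by push_cast; ring
    rw [e2, e1]
  have hgper : ∀ n : ℕ, g (m + n) = g n := by
    intro n
    have e3 : (-((m+n:ℕ):ℤ)) = (-(n:ℤ)) - (m:ℤ) := by push_cast; ring
    show (if w = p ^ (-((m+n:ℕ):ℤ)) * cs.simple j then (1:ZMod 2) else 0) = _
    rw [e3, hδ]
  have hsum0 : (∑ r ∈ Finset.range m,
      ((if w = p ^ (-(2*(r:ℤ))) * cs.simple j then (1:ZMod 2) else 0)
        + (if w = p ^ (-(2*(r:ℤ))-1) * cs.simple j then (1:ZMod 2) else 0))) = 0 := by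
    rw [Finset.sum_congr rfl (fun r _ => hterm r), ← sum_range_pair g m, two_mul,
      sum_range_add_zmod g m m, Finset.sum_congr rfl (fun n _ => hgper n),
      ← Finset.sum_add_distrib]
    exact Finset.sum_eq_zero (fun n _ => zmod2_add_self _)
  refine Prod.ext ?_ ?_
  · show p ^ (m:ℤ) * w * p ^ (-(m:ℤ)) = w
    rw [hpm, zpow_neg, hpm, inv_one, one_mul, mul_one]
  · show ε + _ = ε
    rw [hsum0, add_zero]

end CoxWall

namespace CoxWall

open scoped Classical
open CoxeterSystem List

variable {B : Type*} {W : Type*} [Group W] {M : CoxeterMatrix B} (cs : CoxeterSystem M W)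

/-- The permutation representation of `W` on `W × ZMod 2`. -/
noncomputable def FF : W →* Equiv.Perm (W × ZMod 2) :=
  cs.lift ⟨fun i => eta cs i, eta_liftable cs⟩

lemma FF_simple (i : B) : FF cs (cs.simple i) = eta cs i :=
  cs.lift_apply_simple (eta_liftable cs) i

lemma rightInvSeq_cons (i : B) (ω : List B) :
    cs.rightInvSeq (i :: ω) =
      ((cs.wordProd ω)⁻¹ * cs.simple i * cs.wordProd ω) :: cs.rightInvSeq ω := rfl

lemma FF_wordProd (ω : List B) (t : W) (ε : ZMod 2) :
    (FF cs (cs.wordProd ω)) (t, ε) =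
      (cs.wordProd ω * t * (cs.wordProd ω)⁻¹,
        ε + (((cs.rightInvSeq ω).count t : ℕ) : ZMod 2)) := by
  induction ω generalizing ε with
  | nil =>
    simp only [wordProd_nil, map_one, Equiv.Perm.one_apply, rightInvSeq_nil, List.count_nil,
      Nat.cast_zero, add_zero, one_mul, inv_one, mul_one]
  | cons i ω ih =>
    rw [cs.wordProd_cons, map_mul, Equiv.Perm.mul_apply, ih, FF_simple, eta_apply,
      rightInvSeq_cons]
    set u := cs.wordProd ω with hu
    refine Prod.ext ?_ ?_
    · show cs.simple i * (u * t * u⁻¹) * cs.simple i = _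
      rw [mul_inv_rev, cs.inv_simple]
      simp only [mul_assoc]
    · show (ε + _) + _ = _
      rw [List.count_cons]
      have hcnd : (u * t * u⁻¹ = cs.simple i) ↔ (u⁻¹ * cs.simple i * u = t) := by
        constructor
        · intro h; rw [← h]; group
        · intro h; rw [← h]; group
      rw [if_congr hcnd rfl rfl]
      push_cast
      rw [add_assoc]
      congr 1
      by_cases hc : u⁻¹ * cs.simple i * u = t
      · simp [hc]
      · simp [hc]
/-- The parity cocycle. -/
noncomputable def nn (w t : W) : ZMod 2 := ((FF cs w) (t, 0)).2

lemma FF_apply (w t : W) (ε : ZMod 2) :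
    (FF cs w) (t, ε) = (w * t * w⁻¹, ε + nn cs w t) := by
  obtain ⟨ω, rfl⟩ := cs.wordProd_surjective w
  rw [FF_wordProd, nn, FF_wordProd]
  rw [zero_add]

lemma nn_wordProd (ω : List B) (t : W) :
    nn cs (cs.wordProd ω) t = (((cs.rightInvSeq ω).count t : ℕ) : ZMod 2) := by
  rw [nn, FF_wordProd, zero_add]

lemma nn_cocycle (x y t : W) : nn cs (x * y) t = nn cs y t + nn cs x (y * t * y⁻¹) := by
  have h1 : (FF cs (x*y)) (t, 0) = (FF cs x) ((FF cs y) (t, 0)) := by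
    rw [map_mul, Equiv.Perm.mul_apply]
  rw [FF_apply, FF_apply, FF_apply] at h1
  have := congrArg Prod.snd h1
  simpa [zero_add] using this

lemma nn_simple_self (i : B) : nn cs (cs.simple i) (cs.simple i) = 1 := by
  rw [nn, FF_simple, eta_apply]
  simp

lemma zmod2_cases : ∀ x : ZMod 2, x = 0 ∨ x = 1 := by decide

lemma zmod2_eq_of_add_eq_zero : ∀ x y : ZMod 2, x + y = 0 → y = x := by decide

lemma zmod2_sandwich : ∀ x : ZMod 2, x + 1 + x = 1 := by decide

lemma nn_refl_self {t : W} (ht : cs.IsReflection t) : nn cs t t = 1 := by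
  obtain ⟨v, i, rfl⟩ := ht
  set t := v * cs.simple i * v⁻¹ with hdef
  have h1 : (FF cs v) (cs.simple i, 0) = (t, nn cs v (cs.simple i)) := by
    rw [FF_apply cs v (cs.simple i) 0, zero_add]
  have h2 : (FF cs v⁻¹) (t, nn cs v (cs.simple i)) = (cs.simple i, 0) := by
    have h2' : (FF cs v⁻¹) ((FF cs v) (cs.simple i, 0)) = (cs.simple i, 0) := by
      rw [← Equiv.Perm.mul_apply, ← map_mul, inv_mul_cancel, map_one, Equiv.Perm.one_apply]
    rwa [h1] at h2'
  have h3 : nn cs v⁻¹ t = nn cs v (cs.simple i) := by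
    rw [FF_apply] at h2
    have h4 := congrArg Prod.snd h2
    simp only at h4
    exact zmod2_eq_of_add_eq_zero _ _ h4
  have hsi : v⁻¹ * t * (v⁻¹)⁻¹ = cs.simple i := by rw [hdef]; group
  have hsss : cs.simple i * cs.simple i * cs.simple i = cs.simple i := by
    rw [cs.simple_mul_simple_self, one_mul]
  have hmain : (FF cs t) (t, 0) = (t, 1) := by
    have e1 : FF cs t = FF cs v * FF cs (cs.simple i) * FF cs v⁻¹ := by
      rw [← map_mul, ← map_mul, hdef]
    have hsplit : (FF cs t) (t, 0)
        = (FF cs v) ((FF cs (cs.simple i)) ((FF cs v⁻¹) (t, (0:ZMod 2)))) := by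
      rw [e1, Equiv.Perm.mul_apply, Equiv.Perm.mul_apply]
    rw [hsplit, FF_apply cs v⁻¹ t 0, zero_add, hsi, FF_simple, eta_apply, if_pos rfl, hsss,
      FF_apply cs v (cs.simple i) (nn cs v⁻¹ t + 1)]
    refine Prod.ext ?_ ?_
    · show v * cs.simple i * v⁻¹ = t
      exact hdef.symm
    · show nn cs v⁻¹ t + 1 + nn cs v (cs.simple i) = 1
      rw [h3]
      exact zmod2_sandwich _
  rw [nn, hmain]

lemma isRightInversion_of_nn_eq_one {t : W} (w : W) (h : nn cs w t = 1) :
    cs.IsRightInversion w t := by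
  obtain ⟨ω, hred, hw⟩ := cs.exists_reduced_word' w
  subst hw
  rw [nn_wordProd] at h
  have hcount : (cs.rightInvSeq ω).count t ≠ 0 := by
    intro h0
    rw [h0] at h
    simp at h
  have hmem : t ∈ cs.rightInvSeq ω := by
    rw [← List.count_pos_iff]
    omega
  exact cs.isRightInversion_of_mem_rightInvSeq hred hmem

lemma nn_eq_one_iff {t : W} (ht : cs.IsReflection t) (w : W) :
    nn cs w t = 1 ↔ cs.IsRightInversion w t := by
  constructor
  · exact isRightInversion_of_nn_eq_one cs w
  · intro hinv
    have hwt : w = (w * t) * t := by rw [mul_assoc, ht.mul_self, mul_one]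
    have h0 : nn cs (w*t) t = 0 := by
      rcases zmod2_cases (nn cs (w*t) t) with h | h
      · exact h
      · exfalso
        have h2 := (isRightInversion_of_nn_eq_one cs (w*t) h).2
        rw [mul_assoc, ht.mul_self, mul_one] at h2
        exact absurd hinv.2 (by omega)
    have httt : t * t * t⁻¹ = t := by rw [ht.mul_self, one_mul, ht.inv]
    calc nn cs w t = nn cs ((w*t)*t) t := by rw [← hwt]
      _ = nn cs t t + nn cs (w*t) (t*t*t⁻¹) := nn_cocycle cs (w*t) t t
      _ = 1 + 0 := by rw [httt, nn_refl_self cs ht, h0]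
      _ = 1 := by decide

lemma nn_eq_zero_iff {t : W} (ht : cs.IsReflection t) (w : W) :
    nn cs w t = 0 ↔ ¬ cs.IsRightInversion w t := by
  rw [← nn_eq_one_iff cs ht w]
  rcases zmod2_cases (nn cs w t) with h | h <;> rw [h] <;> simp

/-- **Strong exchange**. -/
theorem mem_rightInvSeq_of_isRightInversion {ω : List B} (hred : cs.IsReduced ω) {t : W}
    (hinv : cs.IsRightInversion (cs.wordProd ω) t) : t ∈ cs.rightInvSeq ω := by
  have h1 : nn cs (cs.wordProd ω) t = 1 := (nn_eq_one_iff cs hinv.1 _).mpr hinv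
  rw [nn_wordProd] at h1
  have hcount : (cs.rightInvSeq ω).count t ≠ 0 := by
    intro h0
    rw [h0] at h1
    simp at h1
  rw [← List.count_pos_iff]
  omega

end CoxWall

namespace CoxWall

open scoped Classical
open CoxeterSystem List

variable {B : Type*} {W : Type*} [Group W] {M : CoxeterMatrix B} (cs : CoxeterSystem M W)

lemma wordProd_mem_parabolic {L : Set B} {ω : List B} (h : ∀ i ∈ ω, i ∈ L) :
    cs.wordProd ω ∈ parabolic cs L := by
  induction ω with
  | nil => rw [cs.wordProd_nil]; exact one_mem _
  | cons i ω ih =>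
    rw [cs.wordProd_cons]
    exact mul_mem (Subgroup.subset_closure ⟨i, h i (List.mem_cons_self), rfl⟩)
      (ih fun k hk => h k (List.mem_cons_of_mem i hk))

lemma simple_mem_parabolic {L : Set B} {i : B} (h : i ∈ L) : cs.simple i ∈ parabolic cs L :=
  Subgroup.subset_closure ⟨i, h, rfl⟩

lemma mem_parabolic_iff {L : Set B} {w : W} :
    w ∈ parabolic cs L ↔ ∃ ω : List B, (∀ i ∈ ω, i ∈ L) ∧ w = cs.wordProd ω := by
  constructor
  · intro hw
    induction hw using Subgroup.closure_induction with
    | mem x hx =>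
      obtain ⟨i, hi, rfl⟩ := hx
      exact ⟨[i], by simpa using hi, (cs.wordProd_singleton i).symm⟩
    | one => exact ⟨[], by simp, (cs.wordProd_nil).symm⟩
    | mul x y hx hy ihx ihy =>
      obtain ⟨ω₁, h1, rfl⟩ := ihx
      obtain ⟨ω₂, h2, rfl⟩ := ihy
      refine ⟨ω₁ ++ ω₂, ?_, (cs.wordProd_append ω₁ ω₂).symm⟩
      intro i hi
      rcases List.mem_append.mp hi with h | h
      · exact h1 i h
      · exact h2 i h
    | inv x hx ih =>
      obtain ⟨ω, h1, rfl⟩ := ih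
      exact ⟨ω.reverse, fun i hi => h1 i (List.mem_reverse.mp hi),
        (cs.wordProd_reverse ω).symm⟩
  · rintro ⟨ω, h, rfl⟩
    exact wordProd_mem_parabolic cs h

lemma exists_reduced_word_subset_aux (L : Set B) :
    ∀ (n : ℕ) (ω : List B), ω.length ≤ n → (∀ i ∈ ω, i ∈ L) →
      ∃ ω' : List B, (∀ i ∈ ω', i ∈ L) ∧ cs.IsReduced ω' ∧ cs.wordProd ω' = cs.wordProd ω := by
  intro n
  induction n with
  | zero =>
    intro ω hlen hsub
    have hnil : ω = [] := List.eq_nil_of_length_eq_zero (Nat.le_zero.mp hlen)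
    subst hnil
    exact ⟨[], by simp, by simp [CoxeterSystem.IsReduced], rfl⟩
  | succ n ih =>
    intro ω hlen hsub
    by_cases hred : cs.IsReduced ω
    · exact ⟨ω, hsub, hred, rfl⟩
    · have hex : ∃ k, ¬ cs.IsReduced (ω.take k) := ⟨ω.length, by rwa [List.take_length]⟩
      have hspec := Nat.find_spec hex
      obtain ⟨k, hk0⟩ : ∃ k, Nat.find hex = k + 1 := by
        refine ⟨Nat.find hex - 1, ?_⟩
        have : Nat.find hex ≠ 0 := by
          intro h0
          rw [h0] at hspec
          exact hspec (by simp [CoxeterSystem.IsReduced])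
        omega
      rw [hk0] at hspec
      have hredk : cs.IsReduced (ω.take k) :=
        not_not.mp (Nat.find_min hex (by omega))
      have hklen : k < ω.length := by
        by_contra hge
        push_neg at hge
        rw [List.take_of_length_le hge] at hredk
        exact hred hredk
      have htake : ω.take (k+1) = ω.take k ++ [ω[k]] := by
        rw [List.take_succ, List.getElem?_eq_getElem hklen]
        rfl
      have hlen_take : (ω.take k).length = k := by
        rw [List.length_take]; omega
      have hprod : cs.wordProd (ω.take (k+1))
          = cs.wordProd (ω.take k) * cs.simple (ω[k]) := by
        rw [htake, cs.wordProd_append, cs.wordProd_singleton]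
      have hlredk : cs.length (cs.wordProd (ω.take k)) = k := by
        have := hredk
        rwa [CoxeterSystem.IsReduced, hlen_take] at this
      have hdesc : cs.length (cs.wordProd (ω.take k) * cs.simple (ω[k]))
          < cs.length (cs.wordProd (ω.take k)) := by
        rcases cs.length_mul_simple (cs.wordProd (ω.take k)) (ω[k]) with h | h
        · exfalso
          apply hspec
          show cs.length (cs.wordProd (ω.take (k+1))) = (ω.take (k+1)).length
          rw [hprod, h, List.length_take, hlredk]
          omega
        · omega
      have hinv : cs.IsRightInversion (cs.wordProd (ω.take k)) (cs.simple (ω[k])) :=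
        ⟨cs.isReflection_simple _, hdesc⟩
      have hmem := mem_rightInvSeq_of_isRightInversion cs hredk hinv
      obtain ⟨j, hj, hval⟩ := List.mem_iff_getElem.mp hmem
      have hjlen : j < (ω.take k).length := by
        rwa [cs.length_rightInvSeq] at hj
      have herase : cs.wordProd (ω.take k) * cs.simple (ω[k])
          = cs.wordProd ((ω.take k).eraseIdx j) := by
        have h5 := cs.wordProd_mul_getD_rightInvSeq (ω.take k) j
        rwa [List.getD_eq_getElem _ 1 hj, hval] at h5
      have hprodeq : cs.wordProd ((ω.take k).eraseIdx j ++ ω.drop (k+1))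
          = cs.wordProd ω := by
        conv_rhs => rw [← List.take_append_drop (k+1) ω]
        rw [cs.wordProd_append, cs.wordProd_append, hprod, herase]
      have hsub' : ∀ x ∈ (ω.take k).eraseIdx j ++ ω.drop (k+1), x ∈ L := by
        intro x hx
        rcases List.mem_append.mp hx with h | h
        · exact hsub x ((ω.take_sublist k).subset
            (((ω.take k).eraseIdx_sublist j).subset h))
        · exact hsub x ((ω.drop_sublist (k+1)).subset h)
      have hlen' : ((ω.take k).eraseIdx j ++ ω.drop (k+1)).length ≤ n := by
        have h6 := List.length_eraseIdx_add_one hjlen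
        rw [List.length_append, List.length_drop]
        omega
      obtain ⟨ω'', h1, h2, h3⟩ := ih _ hlen' hsub'
      exact ⟨ω'', h1, h2, by rw [h3, hprodeq]⟩

lemma exists_reduced_word_subset {L : Set B} {w : W} (hw : w ∈ parabolic cs L) :
    ∃ ω : List B, (∀ i ∈ ω, i ∈ L) ∧ cs.IsReduced ω ∧ w = cs.wordProd ω := by
  obtain ⟨ω, hsub, rfl⟩ := (mem_parabolic_iff cs).mp hw
  obtain ⟨ω', h1, h2, h3⟩ := exists_reduced_word_subset_aux cs L ω.length ω le_rfl hsub
  exact ⟨ω', h1, h2, h3.symm⟩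

lemma eq_simple_of_mem_parabolic_of_length_one {L : Set B} {w : W}
    (hw : w ∈ parabolic cs L) (h1 : cs.length w = 1) : ∃ m ∈ L, w = cs.simple m := by
  obtain ⟨ω, hsub, hred, rfl⟩ := exists_reduced_word_subset cs hw
  have hl : ω.length = 1 := by rw [← hred]; exact h1
  obtain ⟨a, rfl⟩ := List.length_eq_one_iff.mp hl
  exact ⟨a, hsub a (List.mem_singleton_self a), cs.wordProd_singleton a⟩

lemma rightInvSeq_mem_parabolic {L : Set B} {ω : List B} (hsub : ∀ i ∈ ω, i ∈ L) {t : W}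
    (ht : t ∈ cs.rightInvSeq ω) : t ∈ parabolic cs L := by
  induction ω with
  | nil => simp at ht
  | cons i ω ih =>
    rw [rightInvSeq_cons] at ht
    rcases List.mem_cons.mp ht with h | h
    · subst h
      have hu : cs.wordProd ω ∈ parabolic cs L :=
        wordProd_mem_parabolic cs (fun x hx => hsub x (List.mem_cons_of_mem i hx))
      exact mul_mem (mul_mem (inv_mem hu)
        (simple_mem_parabolic cs (hsub i (List.mem_cons_self)))) hu
    · exact ih (fun x hx => hsub x (List.mem_cons_of_mem i hx)) h

/-- The set of right inversions of `w`. -/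
def invSet (w : W) : Set W := {t | cs.IsRightInversion w t}

lemma invSet_eq_toFinset {ω : List B} (hred : cs.IsReduced ω) :
    invSet cs (cs.wordProd ω) = ↑(cs.rightInvSeq ω).toFinset := by
  ext t
  simp only [invSet, Set.mem_setOf_eq, Finset.coe_sort_coe, List.coe_toFinset,
    List.mem_toFinset, Set.mem_setOf_eq]
  constructor
  · exact fun h => mem_rightInvSeq_of_isRightInversion cs hred h
  · exact fun h => cs.isRightInversion_of_mem_rightInvSeq hred h

lemma invSet_finite (w : W) : (invSet cs w).Finite := by
  obtain ⟨ω, hred, rfl⟩ := cs.exists_reduced_word' w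
  rw [invSet_eq_toFinset cs hred]
  exact (cs.rightInvSeq ω).toFinset.finite_toSet

lemma ncard_invSet (w : W) : (invSet cs w).ncard = cs.length w := by
  obtain ⟨ω, hred, rfl⟩ := cs.exists_reduced_word' w
  rw [invSet_eq_toFinset cs hred, Set.ncard_coe_finset,
    List.toFinset_card_of_nodup (CoxeterSystem.IsReduced.nodup_rightInvSeq cs hred),
    cs.length_rightInvSeq]
  exact hred.symm

/-- The set of reflections lying in the parabolic subgroup `W_L`. -/
def LRefl (L : Set B) : Set W := {t | cs.IsReflection t ∧ t ∈ parabolic cs L}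

lemma invSet_subset_LRefl {L : Set B} {w : W} (hw : w ∈ parabolic cs L) :
    invSet cs w ⊆ LRefl cs L := by
  obtain ⟨ω, hsub, hred, rfl⟩ := exists_reduced_word_subset cs hw
  intro t ht
  have hmem := mem_rightInvSeq_of_isRightInversion cs hred ht
  exact ⟨ht.1, rightInvSeq_mem_parabolic cs hsub hmem⟩

end CoxWall

namespace CoxWall

open scoped Classical
open CoxeterSystem List

variable {B : Type*} {W : Type*} [Group W] {M : CoxeterMatrix B} (cs : CoxeterSystem M W)

section Longest

variable {L : Set B} {w₀ : W}

lemma LRefl_subset_invSet (hmem : w₀ ∈ parabolic cs L)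
    (hmax : ∀ u ∈ parabolic cs L, cs.length u ≤ cs.length w₀) :
    LRefl cs L ⊆ invSet cs w₀ := by
  rintro t ⟨hrefl, htL⟩
  refine ⟨hrefl, ?_⟩
  have hle : cs.length (w₀ * t) ≤ cs.length w₀ := hmax _ (mul_mem hmem htL)
  have hne : cs.length (w₀ * t) ≠ cs.length w₀ := hrefl.length_mul_left_ne w₀
  omega

lemma invSet_longest_eq (hmem : w₀ ∈ parabolic cs L)
    (hmax : ∀ u ∈ parabolic cs L, cs.length u ≤ cs.length w₀) :
    invSet cs w₀ = LRefl cs L :=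
  le_antisymm (invSet_subset_LRefl cs hmem) (LRefl_subset_invSet cs hmem hmax)

lemma LRefl_finite (hfin : ((parabolic cs L : Set W)).Finite) : (LRefl cs L).Finite :=
  hfin.subset (fun _ ht => ht.2)

lemma length_longest_mul (hfin : ((parabolic cs L : Set W)).Finite)
    (hmem : w₀ ∈ parabolic cs L)
    (hmax : ∀ u ∈ parabolic cs L, cs.length u ≤ cs.length w₀)
    (u : W) (hu : u ∈ parabolic cs L) :
    cs.length (w₀ * u) + cs.length u = cs.length w₀ := by
  have hkey : invSet cs (w₀ * u) = LRefl cs L \ invSet cs u := by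
    ext t
    constructor
    · intro ht
      have htL : t ∈ LRefl cs L := invSet_subset_LRefl cs (mul_mem hmem hu) ht
      refine ⟨htL, ?_⟩
      intro htu
      have h1 : nn cs u t = 1 := (nn_eq_one_iff cs ht.1 u).mpr htu
      have h2 : nn cs w₀ (u * t * u⁻¹) = 1 := by
        apply (nn_eq_one_iff cs (ht.1.conj u) w₀).mpr
        apply LRefl_subset_invSet cs hmem hmax
        exact ⟨ht.1.conj u, mul_mem (mul_mem hu htL.2) (inv_mem hu)⟩
      have h3 : nn cs (w₀ * u) t = 1 := (nn_eq_one_iff cs ht.1 _).mpr ht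
      rw [nn_cocycle, h1, h2] at h3
      exact absurd h3 (by decide)
    · rintro ⟨⟨hrefl, htL⟩, hnot⟩
      have h1 : nn cs u t = 0 := (nn_eq_zero_iff cs hrefl u).mpr hnot
      have h2 : nn cs w₀ (u * t * u⁻¹) = 1 := by
        apply (nn_eq_one_iff cs (hrefl.conj u) w₀).mpr
        apply LRefl_subset_invSet cs hmem hmax
        exact ⟨hrefl.conj u, mul_mem (mul_mem hu htL) (inv_mem hu)⟩
      apply isRightInversion_of_nn_eq_one
      rw [nn_cocycle, h1, h2]
      decide
  have hsub : invSet cs u ⊆ LRefl cs L := invSet_subset_LRefl cs hu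
  have hcard := congrArg Set.ncard hkey
  rw [ncard_invSet, Set.ncard_diff hsub (invSet_finite cs u)] at hcard
  have hLR : (LRefl cs L).ncard = cs.length w₀ := by
    rw [← invSet_longest_eq cs hmem hmax, ncard_invSet]
  have hu' : (invSet cs u).ncard = cs.length u := ncard_invSet cs u
  have hle : cs.length u ≤ cs.length w₀ := hmax u hu
  omega

lemma longest_unique (hfin : ((parabolic cs L : Set W)).Finite)
    (hmem : w₀ ∈ parabolic cs L)
    (hmax : ∀ u ∈ parabolic cs L, cs.length u ≤ cs.length w₀)
    {x : W} (hx : x ∈ parabolic cs L) (hlen : cs.length x = cs.length w₀) : x = w₀ := by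
  have h := length_longest_mul cs hfin hmem hmax (w₀⁻¹ * x) (mul_mem (inv_mem hmem) hx)
  rw [mul_inv_cancel_left] at h
  have h0 : cs.length (w₀⁻¹ * x) = 0 := by omega
  have h1 : w₀⁻¹ * x = 1 := cs.length_eq_zero_iff.mp h0
  exact (inv_mul_eq_one.mp h1).symm

lemma longest_inv (hfin : ((parabolic cs L : Set W)).Finite)
    (hmem : w₀ ∈ parabolic cs L)
    (hmax : ∀ u ∈ parabolic cs L, cs.length u ≤ cs.length w₀) : w₀⁻¹ = w₀ :=
  longest_unique cs hfin hmem hmax (inv_mem hmem) (cs.length_inv w₀)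

lemma length_mul_longest (hfin : ((parabolic cs L : Set W)).Finite)
    (hmem : w₀ ∈ parabolic cs L)
    (hmax : ∀ u ∈ parabolic cs L, cs.length u ≤ cs.length w₀)
    (u : W) (hu : u ∈ parabolic cs L) :
    cs.length (u * w₀) + cs.length u = cs.length w₀ := by
  have h1 : cs.length (u * w₀) = cs.length (w₀ * u⁻¹) := by
    rw [← cs.length_inv (u * w₀), mul_inv_rev, longest_inv cs hfin hmem hmax]
  rw [h1]
  have h2 := length_longest_mul cs hfin hmem hmax u⁻¹ (inv_mem hu)
  rwa [cs.length_inv] at h2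

lemma longest_conj_simple (hfin : ((parabolic cs L : Set W)).Finite)
    (hmem : w₀ ∈ parabolic cs L)
    (hmax : ∀ u ∈ parabolic cs L, cs.length u ≤ cs.length w₀)
    {k : B} (hk : k ∈ L) :
    ∃ m ∈ L, w₀ * cs.simple k * w₀⁻¹ = cs.simple m := by
  have hx : w₀ * cs.simple k * w₀⁻¹ ∈ parabolic cs L :=
    mul_mem (mul_mem hmem (simple_mem_parabolic cs hk)) (inv_mem hmem)
  have h1 : cs.length (w₀ * cs.simple k) + 1 = cs.length w₀ := by
    have h := length_longest_mul cs hfin hmem hmax (cs.simple k) (simple_mem_parabolic cs hk)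
    rwa [cs.length_simple] at h
  have h2 : cs.length ((w₀ * cs.simple k) * w₀) + cs.length (w₀ * cs.simple k)
      = cs.length w₀ :=
    length_mul_longest cs hfin hmem hmax (w₀ * cs.simple k)
      (mul_mem hmem (simple_mem_parabolic cs hk))
  have h3 : cs.length (w₀ * cs.simple k * w₀⁻¹) = 1 := by
    rw [longest_inv cs hfin hmem hmax]
    omega
  exact eq_simple_of_mem_parabolic_of_length_one cs hx h3

end Longest

end CoxWall

namespace CoxWall

open CoxeterSystem

variable {B : Type*}

/-- The cosine matrix entries of the geometric representation. -/
noncomputable def kM (M : CoxeterMatrix B) (x y : B) : ℝ :=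
  if M x y = 0 then -1 else -Real.cos (Real.pi / (M x y))

lemma kM_symm (M : CoxeterMatrix B) (x y : B) : kM M x y = kM M y x := by
  unfold kM
  rw [M.symmetric x y]

lemma kM_self (M : CoxeterMatrix B) (x : B) : kM M x x = 1 := by
  unfold kM
  rw [M.diagonal x]
  norm_num

/-- The linear functional `v ↦ ⟨αₓ, v⟩` of the geometric representation. -/
noncomputable def phiB (M : CoxeterMatrix B) (x : B) : (B →₀ ℝ) →ₗ[ℝ] ℝ :=
  Finsupp.linearCombination ℝ (kM M x)

lemma phiB_single (M : CoxeterMatrix B) (x y : B) :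
    phiB M x (Finsupp.single y (1:ℝ)) = kM M x y := by
  unfold phiB
  rw [Finsupp.linearCombination_single, one_smul]

/-- The geometric reflection associated to `x`. -/
noncomputable def sigmaB (M : CoxeterMatrix B) (x : B) : Module.End ℝ (B →₀ ℝ) :=
  LinearMap.id - (2:ℝ) • ((phiB M x).smulRight (Finsupp.single x 1))

lemma sigmaB_apply (M : CoxeterMatrix B) (x : B) (v : B →₀ ℝ) :
    sigmaB M x v = v - (2 * phiB M x v) • Finsupp.single x 1 := by
  unfold sigmaB
  simp only [LinearMap.sub_apply, LinearMap.id_apply, LinearMap.smul_apply,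
    LinearMap.smulRight_apply, smul_smul]

lemma phiB_sigmaB (M : CoxeterMatrix B) (x : B) (v : B →₀ ℝ) :
    phiB M x (sigmaB M x v) = - phiB M x v := by
  rw [sigmaB_apply, map_sub, map_smul, phiB_single, kM_self, smul_eq_mul]
  ring

lemma sigmaB_invol (M : CoxeterMatrix B) (x : B) : sigmaB M x * sigmaB M x = 1 := by
  apply LinearMap.ext
  intro v
  rw [Module.End.mul_apply, sigmaB_apply, phiB_sigmaB, sigmaB_apply, Module.End.one_apply]
  rw [mul_neg, neg_smul, sub_neg_eq_add, sub_add_cancel]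

lemma sigmaB_fix (M : CoxeterMatrix B) (x : B) (v : B →₀ ℝ) (h : phiB M x v = 0) :
    sigmaB M x v = v := by
  rw [sigmaB_apply, h, mul_zero, zero_smul, sub_zero]

end CoxWall

namespace CoxWall

open CoxeterSystem

variable {B : Type*}

theorem sigmaB_liftable (M : CoxeterMatrix B) : M.IsLiftable (sigmaB M) := by
  intro i j
  rcases eq_or_ne i j with rfl | hij
  · rw [M.diagonal i, pow_one, sigmaB_invol]
  rcases Nat.eq_zero_or_pos (M i j) with h0 | hpos
  · rw [h0, pow_zero]
  have hm1 : M i j ≠ 1 := M.off_diagonal i j hij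
  set m := M i j with hm
  have hm2 : 2 ≤ m := by omega
  set θ : ℝ := Real.pi / m with hθ
  have hmR : (2:ℝ) ≤ (m:ℝ) := by exact_mod_cast hm2
  have hmpos : (0:ℝ) < m := by linarith
  have hθpos : 0 < θ := div_pos Real.pi_pos hmpos
  have hθle : θ ≤ Real.pi / 2 := by
    rw [hθ, div_le_div_iff₀ hmpos (by norm_num)]
    nlinarith [Real.pi_pos]
  have hθlt : θ < Real.pi := by linarith [Real.pi_pos]
  have hsin : 0 < Real.sin θ := Real.sin_pos_of_pos_of_lt_pi hθpos hθlt
  set c : ℝ := Real.cos θ with hc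
  have hc2 : c^2 < 1 := by
    nlinarith [Real.sin_sq_add_cos_sq θ, hsin]
  have hmθ : (m:ℝ) * θ = Real.pi := by
    rw [hθ]
    field_simp
  have hk : kM M i j = -c := by
    rw [kM, if_neg (by omega)]
  have hkji : kM M j i = -c := by rw [kM_symm]; exact hk
  set ei : B →₀ ℝ := Finsupp.single i 1 with hei
  set ej : B →₀ ℝ := Finsupp.single j 1 with hej
  have hphi_ii : phiB M i ei = 1 := by rw [hei, phiB_single, kM_self]
  have hphi_ij : phiB M i ej = -c := by rw [hej, phiB_single, hk]
  have hphi_ji : phiB M j ei = -c := by rw [hei, phiB_single, hkji]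
  have hphi_jj : phiB M j ej = 1 := by rw [hej, phiB_single, kM_self]
  set T : Module.End ℝ (B →₀ ℝ) := sigmaB M i * sigmaB M j with hT
  have hsj_ei : sigmaB M j ei = ei + (2*c) • ej := by
    rw [sigmaB_apply, hphi_ji]
    module
  have hsj_ej : sigmaB M j ej = -ej := by
    rw [sigmaB_apply, hphi_jj]
    module
  have hsi_ei : sigmaB M i ei = -ei := by
    rw [sigmaB_apply, hphi_ii]
    module
  have hsi_ej : sigmaB M i ej = ej + (2*c) • ei := by
    rw [sigmaB_apply, hphi_ij]
    module
  have hTei : T ei = (4*c^2-1) • ei + (2*c) • ej := by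
    rw [hT, Module.End.mul_apply, hsj_ei, map_add, map_smul, hsi_ei, hsi_ej]
    module
  have hTej : T ej = (-(2*c)) • ei + (-1 : ℝ) • ej := by
    rw [hT, Module.End.mul_apply, hsj_ej, map_neg, hsi_ej]
    module
  have Hx : ∀ x : ℝ, Real.sin ((x+1)*θ) = 2*c*Real.sin (x*θ) - Real.sin ((x-1)*θ) := by
    intro x
    rw [show (x+1)*θ = x*θ + θ by ring, show (x-1)*θ = x*θ - θ by ring,
      Real.sin_add, Real.sin_sub, hc]
    ring
  have key : ∀ n : ℕ,
      Real.sin θ • ((T ^ n) ei)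
          = Real.sin ((2*(n:ℝ)+1)*θ) • ei + Real.sin ((2*(n:ℝ))*θ) • ej
      ∧ Real.sin θ • ((T ^ n) ej)
          = (- Real.sin ((2*(n:ℝ))*θ)) • ei + (- Real.sin ((2*(n:ℝ)-1)*θ)) • ej := by
    intro n
    induction n with
    | zero =>
      constructor
      · rw [pow_zero, Module.End.one_apply, show (2*((0:ℕ):ℝ)+1)*θ = θ by push_cast; ring,
          show (2*((0:ℕ):ℝ))*θ = 0 by push_cast; ring, Real.sin_zero]
        try module
      · rw [pow_zero, Module.End.one_apply, show (2*((0:ℕ):ℝ))*θ = 0 by push_cast; ring,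
          show (2*((0:ℕ):ℝ)-1)*θ = -θ by push_cast; ring, Real.sin_zero, Real.sin_neg]
        try module
    | succ n ih =>
      obtain ⟨ih1, ih2⟩ := ih
      have A0 := Hx (2*(n:ℝ))
      have A1 := Hx (2*(n:ℝ)+1)
      have A2 := Hx (2*(n:ℝ)+2)
      rw [show ((2*(n:ℝ))+1)*θ = (2*(n:ℝ)+1)*θ by ring,
        show ((2*(n:ℝ))-1)*θ = (2*(n:ℝ)-1)*θ by ring] at A0
      rw [show ((2*(n:ℝ)+1)+1)*θ = (2*(n:ℝ)+2)*θ by ring,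
        show ((2*(n:ℝ)+1)-1)*θ = (2*(n:ℝ))*θ by ring] at A1
      rw [show ((2*(n:ℝ)+2)+1)*θ = (2*(n:ℝ)+3)*θ by ring,
        show ((2*(n:ℝ)+2)-1)*θ = (2*(n:ℝ)+1)*θ by ring] at A2
      have e1 : (T ^ (n+1)) ei = T ((T ^ n) ei) := by rw [pow_succ', Module.End.mul_apply]
      have e2 : (T ^ (n+1)) ej = T ((T ^ n) ej) := by rw [pow_succ', Module.End.mul_apply]
      constructor
      · have h := congrArg (fun v => T v) ih1
        simp only [map_smul, map_add] at h
        rw [hTei, hTej] at h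
        rw [e1, h, show (2*((n+1:ℕ):ℝ)+1)*θ = (2*(n:ℝ)+3)*θ by push_cast; ring,
          show (2*((n+1:ℕ):ℝ))*θ = (2*(n:ℝ)+2)*θ by push_cast; ring]
        match_scalars
        · linear_combination -A2 - 2*c*A1
        · linear_combination -A1
      · have h := congrArg (fun v => T v) ih2
        simp only [map_smul, map_add] at h
        rw [hTei, hTej] at h
        rw [e2, h, show (2*((n+1:ℕ):ℝ))*θ = (2*(n:ℝ)+2)*θ by push_cast; ring,
          show (2*((n+1:ℕ):ℝ)-1)*θ = (2*(n:ℝ)+1)*θ by push_cast; ring]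
        match_scalars
        · linear_combination A1 + 2*c*A0
        · linear_combination A0
  have hsin2 : Real.sin ((2*(m:ℝ)+1)*θ) = Real.sin θ := by
    rw [show (2*(m:ℝ)+1)*θ = θ + 2*((m:ℝ)*θ) by ring, hmθ, Real.sin_add_two_pi]
  have hsin0 : Real.sin ((2*(m:ℝ))*θ) = 0 := by
    rw [show (2*(m:ℝ))*θ = 2*((m:ℝ)*θ) by ring, hmθ, Real.sin_two_pi]
  have hsinm : Real.sin ((2*(m:ℝ)-1)*θ) = - Real.sin θ := by
    rw [show (2*(m:ℝ)-1)*θ = -θ + 2*((m:ℝ)*θ) by ring, hmθ, Real.sin_add_two_pi,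
      Real.sin_neg]
  have hTmei : (T ^ m) ei = ei := by
    have h := (key m).1
    rw [hsin2, hsin0] at h
    have h2 : Real.sin θ • ((T^m) ei) = Real.sin θ • ei := by rw [h]; module
    exact smul_right_injective (B →₀ ℝ) (ne_of_gt hsin) h2
  have hTmej : (T ^ m) ej = ej := by
    have h := (key m).2
    rw [hsin0, hsinm] at h
    have h2 : Real.sin θ • ((T^m) ej) = Real.sin θ • ej := by rw [h]; module
    exact smul_right_injective (B →₀ ℝ) (ne_of_gt hsin) h2
  have hpowfix : ∀ (n : ℕ) (v : B →₀ ℝ), T v = v → (T ^ n) v = v := by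
    intro n v hv
    induction n with
    | zero => rw [pow_zero, Module.End.one_apply]
    | succ n ih => rw [pow_succ, Module.End.mul_apply, hv, ih]
  show T ^ m = 1
  apply LinearMap.ext
  intro v
  rw [Module.End.one_apply]
  have hD : (1:ℝ) - c^2 ≠ 0 := by nlinarith
  obtain ⟨α, β, hqi, hqj⟩ : ∃ α β : ℝ,
      phiB M i (v - α • ei - β • ej) = 0 ∧ phiB M j (v - α • ei - β • ej) = 0 := by
    have hgen : ∀ A Bb : ℝ, ∃ α β : ℝ,
        A - (α * 1 + β * (-c)) = 0 ∧ Bb - (α * (-c) + β * 1) = 0 := by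
      intro A Bb
      refine ⟨(A + c*Bb)/(1-c^2), (Bb + c*A)/(1-c^2), ?_, ?_⟩
      · field_simp
        ring
      · field_simp
        ring
    obtain ⟨α, β, h1, h2⟩ := hgen (phiB M i v) (phiB M j v)
    refine ⟨α, β, ?_, ?_⟩
    · simp only [map_sub, map_smul, smul_eq_mul, hphi_ii, hphi_ij]
      linear_combination h1
    · simp only [map_sub, map_smul, smul_eq_mul, hphi_ji, hphi_jj]
      linear_combination h2
  have hTq : T (v - α • ei - β • ej) = (v - α • ei - β • ej) := by
    rw [hT, Module.End.mul_apply, sigmaB_fix M j _ hqj, sigmaB_fix M i _ hqi]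
  have hv : v = (v - α • ei - β • ej) + α • ei + β • ej := by module
  conv_lhs => rw [hv]
  rw [map_add, map_add, map_smul, map_smul, hpowfix m _ hTq, hTmei, hTmej]
  module

theorem simple_injective {W : Type*} [Group W] {M : CoxeterMatrix B}
    (cs : CoxeterSystem M W) : Function.Injective cs.simple := by
  intro i j hij
  by_contra hne
  have hlift := sigmaB_liftable M
  have h1 : cs.lift ⟨sigmaB M, hlift⟩ (cs.simple i) = sigmaB M i :=
    cs.lift_apply_simple hlift i
  have h2 : cs.lift ⟨sigmaB M, hlift⟩ (cs.simple j) = sigmaB M j :=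
    cs.lift_apply_simple hlift j
  have h3 : sigmaB M i = sigmaB M j := by rw [← h1, ← h2, hij]
  have h4 := congrArg (fun f : Module.End ℝ (B →₀ ℝ) =>
    (f (Finsupp.single i (1:ℝ))) i) h3
  rw [sigmaB_apply, sigmaB_apply, phiB_single, phiB_single, kM_self] at h4
  have hji : j ≠ i := fun h => hne h.symm
  simp [Finsupp.single_eq_of_ne' hji] at h4

end CoxWall

open CoxWall in
/-- Let `W_J` and `W_{J+a}` be finite, with longest elements `w_J`, `w_{J+a}`.
Then `v := w_J w_{J+a}` satisfies `ℓ(v) = ℓ(w_{J+a}) − ℓ(w_J)`, and conjugation by `v` maps `W_K`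
onto `W_J`, where `K = (J + a) − ι_{J+a}(a)` and `ι_{J+a}(a)` is the vertex `b` with
`w_{J+a} s_a w_{J+a}⁻¹ = s_b` (the diagram automorphism induced by the longest element). -/
theorem longest_element_wall_crossing {B W : Type*} [Group W]
    {M : CoxeterMatrix B} (cs : CoxeterSystem M W) (J : Set B) (a : B) (ha : a ∉ J)
    (hJfin : ((parabolic cs J : Set W)).Finite)
    (hJafin : ((parabolic cs (insert a J) : Set W)).Finite)
    (wJ wJa : W)
    (hwJ : wJ ∈ parabolic cs J ∧ ∀ u ∈ parabolic cs J, cs.length u ≤ cs.length wJ)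
    (hwJa : wJa ∈ parabolic cs (insert a J) ∧
      ∀ u ∈ parabolic cs (insert a J), cs.length u ≤ cs.length wJa)
    (b : B) (hb : wJa * cs.simple a * wJa⁻¹ = cs.simple b) :
    cs.length (wJ * wJa) + cs.length wJ = cs.length wJa ∧
    Subgroup.map (MulAut.conj (wJ * wJa)).toMonoidHom
        (parabolic cs (insert a J \ {b})) = parabolic cs J := by
  classical
  obtain ⟨hwJmem, hwJmax⟩ := hwJ
  obtain ⟨hwJamem, hwJamax⟩ := hwJa
  have hJL : parabolic cs J ≤ parabolic cs (insert a J) :=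
    Subgroup.closure_mono (Set.image_mono (Set.subset_insert a J))
  have hwJL : wJ ∈ parabolic cs (insert a J) := hJL hwJmem
  have part1 : cs.length (wJ * wJa) + cs.length wJ = cs.length wJa :=
    length_mul_longest cs hJafin hwJamem hwJamax wJ hwJL
  have hinv : wJa⁻¹ = wJa := longest_inv cs hJafin hwJamem hwJamax
  have hconj : ∀ k ∈ (insert a J : Set B), ∃ m ∈ (insert a J : Set B),
      wJa * cs.simple k * wJa⁻¹ = cs.simple m :=
    fun k hk => longest_conj_simple cs hJafin hwJamem hwJamax hk
  have hsimpinj := simple_injective cs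
  have hsq : wJa * wJa = 1 := by
    nth_rewrite 1 [← hinv]
    exact inv_mul_cancel wJa
  have hcc : ∀ x : W, wJa * (wJa * x * wJa⁻¹) * wJa⁻¹ = x := by
    intro x
    rw [hinv]
    simp only [mul_assoc, hsq, mul_one]
    rw [← mul_assoc, hsq, one_mul]
  have hK2J : Subgroup.map (MulAut.conj wJa).toMonoidHom
      (parabolic cs (insert a J \ {b})) = parabolic cs J := by
    apply _root_.le_antisymm
    · rw [parabolic, MonoidHom.map_closure]
      apply (Subgroup.closure_le _).mpr
      rintro x ⟨y, ⟨k, hk, rfl⟩, rfl⟩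
      show wJa * cs.simple k * wJa⁻¹ ∈ parabolic cs J
      obtain ⟨mk, hmkL, hmkeq⟩ := hconj k hk.1
      rw [hmkeq]
      rcases Set.mem_insert_iff.mp hmkL with hma | hmJ
      · exfalso
        have h1 : cs.simple k = cs.simple b := by
          calc cs.simple k = wJa * (wJa * cs.simple k * wJa⁻¹) * wJa⁻¹ := (hcc _).symm
            _ = wJa * cs.simple mk * wJa⁻¹ := by rw [hmkeq]
            _ = wJa * cs.simple a * wJa⁻¹ := by rw [hma]
            _ = cs.simple b := hb
        exact hk.2 (Set.mem_singleton_iff.mpr (hsimpinj h1))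
      · exact simple_mem_parabolic cs hmJ
    · show parabolic cs J ≤ _
      rw [parabolic]
      apply (Subgroup.closure_le _).mpr
      rintro x ⟨jj, hjJ, rfl⟩
      obtain ⟨mj, hmjL, hmjeq⟩ := hconj jj (Set.mem_insert_of_mem a hjJ)
      have hmjK : mj ∈ (insert a J \ {b} : Set B) := by
        refine ⟨hmjL, ?_⟩
        intro hmb
        have hmjb : mj = b := Set.mem_singleton_iff.mp hmb
        have h2 : cs.simple jj = cs.simple a := by
          have h3 : wJa * cs.simple jj * wJa⁻¹ = wJa * cs.simple a * wJa⁻¹ := by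
            rw [hmjeq, hmjb, hb]
          calc cs.simple jj = wJa * (wJa * cs.simple jj * wJa⁻¹) * wJa⁻¹ := (hcc _).symm
            _ = wJa * (wJa * cs.simple a * wJa⁻¹) * wJa⁻¹ := by rw [h3]
            _ = cs.simple a := hcc _
        exact ha (hsimpinj h2 ▸ hjJ)
      refine Subgroup.mem_map.mpr ⟨cs.simple mj, simple_mem_parabolic cs hmjK, ?_⟩
      show wJa * cs.simple mj * wJa⁻¹ = cs.simple jj
      rw [← hmjeq, hcc]
  have hJ2J : Subgroup.map (MulAut.conj wJ).toMonoidHom (parabolic cs J)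
      = parabolic cs J := by
    ext x
    constructor
    · rintro ⟨y, hy, rfl⟩
      show wJ * y * wJ⁻¹ ∈ _
      exact mul_mem (mul_mem hwJmem hy) (inv_mem hwJmem)
    · intro hx
      refine ⟨wJ⁻¹ * x * wJ, mul_mem (mul_mem (inv_mem hwJmem) hx) hwJmem, ?_⟩
      show wJ * (wJ⁻¹ * x * wJ) * wJ⁻¹ = x
      group
  have hsplit : Subgroup.map (MulAut.conj (wJ * wJa)).toMonoidHom
        (parabolic cs (insert a J \ {b}))
      = Subgroup.map (MulAut.conj wJ).toMonoidHom
          (Subgroup.map (MulAut.conj wJa).toMonoidHom (parabolic cs (insert a J \ {b}))) := by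
    rw [Subgroup.map_map]
    congr 1
    ext x
    show (wJ * wJa) * x * (wJ * wJa)⁻¹ = wJ * (wJa * x * wJa⁻¹) * wJ⁻¹
    group
  exact ⟨part1, by rw [hsplit, hK2J, hJ2J]⟩
end

section
/- Assume W is a finite Coxeter group and let π: A → W be the projection from the Artin–Tits group. Let W̃ ⊂ A⁺ denote the set of positive lifts of elements of W (images of the set-theoretic section w ↦ σ_w). Then π restricts to an isomorphism of posets between (W̃, left-divisibility in the monoid A⁺) and (W, weak left Bruhat order); in particular, for u,v ∈ W, σ_u left-divides σ_v in A⁺ if and only if u ≤ v in the weak left Bruhat order. -/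
variable {B : Type*}

/-- The braid word `σ_i σ_j σ_i ⋯` of length `M i j`. -/
def braidWord (M : CoxeterMatrix B) (i j : B) : FreeGroup B :=
  ((List.range (M i j)).map fun k => if k % 2 = 0 then FreeGroup.of i else FreeGroup.of j).prod

/-- The braid relations defining the Artin--Tits group of `M`. -/
def artinRelationsSet (M : CoxeterMatrix B) : Set (FreeGroup B) :=
  {r | ∃ i j : B, r = braidWord M i j * (braidWord M j i)⁻¹}

/-- The Artin--Tits group attached to the Coxeter matrix `M`. -/
def ArtinGroup (M : CoxeterMatrix B) : Type _ := PresentedGroup (artinRelationsSet M)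

instance (M : CoxeterMatrix B) : Group (ArtinGroup M) := by
  unfold ArtinGroup; infer_instance

/-- The Artin generator `σ_i`. -/
def artinGen (M : CoxeterMatrix B) (i : B) : ArtinGroup M := PresentedGroup.of i

/-- The positive Artin--Tits monoid `A⁺` (realised as the submonoid of `A` generated by the
Artin generators; for finite type this is isomorphic to the presented Artin monoid). -/
def artinPos (M : CoxeterMatrix B) : Submonoid (ArtinGroup M) :=
  Submonoid.closure (Set.range (artinGen M))

/-- The degree homomorphism on the free group, sending every generator to `1 : ℤ`. -/
private def degAux : FreeGroup B →* Multiplicative ℤ :=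
  FreeGroup.lift fun _ => Multiplicative.ofAdd 1

private lemma degAux_braidWord (M : CoxeterMatrix B) (i j : B) :
    degAux (braidWord M i j) = Multiplicative.ofAdd (M i j : ℤ) := by
  unfold braidWord
  rw [map_list_prod, List.map_map]
  rw [List.prod_eq_pow_card _ (Multiplicative.ofAdd (1 : ℤ)) ?_]
  · simp [← ofAdd_nsmul]
  · intro x hx
    simp only [List.mem_map, Function.comp_apply] at hx
    obtain ⟨k, -, rfl⟩ := hx
    split_ifs <;> simp [degAux]

/-- The degree homomorphism on the Artin group. -/
private def deg (M : CoxeterMatrix B) : ArtinGroup M →* Multiplicative ℤ :=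
  PresentedGroup.toGroup (f := fun _ => Multiplicative.ofAdd 1) (by
    rintro r ⟨i, j, rfl⟩
    show degAux _ = 1
    rw [map_mul, map_inv, degAux_braidWord, degAux_braidWord, M.symmetric i j,
      mul_inv_cancel])

private lemma deg_artinGen (M : CoxeterMatrix B) (i : B) :
    deg M (artinGen M i) = Multiplicative.ofAdd 1 :=
  PresentedGroup.toGroup.of _

private lemma deg_prod (M : CoxeterMatrix B) (ω : List B) :
    deg M ((ω.map (artinGen M)).prod) = Multiplicative.ofAdd (ω.length : ℤ) := by
  rw [map_list_prod, List.map_map]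
  rw [List.prod_eq_pow_card _ (Multiplicative.ofAdd (1 : ℤ)) ?_]
  · simp [← ofAdd_nsmul]
  · intro x hx
    simp only [List.mem_map, Function.comp_apply] at hx
    obtain ⟨k, -, rfl⟩ := hx
    exact deg_artinGen M k

private lemma mem_artinPos_iff (M : CoxeterMatrix B) (c : ArtinGroup M) :
    c ∈ artinPos M ↔ ∃ ω : List B, c = (ω.map (artinGen M)).prod := by
  constructor
  · intro hc
    induction hc using Submonoid.closure_induction with
    | mem x hx => obtain ⟨i, rfl⟩ := hx; exact ⟨[i], by simp⟩
    | one => exact ⟨[], by simp⟩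
    | mul x y _ _ hx hy =>
      obtain ⟨ω₁, rfl⟩ := hx; obtain ⟨ω₂, rfl⟩ := hy
      exact ⟨ω₁ ++ ω₂, by simp⟩
  · rintro ⟨ω, rfl⟩
    exact list_prod_mem (by
      intro x hx
      simp only [List.mem_map] at hx
      obtain ⟨i, -, rfl⟩ := hx
      exact Submonoid.subset_closure ⟨i, rfl⟩)

/-- Assume `W` is finite.  Let `σ : W → A` be the positive-lift section
(characterised by `σ(wordProd ω) = σ_{i_1} ⋯ σ_{i_r}` for every reduced word `ω = (i_1,…,i_r)`),
whose range is the set `W̃ ⊂ A⁺` of positive lifts.  Then `π` restricts to a poset isomorphism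
between `(W̃, left-divisibility in A⁺)` and `(W, weak left Bruhat order)`: `π ∘ σ = id`, `σ` is
injective, every `σ w` lies in `A⁺`, and for `u, v ∈ W`, `σ u` left-divides `σ v` in `A⁺` iff
`u ≤ v` in the weak left Bruhat order, i.e. `ℓ(u) + ℓ(u⁻¹ v) = ℓ(v)`. -/
theorem positive_lift_poset_iso (M : CoxeterMatrix B) [Finite M.Group]
    (π : ArtinGroup M →* M.Group) (hπ : ∀ i : B, π (artinGen M i) = M.simple i)
    (σ : M.Group → ArtinGroup M)
    (hσ : ∀ ω : List B, M.toCoxeterSystem.IsReduced ω →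
      σ (M.toCoxeterSystem.wordProd ω) = (ω.map (artinGen M)).prod) :
    (∀ w : M.Group, π (σ w) = w) ∧
    Function.Injective σ ∧
    (∀ w : M.Group, σ w ∈ artinPos M) ∧
    (∀ u v : M.Group,
      (∃ c ∈ artinPos M, σ v = σ u * c) ↔
      M.toCoxeterSystem.length u + M.toCoxeterSystem.length (u⁻¹ * v) =
        M.toCoxeterSystem.length v) := by
  set cs := M.toCoxeterSystem with hcs
  -- π of a product of generators is the word product
  have hπprod : ∀ ω : List B, π ((ω.map (artinGen M)).prod) = cs.wordProd ω := by
    intro ω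
    rw [map_list_prod, List.map_map, CoxeterSystem.wordProd]
    congr 1
    exact List.map_congr_left fun i _ => hπ i
  -- basic facts about σ w obtained from a reduced word
  have hσword : ∀ w : M.Group, ∃ ω : List B, cs.IsReduced ω ∧ w = cs.wordProd ω ∧
      σ w = (ω.map (artinGen M)).prod ∧ ω.length = cs.length w := by
    intro w
    obtain ⟨ω, hlen, hw⟩ := cs.exists_reduced_word w
    have hred : cs.IsReduced ω := hlen
    exact ⟨ω, hred, hw, by rw [hw]; exact hσ ω hred, by rw [hw]; rw [CoxeterSystem.IsReduced] at hlen; exact hlen.symm⟩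
  have hπσ : ∀ w : M.Group, π (σ w) = w := by
    intro w
    obtain ⟨ω, -, hw, hprod, -⟩ := hσword w
    rw [hprod, hπprod, ← hw]
  have hdegσ : ∀ w : M.Group, deg M (σ w) = Multiplicative.ofAdd (cs.length w : ℤ) := by
    intro w
    obtain ⟨ω, -, -, hprod, hlen⟩ := hσword w
    rw [hprod, deg_prod, hlen]
  refine ⟨hπσ, ?_, ?_, ?_⟩
  · intro u v huv
    have := hπσ u; rw [huv, hπσ v] at this; exact this.symm
  · intro w
    obtain ⟨ω, -, -, hprod, -⟩ := hσword w
    rw [hprod, mem_artinPos_iff]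
    exact ⟨ω, rfl⟩
  · intro u v
    constructor
    · rintro ⟨c, hc, heq⟩
      obtain ⟨ω, rfl⟩ := (mem_artinPos_iff M c).mp hc
      -- apply π
      have h1 : v = u * cs.wordProd ω := by
        have := congrArg π heq
        rwa [hπσ, map_mul, hπσ, hπprod] at this
      have h2 : cs.length (u⁻¹ * v) ≤ ω.length := by
        have : u⁻¹ * v = cs.wordProd ω := by rw [h1]; group
        rw [this]; exact cs.length_wordProd_le ω
      -- apply deg
      have h3 : (cs.length v : ℤ) = cs.length u + ω.length := by
        have := congrArg (deg M) heq
        rw [hdegσ, map_mul, hdegσ, deg_prod, ← ofAdd_add] at this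
        exact Multiplicative.ofAdd.injective this
      have h4 : cs.length v ≤ cs.length u + cs.length (u⁻¹ * v) := by
        have := cs.length_mul_le u (u⁻¹ * v)
        rwa [mul_inv_cancel_left] at this
      omega
    · intro hlen
      obtain ⟨ωu, hredu, hu, hprodu, hlenu⟩ := hσword u
      obtain ⟨ωc, hredc, hc, hprodc, hlenc⟩ := hσword (u⁻¹ * v)
      have hv : cs.wordProd (ωu ++ ωc) = v := by
        rw [cs.wordProd_append, ← hu, ← hc, mul_inv_cancel_left]
      have hred : cs.IsReduced (ωu ++ ωc) := by
        rw [CoxeterSystem.IsReduced, hv, List.length_append, hlenu, hlenc, hlen]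
      refine ⟨(ωc.map (artinGen M)).prod, (mem_artinPos_iff M _).mpr ⟨ωc, rfl⟩, ?_⟩
      have := hσ (ωu ++ ωc) hred
      rw [hv] at this
      rw [this, List.map_append, List.prod_append, hprodu]
end

section
/- Let (C°, 𝓗) be a locally finite hyperplane arrangement in an open convex subset C° of a finite-dimensional real vector space. Then any two chambers (connected components of C° minus the union of hyperplanes) are connected by a finite sequence of wall crossings, i.e., there is a finite sequence of chambers starting and ending at the given ones in which consecutive chambers are adjacent (their closures share a codimension-one intersection with a common hyperplane). -/
variable {V : Type*} [NormedAddCommGroup V] [NormedSpace ℝ V] [FiniteDimensional ℝ V]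

/-- The chambers of the arrangement `(C°, 𝓗)`: connected components of
`C° \ ⋃_{H ∈ 𝓗} H`. -/
def IsChamberOf (C : Set V) (ℋ : Set (Submodule ℝ V)) (D : Set V) : Prop :=
  ∃ x ∈ C \ ⋃ H ∈ ℋ, (H : Set V),
    D = connectedComponentIn (C \ ⋃ H ∈ ℋ, (H : Set V)) x

/-- Two chambers are adjacent if their closures share a codimension-one intersection lying on a
common hyperplane `H ∈ 𝓗`: the intersection of the closures contains a relatively open piece
of `H`. -/
def AdjacentChambers (C : Set V) (ℋ : Set (Submodule ℝ V)) (D D' : Set V) : Prop :=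
  IsChamberOf C ℋ D ∧ IsChamberOf C ℋ D' ∧
  ∃ H ∈ ℋ, ∃ x ∈ (closure D ∩ closure D') ∩ (H : Set V),
    ∃ U ∈ nhds x, U ∩ (H : Set V) ⊆ closure D ∩ closure D'

open Set Topology

theorem WallCross.S_isOpen (C : Set V) (hCopen : IsOpen C) (ℋ : Set (Submodule ℝ V))
    (hlocfin : ∀ x ∈ C, ∃ U ∈ nhds x, {H ∈ ℋ | ((H : Set V) ∩ U).Nonempty}.Finite) :
    IsOpen (C \ ⋃ H ∈ ℋ, (H : Set V)) := by
  rw [isOpen_iff_mem_nhds]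
  intro z hz
  obtain ⟨U, hU, hfin⟩ := hlocfin z hz.1
  set T : Set V := ⋃ H ∈ {H ∈ ℋ | ((H : Set V) ∩ U).Nonempty}, (H : Set V) with hT
  have hTc : IsClosed T := hfin.isClosed_biUnion (fun H _ => (H.closed_of_finiteDimensional))
  have hzT : z ∉ T := by
    intro hzT
    simp only [hT, mem_iUnion] at hzT
    obtain ⟨H, hH, hzH⟩ := hzT
    exact hz.2 (mem_iUnion₂.2 ⟨H, hH.1, hzH⟩)
  have hopen : IsOpen ((C ∩ interior U) \ T) :=
    (hCopen.inter isOpen_interior).sdiff hTc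
  have hmem : z ∈ (C ∩ interior U) \ T := ⟨⟨hz.1, mem_interior_iff_mem_nhds.2 hU⟩, hzT⟩
  refine Filter.mem_of_superset (hopen.mem_nhds hmem) ?_
  rintro w ⟨⟨hwC, hwU⟩, hwT⟩
  refine ⟨hwC, ?_⟩
  intro hw
  obtain ⟨H, hH, hwH⟩ := mem_iUnion₂.1 hw
  exact hwT (mem_iUnion₂.2 ⟨H, ⟨hH, ⟨w, hwH, interior_subset hwU⟩⟩, hwH⟩)

theorem WallCross.finite_meeting_compact (C : Set V) (ℋ : Set (Submodule ℝ V))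
    (hlocfin : ∀ x ∈ C, ∃ U ∈ nhds x, {H ∈ ℋ | ((H : Set V) ∩ U).Nonempty}.Finite)
    (K : Set V) (hK : IsCompact K) (hKC : K ⊆ C) :
    {H ∈ ℋ | ((H : Set V) ∩ K).Nonempty}.Finite := by
  choose! U hU hUfin using hlocfin
  obtain ⟨t, htcov⟩ := hK.elim_nhds_subcover' (fun z _ => U z) (fun z hz => hU z (hKC hz))
  have hsub : {H ∈ ℋ | ((H : Set V) ∩ K).Nonempty} ⊆
      ⋃ z ∈ t, {H ∈ ℋ | ((H : Set V) ∩ U (z : V)).Nonempty} := by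
    rintro H ⟨hH, w, hwH, hwK⟩
    obtain ⟨z, hzt, hwz⟩ := mem_iUnion₂.1 (htcov hwK)
    exact mem_iUnion₂.2 ⟨z, hzt, hH, w, hwH, hwz⟩
  exact (t.finite_toSet.biUnion fun z _ => hUfin z (hKC z.2)).subset hsub

theorem WallCross.dense_biInter_compl : ∀ (s : Set (Set V)), s.Finite →
    (∀ A ∈ s, IsOpen Aᶜ) → (∀ A ∈ s, Dense Aᶜ) → Dense (⋂ A ∈ s, Aᶜ) := by
  intro s hs
  refine Set.Finite.induction_on
    (motive := fun s _ => (∀ A ∈ s, IsOpen Aᶜ) → (∀ A ∈ s, Dense Aᶜ) → Dense (⋂ A ∈ s, Aᶜ))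
    s hs (fun _ _ => by simpa using dense_univ) ?_
  intro A s _ _ ih hop hd
  rw [biInter_insert]
  exact Dense.inter_of_isOpen_left (hd A (mem_insert _ _))
    (ih (fun B hB => hop B (mem_insert_of_mem _ hB)) (fun B hB => hd B (mem_insert_of_mem _ hB)))
    (hop A (mem_insert _ _))

theorem WallCross.exists_avoiding (s : Set (Submodule ℝ V)) (hs : s.Finite)
    (hprop : ∀ p ∈ s, p ≠ ⊤) (B : Set V) (hB : IsOpen B) (hBne : B.Nonempty) :
    ∃ v ∈ B, ∀ p ∈ s, v ∉ (p : Set V) := by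
  have hdense : Dense (⋂ p ∈ (fun (p : Submodule ℝ V) => (p : Set V)) '' s, pᶜ) := by
    refine WallCross.dense_biInter_compl _ (hs.image _) ?_ ?_
    · rintro A ⟨p, _, rfl⟩
      exact (p.closed_of_finiteDimensional).isOpen_compl
    · rintro A ⟨p, hp, rfl⟩
      refine interior_eq_empty_iff_dense_compl.1 ?_
      by_contra h
      exact hprop p hp (p.eq_top_of_nonempty_interior' (nonempty_iff_ne_empty.2 h))
  obtain ⟨v, hvI, hvB⟩ := hdense.exists_mem_open hB hBne
  refine ⟨v, hvB, fun p hp => ?_⟩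
  have := mem_iInter₂.1 hvI (p : Set V) ⟨p, hp, rfl⟩
  simpa using this

theorem WallCross.mem_closure_ray (w u : V) (A : Set V) (σ : ℝ) (hσ : 0 < σ)
    (h : ∀ s ∈ Ioo (0:ℝ) σ, w + s • u ∈ A) : w ∈ closure A := by
  have hc : Filter.Tendsto (fun s : ℝ => w + s • u) (nhdsWithin 0 (Ioi 0)) (nhds w) := by
    have hcont : Continuous fun s : ℝ => w + s • u :=
      continuous_const.add (continuous_id.smul continuous_const)
    have h0 : w + (0:ℝ) • u = w := by simp
    simpa [h0] using (hcont.tendsto 0).mono_left nhdsWithin_le_nhds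
  refine mem_closure_of_tendsto hc ?_
  filter_upwards [Ioo_mem_nhdsGT_of_mem (⟨le_refl _, hσ⟩ : (0:ℝ) ∈ Ico 0 σ)] with s hs
  exact h s hs

/-- The case of a segment meeting no hyperplane: both endpoints lie in the same chamber. -/
theorem WallCross.base (C : Set V) (hCconv : Convex ℝ C) (ℋ : Set (Submodule ℝ V))
    (x y : V) (hx : x ∈ C \ ⋃ H ∈ ℋ, (H : Set V)) (hy : y ∈ C \ ⋃ H ∈ ℋ, (H : Set V))
    (hempty : ∀ t ∈ Icc (0:ℝ) 1, x + t • (y - x) ∉ ⋃ H ∈ ℋ, (H : Set V)) :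
    connectedComponentIn (C \ ⋃ H ∈ ℋ, (H : Set V)) x
      = connectedComponentIn (C \ ⋃ H ∈ ℋ, (H : Set V)) y := by
  set S := C \ ⋃ H ∈ ℋ, (H : Set V) with hS
  set γ : ℝ → V := fun t => x + t • (y - x) with hγ
  have hγc : Continuous γ := continuous_const.add (continuous_id.smul continuous_const)
  have hγC : ∀ t ∈ Icc (0:ℝ) 1, γ t ∈ C := by
    intro t ht
    have h := hCconv hx.1 hy.1 (by linarith [ht.2] : (0:ℝ) ≤ 1 - t) ht.1 (by ring)
    convert h using 1
    simp only [hγ]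
    module
  have hA : γ '' Icc (0:ℝ) 1 ⊆ S := by
    rintro _ ⟨t, ht, rfl⟩
    exact ⟨hγC t ht, hempty t ht⟩
  have hconn : IsPreconnected (γ '' Icc (0:ℝ) 1) :=
    (isPreconnected_Icc).image _ hγc.continuousOn
  have hγ0 : γ 0 = x := by simp [hγ]
  have hγ1 : γ 1 = y := by simp [hγ]
  have hxA : x ∈ γ '' Icc (0:ℝ) 1 := ⟨0, ⟨le_refl _, zero_le_one⟩, hγ0⟩
  have hsub : γ '' Icc (0:ℝ) 1 ⊆ connectedComponentIn S x :=
    hconn.subset_connectedComponentIn hxA hA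
  exact connectedComponentIn_eq (hsub ⟨1, ⟨zero_le_one, le_refl _⟩, hγ1⟩)

set_option maxHeartbeats 2000000 in
/-- Key induction: if the segment from `x` to `y` crosses hyperplanes one at a time, with
finitely many crossing parameters, then the chambers of `x` and `y` are connected by a finite
sequence of wall crossings. -/
theorem WallCross.key (C : Set V) (hCopen : IsOpen C) (hCconv : Convex ℝ C)
    (ℋ : Set (Submodule ℝ V))
    (hhyp : ∀ H ∈ ℋ, ∃ f : V →ₗ[ℝ] ℝ, f ≠ 0 ∧ H = LinearMap.ker f)
    (hlocfin : ∀ x ∈ C, ∃ U ∈ nhds x, {H ∈ ℋ | ((H : Set V) ∩ U).Nonempty}.Finite) :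
    ∀ n : ℕ, ∀ x y : V, x ∈ C \ ⋃ H ∈ ℋ, (H : Set V) → y ∈ C \ ⋃ H ∈ ℋ, (H : Set V) →
    (∀ t ∈ Icc (0:ℝ) 1, ∀ H ∈ ℋ, ∀ H' ∈ ℋ, x + t • (y - x) ∈ (H : Set V) →
        x + t • (y - x) ∈ (H' : Set V) → H = H') →
    ∀ (hTfin : {t ∈ Icc (0:ℝ) 1 | x + t • (y - x) ∈ ⋃ H ∈ ℋ, (H : Set V)}.Finite),
    {t ∈ Icc (0:ℝ) 1 | x + t • (y - x) ∈ ⋃ H ∈ ℋ, (H : Set V)}.ncard ≤ n →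
    ∃ L : List (Set V), L.Chain' (AdjacentChambers C ℋ) ∧ (∀ E ∈ L, IsChamberOf C ℋ E) ∧
      L.head? = some (connectedComponentIn (C \ ⋃ H ∈ ℋ, (H : Set V)) x) ∧
      L.getLast? = some (connectedComponentIn (C \ ⋃ H ∈ ℋ, (H : Set V)) y) := by
  intro n
  induction n with
  | zero =>
    intro x y hx hy _ hTfin hTcard
    have hTe : {t ∈ Icc (0:ℝ) 1 | x + t • (y - x) ∈ ⋃ H ∈ ℋ, (H : Set V)} = ∅ :=
      (Set.ncard_eq_zero hTfin).1 (Nat.le_zero.1 hTcard)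
    have hempty : ∀ t ∈ Icc (0:ℝ) 1, x + t • (y - x) ∉ ⋃ H ∈ ℋ, (H : Set V) := by
      intro t ht h
      exact eq_empty_iff_forall_notMem.1 hTe t ⟨ht, h⟩
    refine ⟨[connectedComponentIn (C \ ⋃ H ∈ ℋ, (H : Set V)) x],
      List.isChain_singleton _, ?_, rfl, ?_⟩
    · intro E hE
      rw [List.mem_singleton] at hE
      exact ⟨x, hx, hE⟩
    · simp only [List.getLast?_singleton, Option.some.injEq]
      exact WallCross.base C hCconv ℋ x y hx hy hempty
  | succ n IH =>
    intro x y hx hy hsimple hTfin hTcard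
    set S := C \ ⋃ H ∈ ℋ, (H : Set V) with hS
    set γ : ℝ → V := fun t => x + t • (y - x) with hγ
    set T := {t ∈ Icc (0:ℝ) 1 | γ t ∈ ⋃ H ∈ ℋ, (H : Set V)} with hTdef
    have hγC : ∀ t ∈ Icc (0:ℝ) 1, γ t ∈ C := by
      intro t ht
      have h := hCconv hx.1 hy.1 (by linarith [ht.2] : (0:ℝ) ≤ 1 - t) ht.1 (by ring)
      convert h using 1
      simp only [hγ]
      module
    have hγ0 : γ 0 = x := by simp [hγ]
    have hγ1 : γ 1 = y := by simp [hγ]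
    by_cases hTe : T = ∅
    · have hempty : ∀ t ∈ Icc (0:ℝ) 1, x + t • (y - x) ∉ ⋃ H ∈ ℋ, (H : Set V) := by
        intro t ht h
        exact eq_empty_iff_forall_notMem.1 hTe t ⟨ht, h⟩
      refine ⟨[connectedComponentIn S x], List.isChain_singleton _, ?_, rfl, ?_⟩
      · intro E hE
        rw [List.mem_singleton] at hE
        exact ⟨x, hx, hE⟩
      · simp only [List.getLast?_singleton, Option.some.injEq]
        exact WallCross.base C hCconv ℋ x y hx hy hempty
    -- T nonempty: take the largest crossing parameter t₀
    have hTne : T.Nonempty := nonempty_iff_ne_empty.2 hTe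
    have hTFne : hTfin.toFinset.Nonempty := by
      obtain ⟨t, ht⟩ := hTne
      exact ⟨t, hTfin.mem_toFinset.2 ht⟩
    set t₀ := hTfin.toFinset.max' hTFne with ht₀def
    have ht₀T : t₀ ∈ T := hTfin.mem_toFinset.1 (hTfin.toFinset.max'_mem hTFne)
    have hmax : ∀ t ∈ T, t ≤ t₀ := fun t ht => hTfin.toFinset.le_max' t (hTfin.mem_toFinset.2 ht)
    obtain ⟨ht₀I, ht₀U⟩ := ht₀T
    have ht₀0 : t₀ ≠ 0 := by
      rintro h
      rw [h, hγ0] at ht₀U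
      exact hx.2 ht₀U
    have ht₀1 : t₀ ≠ 1 := by
      rintro h
      rw [h, hγ1] at ht₀U
      exact hy.2 ht₀U
    have ht₀pos : 0 < t₀ := lt_of_le_of_ne ht₀I.1 (Ne.symm ht₀0)
    have ht₀lt1 : t₀ < 1 := lt_of_le_of_ne ht₀I.2 ht₀1
    set p := γ t₀ with hpdef
    have hpC : p ∈ C := hγC t₀ ht₀I
    obtain ⟨H₀, hH₀ℋ, hpH₀⟩ := mem_iUnion₂.1 ht₀U
    have huniq : ∀ H ∈ ℋ, p ∈ (H : Set V) → H = H₀ :=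
      fun H hH hpH => hsimple t₀ ht₀I H hH H₀ hH₀ℋ hpH hpH₀
    -- find a ball around p meeting only H₀ among the hyperplanes
    obtain ⟨U, hU, hUfin⟩ := hlocfin p hpC
    set Bad : Set V := ⋃ H ∈ {H ∈ ℋ | ((H : Set V) ∩ U).Nonempty ∧ p ∉ (H : Set V)},
      (H : Set V) with hBad
    have hBadclosed : IsClosed Bad := by
      refine Set.Finite.isClosed_biUnion ?_ (fun H _ => H.closed_of_finiteDimensional)
      exact hUfin.subset (fun H hH => ⟨hH.1, hH.2.1⟩)
    have hpBad : p ∉ Bad := by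
      intro h
      obtain ⟨H, hH, hpH⟩ := mem_iUnion₂.1 h
      exact hH.2.2 hpH
    have hopen : IsOpen ((C ∩ interior U) \ Bad) :=
      (hCopen.inter isOpen_interior).sdiff hBadclosed
    obtain ⟨r, hr, hball⟩ := Metric.isOpen_iff.1 hopen p
      ⟨⟨hpC, mem_interior_iff_mem_nhds.2 hU⟩, hpBad⟩
    have hballC : Metric.ball p r ⊆ C := fun w hw => (hball hw).1.1
    have hballH : ∀ w ∈ Metric.ball p r, ∀ H ∈ ℋ, w ∈ (H : Set V) → H = H₀ := by
      intro w hw H hH hwH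
      have hw' := hball hw
      by_contra hne
      have hpH : p ∉ (H : Set V) := fun hpH => hne (huniq H hH hpH)
      exact hw'.2 (mem_iUnion₂.2 ⟨H, ⟨hH, ⟨w, hwH, interior_subset hw'.1.2⟩, hpH⟩, hwH⟩)
    have hxy : y - x ≠ 0 := by
      intro h
      have hg : p = x := by rw [hpdef]; simp [hγ, h]
      rw [hg] at ht₀U
      exact hx.2 ht₀U
    have hnorm : 0 < ‖y - x‖ := norm_pos_iff.2 hxy
    set δ₁ := r / ‖y - x‖ with hδ₁def
    have hδ₁ : 0 < δ₁ := div_pos hr hnorm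
    have hγball : ∀ t : ℝ, |t - t₀| < δ₁ → γ t ∈ Metric.ball p r := by
      intro t ht
      have hdiff : γ t - p = (t - t₀) • (y - x) := by
        simp only [hγ, hpdef]
        module
      rw [Metric.mem_ball, dist_eq_norm, hdiff, norm_smul, Real.norm_eq_abs]
      calc |t - t₀| * ‖y - x‖ < δ₁ * ‖y - x‖ := mul_lt_mul_of_pos_right ht hnorm
        _ = r := div_mul_cancel₀ r hnorm.ne'
    have hfinT' : (T \ {t₀}).Finite := hTfin.diff
    have hclosedT' : IsClosed (T \ {t₀}) := hfinT'.isClosed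
    have hpT' : t₀ ∈ (T \ {t₀})ᶜ := by simp
    obtain ⟨δ₂, hδ₂, hδ₂ball⟩ := Metric.isOpen_iff.1 hclosedT'.isOpen_compl t₀ hpT'
    set ε := min (min δ₁ δ₂) (min t₀ (1 - t₀)) with hεdef
    have hε : 0 < ε := lt_min (lt_min hδ₁ hδ₂) (lt_min ht₀pos (by linarith))
    have hεδ₁ : ε ≤ δ₁ := le_trans (min_le_left _ _) (min_le_left _ _)
    have hεδ₂ : ε ≤ δ₂ := le_trans (min_le_left _ _) (min_le_right _ _)
    have hεt₀ : ε ≤ t₀ := le_trans (min_le_right _ _) (min_le_left _ _)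
    have hεt₁ : ε ≤ 1 - t₀ := le_trans (min_le_right _ _) (min_le_right _ _)
    set a := t₀ - ε / 2 with hadef
    set b := t₀ + ε / 2 with hbdef
    have haI : a ∈ Icc (0:ℝ) 1 := ⟨by rw [hadef]; linarith, by rw [hadef]; linarith⟩
    have hbI : b ∈ Icc (0:ℝ) 1 := ⟨by rw [hbdef]; linarith, by rw [hbdef]; linarith⟩
    have hat₀ : |a - t₀| = ε / 2 := by
      have h : a - t₀ = -(ε / 2) := by rw [hadef]; ring
      rw [h, abs_neg, abs_of_pos (by linarith)]
    have hbt₀ : |b - t₀| = ε / 2 := by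
      have h : b - t₀ = ε / 2 := by rw [hbdef]; ring
      rw [h, abs_of_pos (by linarith)]
    have haT : a ∉ T := by
      intro haT
      have h1 : a ∈ T \ {t₀} := by
        refine ⟨haT, ?_⟩
        simp only [mem_singleton_iff]
        intro h
        rw [hadef] at h
        linarith
      have h2 : a ∈ Metric.ball t₀ δ₂ := by
        rw [Metric.mem_ball, Real.dist_eq, hat₀]
        linarith
      exact hδ₂ball h2 h1
    have hbT : b ∉ T := by
      intro hbT
      have := hmax b hbT
      rw [hbdef] at this
      linarith
    have hga : γ a ∈ S := ⟨hγC a haI, fun h => haT ⟨haI, h⟩⟩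
    have hgb : γ b ∈ S := ⟨hγC b hbI, fun h => hbT ⟨hbI, h⟩⟩
    have hgaball : γ a ∈ Metric.ball p r := hγball a (by rw [hat₀]; linarith)
    have hgbball : γ b ∈ Metric.ball p r := hγball b (by rw [hbt₀]; linarith)
    -- the linear functional of H₀
    obtain ⟨f, hf0, hfker⟩ := hhyp H₀ hH₀ℋ
    have hfp : f p = 0 := by
      rw [hfker] at hpH₀
      exact hpH₀
    have hfγ : ∀ t : ℝ, f (γ t) = f x + t * f (y - x) := by
      intro t
      simp only [hγ, map_add, map_smul, smul_eq_mul]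
    set c := f (y - x) with hcdef
    have hfx : f x ≠ 0 := by
      intro h
      refine hx.2 (mem_iUnion₂.2 ⟨H₀, hH₀ℋ, ?_⟩)
      rw [hfker]
      exact LinearMap.mem_ker.2 h
    have e0 : f x + t₀ * c = 0 := by rw [← hfγ t₀]; exact hfp
    have hc : c ≠ 0 := by
      intro h
      rw [h, mul_zero, add_zero] at e0
      exact hfx e0
    have hcc : 0 < c * c := mul_self_pos.2 hc
    have hPa : c * f (γ a) < 0 := by
      have h : c * f (γ a) = -(ε / 2) * (c * c) := by
        rw [hfγ a, hadef]
        linear_combination c * e0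
      rw [h]
      nlinarith
    have hQb : 0 < c * f (γ b) := by
      have h : c * f (γ b) = (ε / 2) * (c * c) := by
        rw [hfγ b, hbdef]
        linear_combination c * e0
      rw [h]
      nlinarith
    set g : V →ₗ[ℝ] ℝ := c • f with hgdef
    have hgapp : ∀ w : V, g w = c * f w := fun w => rfl
    set P := Metric.ball p r ∩ g ⁻¹' (Iio 0) with hPdef
    set Q := Metric.ball p r ∩ g ⁻¹' (Ioi 0) with hQdef
    have hPconv : Convex ℝ P := (convex_ball p r).inter ((convex_Iio (0:ℝ)).linear_preimage g)
    have hQconv : Convex ℝ Q := (convex_ball p r).inter ((convex_Ioi (0:ℝ)).linear_preimage g)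
    have hPS : P ⊆ S := by
      rintro w ⟨hwball, hwg⟩
      refine ⟨hballC hwball, fun hw => ?_⟩
      obtain ⟨H, hH, hwH⟩ := mem_iUnion₂.1 hw
      have hHH₀ : H = H₀ := hballH w hwball H hH hwH
      rw [hHH₀, hfker] at hwH
      have hfw : f w = 0 := hwH
      rw [mem_preimage, hgapp, hfw, mul_zero] at hwg
      simp at hwg
    have hQS : Q ⊆ S := by
      rintro w ⟨hwball, hwg⟩
      refine ⟨hballC hwball, fun hw => ?_⟩
      obtain ⟨H, hH, hwH⟩ := mem_iUnion₂.1 hw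
      have hHH₀ : H = H₀ := hballH w hwball H hH hwH
      rw [hHH₀, hfker] at hwH
      have hfw : f w = 0 := hwH
      rw [mem_preimage, hgapp, hfw, mul_zero] at hwg
      simp at hwg
    have haP : γ a ∈ P := ⟨hgaball, by rw [mem_preimage, hgapp]; exact hPa⟩
    have hbQ : γ b ∈ Q := ⟨hgbball, by rw [mem_preimage, hgapp]; exact hQb⟩
    set E := connectedComponentIn S (γ a) with hEdef
    set E' := connectedComponentIn S (γ b) with hE'def
    have hPE : P ⊆ E := hPconv.isPreconnected.subset_connectedComponentIn haP hPS
    have hQE' : Q ⊆ E' := hQconv.isPreconnected.subset_connectedComponentIn hbQ hQS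
    -- every point of the wall inside the ball lies in both closures
    have hkey : Metric.ball p r ∩ (H₀ : Set V) ⊆ closure P ∩ closure Q := by
      rintro w ⟨hwb, hwH⟩
      have hfw : f w = 0 := by rw [hfker] at hwH; exact hwH
      have hrw : 0 < r - dist w p := by
        rw [sub_pos]
        exact Metric.mem_ball.1 hwb
      set σ := (r - dist w p) / ‖y - x‖ with hσdef
      have hσ : 0 < σ := div_pos hrw hnorm
      have hballmem : ∀ (u : V), ‖u‖ = ‖y - x‖ → ∀ s ∈ Ioo (0:ℝ) σ,
          w + s • u ∈ Metric.ball p r := by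
        intro u hu s hs
        have h1 : dist (w + s • u) p ≤ dist (w + s • u) w + dist w p := dist_triangle _ _ _
        have h2 : dist (w + s • u) w = s * ‖u‖ := by
          rw [dist_eq_norm, add_sub_cancel_left, norm_smul, Real.norm_eq_abs,
            abs_of_pos hs.1]
        have h3 : s * ‖u‖ < r - dist w p := by
          rw [hu]
          calc s * ‖y - x‖ < σ * ‖y - x‖ := mul_lt_mul_of_pos_right hs.2 hnorm
            _ = r - dist w p := div_mul_cancel₀ _ hnorm.ne'
        rw [Metric.mem_ball]
        linarith
      constructor
      · refine WallCross.mem_closure_ray w (-(y - x)) P σ hσ ?_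
        intro s hs
        refine ⟨hballmem _ (norm_neg _) s hs, ?_⟩
        have hcomp : g (w + s • (-(y - x))) = -(s * (c * c)) := by
          rw [hgapp]
          simp only [map_add, map_smul, map_neg, smul_eq_mul, hfw, ← hcdef]
          ring
        rw [mem_preimage, hcomp]
        simp only [mem_Iio]
        nlinarith [hs.1]
      · refine WallCross.mem_closure_ray w (y - x) Q σ hσ ?_
        intro s hs
        refine ⟨hballmem _ rfl s hs, ?_⟩
        have hcomp : g (w + s • (y - x)) = s * (c * c) := by
          rw [hgapp]
          simp only [map_add, map_smul, smul_eq_mul, hfw, ← hcdef]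
          ring
        rw [mem_preimage, hcomp]
        simp only [mem_Ioi]
        nlinarith [hs.1]
    have hpball : p ∈ Metric.ball p r := Metric.mem_ball_self hr
    have hpcl : p ∈ closure P ∩ closure Q := hkey ⟨hpball, hpH₀⟩
    have hadj : AdjacentChambers C ℋ E E' := by
      refine ⟨⟨γ a, hga, hEdef⟩, ⟨γ b, hgb, hE'def⟩, H₀, hH₀ℋ, p,
        ⟨⟨closure_mono hPE hpcl.1, closure_mono hQE' hpcl.2⟩, hpH₀⟩,
        Metric.ball p r, Metric.isOpen_ball.mem_nhds hpball, ?_⟩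
      intro w hw
      exact ⟨closure_mono hPE (hkey hw).1, closure_mono hQE' (hkey hw).2⟩
    -- E' is the chamber of y
    have hE'y : E' = connectedComponentIn S y := by
      have hA : γ '' Icc b 1 ⊆ S := by
        rintro _ ⟨t, ht, rfl⟩
        have htI : t ∈ Icc (0:ℝ) 1 := ⟨le_trans hbI.1 ht.1, ht.2⟩
        refine ⟨hγC t htI, fun h => ?_⟩
        have htT : t ∈ T := ⟨htI, h⟩
        have h1 := hmax t htT
        have h2 : b ≤ t := ht.1
        rw [hbdef] at h2
        linarith
      have hγc : Continuous γ := continuous_const.add (continuous_id.smul continuous_const)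
      have hconn : IsPreconnected (γ '' Icc b 1) :=
        (isPreconnected_Icc).image _ hγc.continuousOn
      have hsub : γ '' Icc b 1 ⊆ E' :=
        hconn.subset_connectedComponentIn ⟨b, ⟨le_refl _, hbI.2⟩, rfl⟩ hA
      have hyE' : y ∈ E' := hsub ⟨1, ⟨hbI.2, le_refl _⟩, hγ1⟩
      exact connectedComponentIn_eq hyE'
    -- apply the induction hypothesis to the segment from x to γ a
    have ha0 : 0 < a := by rw [hadef]; linarith
    have hax : γ a - x = a • (y - x) := by simp [hγ]
    have hrepar : ∀ t : ℝ, x + t • (γ a - x) = γ (t * a) := by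
      intro t
      rw [hax]
      simp only [hγ, smul_smul]
    have hsimple' : ∀ t ∈ Icc (0:ℝ) 1, ∀ H ∈ ℋ, ∀ H' ∈ ℋ,
        x + t • (γ a - x) ∈ (H : Set V) → x + t • (γ a - x) ∈ (H' : Set V) → H = H' := by
      intro t ht H hH H' hH' h1 h2
      rw [hrepar] at h1 h2
      have htaI : t * a ∈ Icc (0:ℝ) 1 :=
        ⟨mul_nonneg ht.1 haI.1, by nlinarith [mul_nonneg ht.1 (sub_nonneg.2 haI.2), mul_nonneg (sub_nonneg.2 ht.2) haI.1, ht.1, ht.2, haI.1, haI.2]⟩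
      exact hsimple (t * a) htaI H hH H' hH' h1 h2
    set T' := {t ∈ Icc (0:ℝ) 1 | x + t • (γ a - x) ∈ ⋃ H ∈ ℋ, (H : Set V)} with hT'def
    have hinj : Function.Injective (fun t : ℝ => t * a) := mul_left_injective₀ (ne_of_gt ha0)
    have hT'sub : (fun t : ℝ => t * a) '' T' ⊆ T \ {t₀} := by
      rintro _ ⟨t, ⟨htI, htU⟩, rfl⟩
      rw [hrepar] at htU
      refine ⟨⟨⟨mul_nonneg htI.1 haI.1, by show t * a ≤ 1; nlinarith [mul_nonneg htI.1 (sub_nonneg.2 haI.2), mul_nonneg (sub_nonneg.2 htI.2) haI.1, htI.1, htI.2, haI.1, haI.2]⟩, htU⟩, ?_⟩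
      simp only [mem_singleton_iff]
      intro h
      have h1 : t * a ≤ a := by nlinarith [htI.1, htI.2, haI.1]
      rw [hadef] at h
      rw [hadef] at h1
      linarith
    have hT'fin : T'.Finite := by
      have hsub2 : T' ⊆ (fun t : ℝ => t * a) ⁻¹' (T \ {t₀}) := fun t ht =>
        hT'sub ⟨t, ht, rfl⟩
      exact (hfinT'.preimage hinj.injOn).subset hsub2
    have hT'card : T'.ncard ≤ n := by
      have h1 : ((fun t : ℝ => t * a) '' T').ncard = T'.ncard :=
        ncard_image_of_injective _ hinj
      have h2 : ((fun t : ℝ => t * a) '' T').ncard ≤ (T \ {t₀}).ncard :=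
        ncard_le_ncard hT'sub hfinT'
      have h3 : (T \ {t₀}).ncard = T.ncard - 1 :=
        ncard_diff_singleton_of_mem (⟨ht₀I, ht₀U⟩ : t₀ ∈ T)
      have h4 : 1 ≤ T.ncard := (Set.ncard_pos hTfin).2 hTne
      omega
    obtain ⟨L', hchain', hcham', hhead', hlast'⟩ := IH x (γ a) hx hga hsimple' hT'fin hT'card
    have hlastE : L'.getLast? = some E := hlast'
    refine ⟨L' ++ [E'], ?_, ?_, ?_, ?_⟩
    · unfold List.Chain'; rw [List.isChain_append]
      refine ⟨hchain', List.isChain_singleton _, ?_⟩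
      intro u hu v hv
      rw [hlastE, Option.mem_some_iff] at hu
      simp only [List.head?_cons, Option.mem_some_iff] at hv
      rw [← hu, ← hv]
      exact hadj
    · intro F hF
      rcases List.mem_append.1 hF with h | h
      · exact hcham' F h
      · rw [List.mem_singleton] at h
        exact ⟨γ b, hgb, h.trans hE'def⟩
    · cases L' with
      | nil => simp at hlastE
      | cons h t => simpa using hhead'
    · rw [List.getLast?_concat, hE'y]

set_option maxHeartbeats 2000000 in
/-- Let `(C°, 𝓗)` be a locally finite arrangement of (linear) hyperplanes in an
open convex subset `C°` of a finite-dimensional real vector space, each hyperplane meeting `C°`.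
Then any two chambers are connected by a finite sequence of wall crossings: there is a finite list
of chambers from the first to the second in which consecutive chambers are adjacent. -/
theorem chambers_connected_by_wall_crossings
    (C : Set V) (hCopen : IsOpen C) (hCconv : Convex ℝ C)
    (ℋ : Set (Submodule ℝ V))
    (hhyp : ∀ H ∈ ℋ, ∃ f : V →ₗ[ℝ] ℝ, f ≠ 0 ∧ H = LinearMap.ker f)
    (hmeets : ∀ H ∈ ℋ, ((H : Set V) ∩ C).Nonempty)
    (hlocfin : ∀ x ∈ C, ∃ U ∈ nhds x, {H ∈ ℋ | ((H : Set V) ∩ U).Nonempty}.Finite)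
    (D D' : Set V) (hD : IsChamberOf C ℋ D) (hD' : IsChamberOf C ℋ D') :
    ∃ L : List (Set V), L.Chain' (AdjacentChambers C ℋ) ∧
      (∀ E ∈ L, IsChamberOf C ℋ E) ∧ L.head? = some D ∧ L.getLast? = some D' := by
  classical
  obtain ⟨x, hx, hDeq⟩ := hD
  obtain ⟨y₀, hy₀, hD'eq⟩ := hD'
  set S := C \ ⋃ H ∈ ℋ, (H : Set V) with hS
  have hSopen : IsOpen S := WallCross.S_isOpen C hCopen ℋ hlocfin
  have hD'open : IsOpen D' := hD'eq ▸ hSopen.connectedComponentIn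
  have hy₀D' : y₀ ∈ D' := hD'eq ▸ mem_connectedComponentIn hy₀
  obtain ⟨ρ₀, hρ₀, hballD'⟩ := Metric.isOpen_iff.1 hD'open y₀ hy₀D'
  set ρ := ρ₀ / 2 with hρdef
  have hρ : 0 < ρ := by rw [hρdef]; linarith
  have hcball : Metric.closedBall y₀ ρ ⊆ D' :=
    subset_trans (Metric.closedBall_subset_ball (by rw [hρdef]; linarith)) hballD'
  have hD'S : D' ⊆ S := hD'eq ▸ connectedComponentIn_subset _ _
  set K := (fun q : ℝ × V => x + q.1 • (q.2 - x)) '' (Icc (0:ℝ) 1 ×ˢ Metric.closedBall y₀ ρ)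
    with hKdef
  have hKcomp : IsCompact K := by
    refine (isCompact_Icc.prod (isCompact_closedBall _ _)).image ?_
    exact continuous_const.add (continuous_fst.smul (continuous_snd.sub continuous_const))
  have hKC : K ⊆ C := by
    rintro _ ⟨⟨t, z⟩, ⟨htI, hz⟩, rfl⟩
    have hzC : z ∈ C := (hD'S (hcball hz)).1
    have h := hCconv hx.1 hzC (by linarith [htI.2] : (0:ℝ) ≤ 1 - t) htI.1 (by ring)
    convert h using 1
    module
  set 𝓕 := {H ∈ ℋ | ((H : Set V) ∩ K).Nonempty} with h𝓕
  have h𝓕fin : 𝓕.Finite := WallCross.finite_meeting_compact C ℋ hlocfin K hKcomp hKC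
  choose! f hf0 hfker using hhyp
  set s : Set (Submodule ℝ V) :=
    {q | ∃ H ∈ 𝓕, ∃ H' ∈ 𝓕, H ≠ H' ∧
      q = LinearMap.ker ((f H') x • f H - (f H) x • f H')} with hsdef
  have hsfin : s.Finite := by
    have hsub : s ⊆ image2 (fun H H' => LinearMap.ker ((f H') x • f H - (f H) x • f H')) 𝓕 𝓕 := by
      rintro q ⟨H, hH, H', hH', _, rfl⟩
      exact mem_image2_of_mem hH hH'
    exact (h𝓕fin.image2 _ h𝓕fin).subset hsub
  have hfxne : ∀ H ∈ ℋ, (f H) x ≠ 0 := by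
    intro H hH h
    refine hx.2 (mem_iUnion₂.2 ⟨H, hH, ?_⟩)
    rw [hfker H hH]
    exact LinearMap.mem_ker.2 h
  have hsprop : ∀ q ∈ s, q ≠ ⊤ := by
    rintro q ⟨H, hH, H', hH', hne, rfl⟩ htop
    have hzero : (f H') x • f H - (f H) x • f H' = 0 := LinearMap.ker_eq_top.1 htop
    have heq : (f H') x • f H = (f H) x • f H' := sub_eq_zero.1 hzero
    have hfH'x : (f H') x ≠ 0 := hfxne H' hH'.1
    have hfHx : (f H) x ≠ 0 := hfxne H hH.1
    apply hne
    have hfeq : f H = ((f H) x / (f H') x) • f H' := by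
      calc f H = ((f H') x)⁻¹ • ((f H') x • f H) := (inv_smul_smul₀ hfH'x _).symm
        _ = ((f H') x)⁻¹ • ((f H) x • f H') := by rw [heq]
        _ = ((f H) x / (f H') x) • f H' := by rw [smul_smul, div_eq_inv_mul]
    rw [hfker H hH.1, hfker H' hH'.1, hfeq,
      LinearMap.ker_smul _ _ (div_ne_zero hfHx hfH'x)]
  obtain ⟨y, hyball, hyavoid⟩ := WallCross.exists_avoiding s hsfin hsprop
    (Metric.ball y₀ ρ) Metric.isOpen_ball ⟨y₀, Metric.mem_ball_self hρ⟩
  have hyD' : y ∈ D' := hcball (Metric.ball_subset_closedBall hyball)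
  have hyS : y ∈ S := hD'S hyD'
  have hsegK : ∀ t ∈ Icc (0:ℝ) 1, x + t • (y - x) ∈ K :=
    fun t ht => ⟨(t, y), ⟨ht, Metric.ball_subset_closedBall hyball⟩, rfl⟩
  have hsimple : ∀ t ∈ Icc (0:ℝ) 1, ∀ H ∈ ℋ, ∀ H' ∈ ℋ, x + t • (y - x) ∈ (H : Set V) →
      x + t • (y - x) ∈ (H' : Set V) → H = H' := by
    intro t ht H hH H' hH' h1 h2
    by_contra hne
    set w := x + t • (y - x) with hwdef
    have hH𝓕 : H ∈ 𝓕 := ⟨hH, w, h1, hsegK t ht⟩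
    have hH'𝓕 : H' ∈ 𝓕 := ⟨hH', w, h2, hsegK t ht⟩
    have e1 : (f H) w = 0 := by rw [hfker H hH] at h1; exact h1
    have e2 : (f H') w = 0 := by rw [hfker H' hH'] at h2; exact h2
    have ht0 : t ≠ 0 := by
      rintro rfl
      rw [zero_smul, add_zero] at hwdef
      exact hfxne H hH (hwdef ▸ e1)
    set h := (f H') x • f H - (f H) x • f H' with hhdef
    have hhx : h x = 0 := by
      simp only [hhdef, LinearMap.sub_apply, LinearMap.smul_apply, smul_eq_mul]
      ring
    have hhw : h w = 0 := by
      simp only [hhdef, LinearMap.sub_apply, LinearMap.smul_apply, smul_eq_mul, e1, e2]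
      ring
    have e3 : h w = h x + t * h (y - x) := by
      simp only [hwdef, map_add, map_smul, smul_eq_mul]
    have hyx0 : h (y - x) = 0 := by
      have h5 : t * h (y - x) = 0 := by
        rw [hhw, hhx] at e3
        linarith
      rcases mul_eq_zero.1 h5 with h6 | h6
      · exact absurd h6 ht0
      · exact h6
    have hhy : h y = 0 := by
      have h7 : h y = h x + h (y - x) := by
        rw [map_sub]
        ring
      rw [h7, hhx, hyx0, add_zero]
    exact hyavoid _ ⟨H, hH𝓕, H', hH'𝓕, hne, rfl⟩ (LinearMap.mem_ker.2 hhy)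
  set T := {t ∈ Icc (0:ℝ) 1 | x + t • (y - x) ∈ ⋃ H ∈ ℋ, (H : Set V)} with hT
  have hTfin : T.Finite := by
    have hsub : T ⊆ ⋃ H ∈ 𝓕, {t ∈ Icc (0:ℝ) 1 | x + t • (y - x) ∈ (H : Set V)} := by
      rintro t ⟨htI, htU⟩
      obtain ⟨H, hH, hw⟩ := mem_iUnion₂.1 htU
      exact mem_iUnion₂.2 ⟨H, ⟨hH, _, hw, hsegK t htI⟩, htI, hw⟩
    refine (h𝓕fin.biUnion ?_).subset hsub
    intro H hH
    refine Set.Subsingleton.finite ?_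
    rintro t ⟨htI, htH⟩ t' ⟨htI', htH'⟩
    have hfHx : (f H) x ≠ 0 := hfxne H hH.1
    have e : (f H) x + t * (f H) (y - x) = 0 := by
      have := htH
      rw [hfker H hH.1] at this
      have h0 : (f H) (x + t • (y - x)) = 0 := this
      simpa only [map_add, map_smul, smul_eq_mul] using h0
    have e' : (f H) x + t' * (f H) (y - x) = 0 := by
      have := htH'
      rw [hfker H hH.1] at this
      have h0 : (f H) (x + t' • (y - x)) = 0 := this
      simpa only [map_add, map_smul, smul_eq_mul] using h0
    have hcne : (f H) (y - x) ≠ 0 := by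
      intro h
      rw [h, mul_zero, add_zero] at e
      exact hfHx e
    have hdiff : (t - t') * (f H) (y - x) = 0 := by linear_combination e - e'
    rcases mul_eq_zero.1 hdiff with h | h
    · linarith [sub_eq_zero.1 h]
    · exact absurd h hcne
  obtain ⟨L, h1, h2, h3, h4⟩ := WallCross.key C hCopen hCconv ℋ
    (fun H hH => ⟨f H, hf0 H hH, hfker H hH⟩) hlocfin T.ncard x y hx hyS hsimple hTfin le_rfl
  have hcomp : connectedComponentIn S y = D' := by
    have hyin : y ∈ connectedComponentIn S y₀ := hD'eq ▸ hyD'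
    rw [hD'eq]
    exact (connectedComponentIn_eq hyin).symm
  refine ⟨L, h1, h2, ?_, ?_⟩
  · rw [h3, ← hDeq]
  · rw [h4, hcomp]
end
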